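/- arXiv:2410.13548 — 5 statements merged into one kernel-verified Lean document; each statement's English description precedes it below -/
import Mathlib

section
/- For any (not necessarily independent) random variables x₁,...,xₐ and y (all finite-valued), I((x₁,...,xₐ) ; y) ≤ Σ_{i=1}^{a} I(xᵢ ; (y, x_{≠i})), where x_{≠i} denotes the tuple of all xⱼ with j ≠ i. -/
open Finset
open scoped Classical

noncomputable section

/-- `p` is a probability mass function on the finite sample space `Ω`. -/
def IsPMF {Ω : Type*} [Fintype Ω] (p : Ω → ℝ) : Prop :=
  (∀ ω, 0 ≤ p ω) ∧ ∑ ω, p ω = 1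

/-- Distribution (pmf) of the random variable `X` under the pmf `p`. -/
noncomputable def dist' {Ω α : Type*} [Fintype Ω] (p : Ω → ℝ) (X : Ω → α) : α → ℝ :=
  fun a => ∑ ω, if X ω = a then p ω else 0

/-- KL divergence between two pmfs on a finite space (natural log). -/
noncomputable def KL {α : Type*} [Fintype α] (q r : α → ℝ) : ℝ :=
  ∑ a, q a * Real.log (q a / r a)

/-- Mutual information between random variables `X` and `Y` under pmf `p`. -/
noncomputable def MI {Ω α β : Type*} [Fintype Ω] [Fintype α] [Fintype β]
    (p : Ω → ℝ) (X : Ω → α) (Y : Ω → β) : ℝ :=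
  KL (dist' p fun ω => (X ω, Y ω)) (fun ab => dist' p X ab.1 * dist' p Y ab.2)

set_option linter.unusedSectionVars false
namespace StatementAux

variable {Ω : Type*} [Fintype Ω] {α β γ : Type*} [Fintype α] [Fintype β] [Fintype γ]

lemma dist'_nonneg {p : Ω → ℝ} (hp : ∀ ω, 0 ≤ p ω) (X : Ω → α) (a : α) :
    0 ≤ dist' p X a :=
  Finset.sum_nonneg fun ω _ => by split_ifs; exacts [hp ω, le_rfl]

lemma dist'_sum {p : Ω → ℝ} (X : Ω → α) : ∑ a, dist' p X a = ∑ ω, p ω := by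
  unfold dist'
  rw [Finset.sum_comm]
  exact Finset.sum_congr rfl fun ω _ => by rw [Finset.sum_ite_eq]; simp

lemma dist'_pos {p : Ω → ℝ} (hp : ∀ ω, 0 ≤ p ω) (X : Ω → α) {ω : Ω} (hω : 0 < p ω) :
    0 < dist' p X (X ω) := by
  have h1 : (if X ω = X ω then p ω else 0) ≤ dist' p X (X ω) :=
    Finset.single_le_sum (f := fun ω' => if X ω' = X ω then p ω' else 0)
      (fun ω' _ => by split_ifs; exacts [hp ω', le_rfl]) (Finset.mem_univ ω)
  rw [if_pos rfl] at h1
  exact lt_of_lt_of_le hω h1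

lemma sum_dist'_mul {p : Ω → ℝ} (X : Ω → α) (g : α → ℝ) :
    ∑ a, dist' p X a * g a = ∑ ω, p ω * g (X ω) := by
  unfold dist'
  simp only [Finset.sum_mul]
  rw [Finset.sum_comm]
  refine Finset.sum_congr rfl fun ω _ => ?_
  simp only [ite_mul, zero_mul]
  rw [Finset.sum_ite_eq]
  simp

lemma dist'_marg_left {p : Ω → ℝ} (X : Ω → α) (Y : Ω → β) (b : β) :
    ∑ a, dist' p (fun ω => (X ω, Y ω)) (a, b) = dist' p Y b := by
  unfold dist'
  rw [Finset.sum_comm]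
  refine Finset.sum_congr rfl fun ω _ => ?_
  simp only [Prod.mk.injEq, ite_and]
  rw [Finset.sum_ite_eq]
  simp

lemma dist'_marg_right {p : Ω → ℝ} (X : Ω → α) (Y : Ω → β) (a : α) :
    ∑ b, dist' p (fun ω => (X ω, Y ω)) (a, b) = dist' p X a := by
  unfold dist'
  rw [Finset.sum_comm]
  refine Finset.sum_congr rfl fun ω _ => ?_
  simp only [Prod.mk.injEq, ite_and]
  by_cases h : X ω = a
  · simp only [h, if_true]
    rw [Finset.sum_ite_eq]
    simp
  · simp [h]

lemma MI_eq {p : Ω → ℝ} (X : Ω → α) (Y : Ω → β) :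
    MI p X Y = ∑ ω, p ω *
      Real.log (dist' p (fun ω => (X ω, Y ω)) (X ω, Y ω) /
        (dist' p X (X ω) * dist' p Y (Y ω))) := by
  unfold MI KL
  rw [sum_dist'_mul (p := p) (fun ω => (X ω, Y ω))
      (fun ab => Real.log (dist' p (fun ω => (X ω, Y ω)) ab / (dist' p X ab.1 * dist' p Y ab.2)))]


lemma sum_log_le_zero {p : Ω → ℝ} (hp : IsPMF p) (F : Ω → ℝ)
    (hpos : ∀ ω, 0 < p ω → 0 < F ω) (hsum : ∑ ω, p ω * F ω ≤ 1) :
    ∑ ω, p ω * Real.log (F ω) ≤ 0 := by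
  have h1 : ∀ ω ∈ Finset.univ (α := Ω), p ω * Real.log (F ω) ≤ p ω * F ω - p ω := by
    intro ω _
    rcases eq_or_lt_of_le (hp.1 ω) with h | h
    · simp [← h]
    · have := Real.log_le_sub_one_of_pos (hpos ω h)
      nlinarith
  calc ∑ ω, p ω * Real.log (F ω) ≤ ∑ ω, (p ω * F ω - p ω) := Finset.sum_le_sum h1
  _ = (∑ ω, p ω * F ω) - ∑ ω, p ω := by rw [Finset.sum_sub_distrib]
  _ ≤ 1 - 1 := by rw [hp.2]; linarith
  _ = 0 := by ring

lemma MI_nonneg {p : Ω → ℝ} (hp : IsPMF p) (X : Ω → α) (Y : Ω → β) : 0 ≤ MI p X Y := by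
  set J := fun ω => (X ω, Y ω) with hJ
  set F : Ω → ℝ := fun ω => dist' p X (X ω) * dist' p Y (Y ω) / dist' p J (J ω) with hF
  have key : ∑ ω, p ω * Real.log (F ω) ≤ 0 := by
    apply sum_log_le_zero hp
    · intro ω hω
      exact div_pos (mul_pos (dist'_pos hp.1 X hω) (dist'_pos hp.1 Y hω)) (dist'_pos hp.1 J hω)
    · have h2 : ∑ ω, p ω * F ω =
          ∑ ab : α × β, dist' p J ab * (dist' p X ab.1 * dist' p Y ab.2 / dist' p J ab) := by
        exact (sum_dist'_mul (p := p) J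
          (fun ab => dist' p X ab.1 * dist' p Y ab.2 / dist' p J ab)).symm
      rw [h2]
      calc ∑ ab : α × β, dist' p J ab * (dist' p X ab.1 * dist' p Y ab.2 / dist' p J ab)
          ≤ ∑ ab : α × β, dist' p X ab.1 * dist' p Y ab.2 := by
            refine Finset.sum_le_sum fun ab _ => ?_
            by_cases h : dist' p J ab = 0
            · rw [h, zero_mul]
              exact mul_nonneg (dist'_nonneg hp.1 X _) (dist'_nonneg hp.1 Y _)
            · rw [mul_comm, div_mul_cancel₀ _ h]
        _ = ∑ a, ∑ b, dist' p X a * dist' p Y b := Fintype.sum_prod_type _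
        _ = (∑ a, dist' p X a) * (∑ b, dist' p Y b) := by
            rw [Finset.sum_mul]
            exact Finset.sum_congr rfl fun a _ => by rw [Finset.mul_sum]
        _ = 1 := by rw [dist'_sum, dist'_sum, hp.2]; ring
  rw [MI_eq]
  have h3 : ∀ ω, Real.log (dist' p J (J ω) / (dist' p X (X ω) * dist' p Y (Y ω)))
      = - Real.log (F ω) := by
    intro ω
    rw [hF, ← Real.log_inv]
    congr 1
    rw [inv_div]
  calc (0:ℝ) ≤ -∑ ω, p ω * Real.log (F ω) := by linarith
  _ = ∑ ω, p ω * Real.log (dist' p J (J ω) / (dist' p X (X ω) * dist' p Y (Y ω))) := by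
      rw [← Finset.sum_neg_distrib]
      exact Finset.sum_congr rfl fun ω _ => by rw [h3 ω]; ring


lemma MI_mono {p : Ω → ℝ} (hp : IsPMF p) (X : Ω → α) (Y : Ω → β) (W : Ω → γ) :
    MI p X Y ≤ MI p X (fun ω => (Y ω, W ω)) := by
  set T : Ω → α × (β × γ) := fun ω => (X ω, (Y ω, W ω)) with hT
  set dXY := dist' p (fun ω => (X ω, Y ω)) with hdXY
  set dYW := dist' p (fun ω => (Y ω, W ω)) with hdYW
  set dY := dist' p Y with hdY
  set dT := dist' p T with hdT
  set F : Ω → ℝ := fun ω => dXY (X ω, Y ω) * dYW (Y ω, W ω) / (dY (Y ω) * dT (T ω)) with hF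
  have hdiff : MI p X Y - MI p X (fun ω => (Y ω, W ω)) = ∑ ω, p ω * Real.log (F ω) := by
    rw [MI_eq X Y, MI_eq X (fun ω => (Y ω, W ω)), ← Finset.sum_sub_distrib]
    refine Finset.sum_congr rfl fun ω _ => ?_
    rcases eq_or_lt_of_le (hp.1 ω) with h | h
    · simp [← h]
    · have q1 := dist'_pos hp.1 (fun ω => (X ω, Y ω)) h
      have q2 := dist'_pos hp.1 X h
      have q3 := dist'_pos hp.1 Y h
      have q4 := dist'_pos hp.1 T h
      have q5 := dist'_pos hp.1 (fun ω => (Y ω, W ω)) h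
      rw [← mul_sub]
      congr 1
      rw [hF]
      dsimp only
      rw [Real.log_div q1.ne' (mul_ne_zero q2.ne' q3.ne'),
        Real.log_div q4.ne' (mul_ne_zero q2.ne' q5.ne'),
        Real.log_div (mul_ne_zero q1.ne' q5.ne') (mul_ne_zero q3.ne' q4.ne'),
        Real.log_mul q2.ne' q3.ne', Real.log_mul q2.ne' q5.ne',
        Real.log_mul q1.ne' q5.ne', Real.log_mul q3.ne' q4.ne']
      ring
  have key : ∑ ω, p ω * Real.log (F ω) ≤ 0 := by
    apply sum_log_le_zero hp
    · intro ω hω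
      have q1 := dist'_pos hp.1 (fun ω => (X ω, Y ω)) hω
      have q3 := dist'_pos hp.1 Y hω
      have q4 := dist'_pos hp.1 T hω
      have q5 := dist'_pos hp.1 (fun ω => (Y ω, W ω)) hω
      exact div_pos (mul_pos q1 q5) (mul_pos q3 q4)
    · have h2 : ∑ ω, p ω * F ω = ∑ v : α × (β × γ),
          dT v * (dXY (v.1, v.2.1) * dYW v.2 / (dY v.2.1 * dT v)) := by
        exact (sum_dist'_mul (p := p) T
          (fun v => dXY (v.1, v.2.1) * dYW v.2 / (dY v.2.1 * dT v))).symm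
      rw [h2]
      have hXYnn : ∀ v : α × β, 0 ≤ dXY v := fun v => dist'_nonneg hp.1 _ v
      have hYWnn : ∀ v : β × γ, 0 ≤ dYW v := fun v => dist'_nonneg hp.1 _ v
      have hYnn : ∀ b, 0 ≤ dY b := fun b => dist'_nonneg hp.1 _ b
      calc ∑ v : α × (β × γ), dT v * (dXY (v.1, v.2.1) * dYW v.2 / (dY v.2.1 * dT v))
          ≤ ∑ v : α × (β × γ), dXY (v.1, v.2.1) * dYW v.2 / dY v.2.1 := by
            refine Finset.sum_le_sum fun v _ => ?_
            by_cases hTv : dT v = 0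
            · rw [hTv, zero_mul]
              exact div_nonneg (mul_nonneg (hXYnn _) (hYWnn _)) (hYnn _)
            · by_cases hYv : dY v.2.1 = 0
              · rw [hYv, zero_mul, div_zero, mul_zero]
              · rw [div_mul_eq_div_div, mul_comm,
                  mul_div_assoc, div_mul_cancel₀ _ hTv]
        _ = ∑ a, ∑ b, ∑ c, dXY (a, b) * dYW (b, c) / dY b := by
            rw [Fintype.sum_prod_type]
            exact Finset.sum_congr rfl fun a _ => Fintype.sum_prod_type _
        _ = ∑ b, ∑ a, ∑ c, dXY (a, b) * dYW (b, c) / dY b := Finset.sum_comm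
        _ ≤ ∑ b, dY b := by
            refine Finset.sum_le_sum fun b _ => ?_
            have e1 : ∑ a, ∑ c, dXY (a, b) * dYW (b, c) / dY b
                = (∑ a, dXY (a, b)) * ((∑ c, dYW (b, c)) / dY b) := by
              rw [Finset.sum_mul]
              refine Finset.sum_congr rfl fun a _ => ?_
              rw [Finset.sum_div, Finset.mul_sum]
              exact Finset.sum_congr rfl fun c _ => by rw [mul_div_assoc]
            rw [e1, hdXY]
            rw [dist'_marg_left X Y b]
            rw [hdYW, dist'_marg_right Y W b]
            by_cases hYv : dY b = 0
            · rw [hYv]; simp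
            · rw [div_self hYv, mul_one]
        _ = 1 := by rw [hdY, dist'_sum, hp.2]
  linarith [hdiff, key]


lemma dist'_swap {p : Ω → ℝ} (X : Ω → α) (Y : Ω → β) (a : α) (b : β) :
    dist' p (fun ω => (Y ω, X ω)) (b, a) = dist' p (fun ω => (X ω, Y ω)) (a, b) := by
  unfold dist'
  refine Finset.sum_congr rfl fun ω _ => ?_
  have hiff : ((Y ω, X ω) = (b, a)) ↔ ((X ω, Y ω) = (a, b)) := by
    simp only [Prod.mk.injEq]; tauto
  simp only [hiff]
  congr!

lemma dist'_assoc {p : Ω → ℝ} (X : Ω → α) (Y : Ω → β) (Z : Ω → γ) (a : α) (b : β) (c : γ) :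
    dist' p (fun ω => ((X ω, Z ω), Y ω)) ((a, c), b)
      = dist' p (fun ω => (X ω, (Y ω, Z ω))) (a, (b, c)) := by
  unfold dist'
  refine Finset.sum_congr rfl fun ω _ => ?_
  have hiff : (((X ω, Z ω), Y ω) = ((a, c), b)) ↔ ((X ω, (Y ω, Z ω)) = (a, (b, c))) := by
    simp only [Prod.mk.injEq]; tauto
  simp only [hiff]
  congr!

lemma MI_chain {p : Ω → ℝ} (hp : IsPMF p) (X : Ω → α) (Y : Ω → β) (Z : Ω → γ) :
    MI p (fun ω => (X ω, Z ω)) Y + MI p X Z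
      = MI p Z Y + MI p X (fun ω => (Y ω, Z ω)) := by
  rw [MI_eq, MI_eq, MI_eq, MI_eq, ← Finset.sum_add_distrib, ← Finset.sum_add_distrib]
  refine Finset.sum_congr rfl fun ω _ => ?_
  rcases eq_or_lt_of_le (hp.1 ω) with h | h
  · simp [← h]
  · have q1 := dist'_pos hp.1 (fun ω => ((X ω, Z ω), Y ω)) h
    have q2 := dist'_pos hp.1 (fun ω => (X ω, Z ω)) h
    have q3 := dist'_pos hp.1 Y h
    have q4 := dist'_pos hp.1 X h
    have q5 := dist'_pos hp.1 Z h
    have q6 := dist'_pos hp.1 (fun ω => (Z ω, Y ω)) h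
    have q7 := dist'_pos hp.1 (fun ω => (X ω, (Y ω, Z ω))) h
    have q8 := dist'_pos hp.1 (fun ω => (Y ω, Z ω)) h
    rw [← mul_add, ← mul_add]
    congr 1
    rw [dist'_assoc X Y Z (X ω) (Y ω) (Z ω), dist'_swap Y Z (Y ω) (Z ω)]
    rw [Real.log_div q7.ne' (mul_ne_zero q2.ne' q3.ne'),
      Real.log_div q2.ne' (mul_ne_zero q4.ne' q5.ne'),
      Real.log_div q8.ne' (mul_ne_zero q5.ne' q3.ne'),
      Real.log_div q7.ne' (mul_ne_zero q4.ne' q8.ne'),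
      Real.log_mul q2.ne' q3.ne', Real.log_mul q4.ne' q5.ne',
      Real.log_mul q5.ne' q3.ne', Real.log_mul q4.ne' q8.ne']
    ring

lemma MI_step {p : Ω → ℝ} (hp : IsPMF p) (X : Ω → α) (Y : Ω → β) (Z : Ω → γ) :
    MI p (fun ω => (X ω, Z ω)) Y ≤ MI p Z Y + MI p X (fun ω => (Y ω, Z ω)) := by
  have h := MI_chain hp X Y Z
  have h2 := MI_nonneg hp X Z
  linarith

lemma dist'_eq_zero {p : Ω → ℝ} {Z : Ω → γ} {c : γ} (h : ∀ ω, Z ω ≠ c) :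
    dist' p Z c = 0 :=
  Finset.sum_eq_zero fun ω _ => if_neg (h ω)

lemma dist'_comp {p : Ω → ℝ} (Z : Ω → γ) {δ : Type*} (f : γ → δ)
    (hf : Function.Injective f) (c : γ) :
    dist' p (fun ω => f (Z ω)) (f c) = dist' p Z c :=
  Finset.sum_congr rfl fun ω _ => by simp only [hf.eq_iff]

lemma MI_comp {α' β' : Type*} [Fintype α'] [Fintype β'] {p : Ω → ℝ}
    (X : Ω → α) (Y : Ω → β) (f : α → α') (g : β → β')
    (hf : Function.Injective f) (hg : Function.Injective g) :
    MI p (fun ω => f (X ω)) (fun ω => g (Y ω)) = MI p X Y := by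
  have hFm : Function.Injective (Prod.map f g) := Function.Injective.prodMap hf hg
  unfold MI KL
  rw [← Finset.sum_subset
      (Finset.subset_univ ((Finset.univ : Finset (α × β)).image (Prod.map f g)))]
  · rw [Finset.sum_image (fun v _ w _ h => hFm h)]
    refine Finset.sum_congr rfl fun v _ => ?_
    have e1 : dist' p (fun ω => (f (X ω), g (Y ω))) (Prod.map f g v)
        = dist' p (fun ω => (X ω, Y ω)) v :=
      dist'_comp (fun ω => (X ω, Y ω)) (Prod.map f g) hFm v
    have e2 : dist' p (fun ω => f (X ω)) ((Prod.map f g v).1) = dist' p X v.1 :=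
      dist'_comp X f hf v.1
    have e3 : dist' p (fun ω => g (Y ω)) ((Prod.map f g v).2) = dist' p Y v.2 :=
      dist'_comp Y g hg v.2
    simp only [e1, e2, e3]
  · intro w _ hw
    have hz : dist' p (fun ω => (f (X ω), g (Y ω))) w = 0 := by
      refine dist'_eq_zero fun ω h => ?_
      exact hw (Finset.mem_image.2 ⟨(X ω, Y ω), Finset.mem_univ _, h⟩)
    rw [hz, zero_mul]

lemma MI_const {p : Ω → ℝ} (hp : IsPMF p) (c : α) (Y : Ω → β) :
    MI p (fun _ => c) Y = 0 := by
  unfold MI KL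
  refine Finset.sum_eq_zero fun ab _ => ?_
  obtain ⟨a, b⟩ := ab
  by_cases h : a = c
  · subst h
    have e1 : dist' p (fun ω => (a, Y ω)) (a, b) = dist' p Y b := by
      unfold dist'
      refine Finset.sum_congr rfl fun ω _ => ?_
      have hiff : ((a, Y ω) = (a, b)) ↔ (Y ω = b) := by
        simp only [Prod.mk.injEq, true_and]
      simp only [hiff]
    have e2 : dist' p (fun _ => a) a = 1 := by
      unfold dist'
      simp [hp.2]
    rw [e1]
    simp only [e2, one_mul]
    by_cases hb : dist' p Y b = 0
    · rw [hb, zero_mul]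
    · rw [div_self hb, Real.log_one, mul_zero]
  · have e1 : dist' p (fun ω => (c, Y ω)) (a, b) = 0 := by
      refine dist'_eq_zero fun ω hc => ?_
      simp only [Prod.mk.injEq] at hc
      exact h hc.1.symm
    rw [e1, zero_mul]

end StatementAux

/-- For arbitrary random variables `x₁,…,xₐ` and `y`:
`I((x₁,…,xₐ);y) ≤ ∑ᵢ I(xᵢ ; (y, x_{≠i}))`. -/
theorem statement2 {Ω X Y : Type*} [Fintype Ω] [Fintype X] [Fintype Y]
    (p : Ω → ℝ) (hp : IsPMF p) (a : ℕ) (x : Fin a → Ω → X) (y : Ω → Y) :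
    MI p (fun ω => fun i => x i ω) y
      ≤ ∑ i, MI p (x i) (fun ω => (y ω, fun j : {j : Fin a // j ≠ i} => x j.1 ω)) := by

  induction a with
  | zero =>
      have hx : (fun ω => fun i : Fin 0 => x i ω) = (fun _ => (fun i : Fin 0 => i.elim0)) := by
        funext ω i; exact i.elim0
      rw [hx, StatementAux.MI_const hp]
      simp
  | succ n IH =>
      set Z : Ω → (Fin n → X) := fun ω => fun j : Fin n => x j.succ ω with hZ
      have hconsinj : Function.Injective
          (fun q : X × (Fin n → X) => (Fin.cons q.1 q.2 : Fin (n+1) → X)) := by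
        rintro ⟨c, v⟩ ⟨c', v'⟩ h
        simp only at h
        have h0 := congrFun h 0
        simp only [Fin.cons_zero] at h0
        have hs : v = v' := by
          funext k
          have hk := congrFun h k.succ
          simpa [Fin.cons_succ] using hk
        simp [h0, hs]
      have e1 : MI p (fun ω => fun i => x i ω) y
          = MI p (fun ω => (x 0 ω, Z ω)) y := by
        rw [← StatementAux.MI_comp (p := p) (fun ω => (x 0 ω, Z ω)) y
          (fun q : X × (Fin n → X) => (Fin.cons q.1 q.2 : Fin (n+1) → X)) id hconsinj
          Function.injective_id]
        congr 1
        funext ω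
        funext i
        refine Fin.cases ?_ (fun j => ?_) i
        · simp
        · simp [hZ]
      rw [e1]
      refine le_trans (StatementAux.MI_step hp (x 0) y Z) ?_
      rw [Fin.sum_univ_succ]
      -- Part A : the conditional term equals the i = 0 summand
      have hA : MI p (x 0) (fun ω => (y ω, Z ω))
          = MI p (x 0) (fun ω => (y ω, fun j : {j : Fin (n+1) // j ≠ 0} => x j.1 ω)) := by
        have hg0inj : Function.Injective
            (fun q : Y × (Fin n → X) =>
              (q.1, fun j : {j : Fin (n+1) // j ≠ 0} => q.2 (j.1.pred j.2))) := by
          have : Function.LeftInverse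
              (fun r : Y × ({j : Fin (n+1) // j ≠ 0} → X) =>
                (r.1, fun k : Fin n => r.2 ⟨k.succ, Fin.succ_ne_zero k⟩))
              (fun q : Y × (Fin n → X) =>
                (q.1, fun j : {j : Fin (n+1) // j ≠ 0} => q.2 (j.1.pred j.2))) := by
            rintro ⟨b, v⟩
            simp only [Prod.mk.injEq, true_and]
            funext k
            simp [Fin.pred_succ]
          exact this.injective
        rw [← StatementAux.MI_comp (p := p) (x 0) (fun ω => (y ω, Z ω)) id
          (fun q : Y × (Fin n → X) =>
            (q.1, fun j : {j : Fin (n+1) // j ≠ 0} => q.2 (j.1.pred j.2)))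
          Function.injective_id hg0inj]
        congr 1
        funext ω
        simp only [Prod.mk.injEq, true_and]
        funext j
        simp [hZ, Fin.succ_pred]
      rw [hA]
      -- Part B : the remaining MI is bounded by the rest of the sum
      have hB : MI p Z y ≤ ∑ j : Fin n,
          MI p (x j.succ)
            (fun ω => (y ω, fun i : {i : Fin (n+1) // i ≠ j.succ} => x i.1 ω)) := by
        refine le_trans (IH (fun j => x j.succ)) (Finset.sum_le_sum fun j _ => ?_)
        refine le_trans (StatementAux.MI_mono hp (x j.succ)
          (fun ω => (y ω, fun k : {k : Fin n // k ≠ j} => x k.1.succ ω)) (x 0)) ?_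
        have hgjinj : Function.Injective
            (fun q : (Y × ({k : Fin n // k ≠ j} → X)) × X =>
              ((q.1.1, fun i : {i : Fin (n+1) // i ≠ j.succ} =>
                if h0 : i.1 = 0 then q.2
                else q.1.2 ⟨i.1.pred h0, fun hpred =>
                  i.2 (by rw [← Fin.succ_pred i.1 h0, hpred])⟩) :
                Y × ({i : Fin (n+1) // i ≠ j.succ} → X))) := by
          have : Function.LeftInverse
              (fun r : Y × ({i : Fin (n+1) // i ≠ j.succ} → X) =>
                ((r.1, fun k : {k : Fin n // k ≠ j} =>
                  r.2 ⟨k.1.succ, fun hh => k.2 (Fin.succ_injective n hh)⟩),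
                  r.2 ⟨0, (Fin.succ_ne_zero j).symm⟩))
              (fun q : (Y × ({k : Fin n // k ≠ j} → X)) × X =>
                ((q.1.1, fun i : {i : Fin (n+1) // i ≠ j.succ} =>
                  if h0 : i.1 = 0 then q.2
                  else q.1.2 ⟨i.1.pred h0, fun hpred =>
                    i.2 (by rw [← Fin.succ_pred i.1 h0, hpred])⟩) :
                  Y × ({i : Fin (n+1) // i ≠ j.succ} → X))) := by
            rintro ⟨⟨b, v⟩, c⟩
            refine congrArg₂ Prod.mk (congrArg₂ Prod.mk rfl ?_) ?_
            · funext k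
              dsimp only
              rw [dif_neg (Fin.succ_ne_zero k.1)]
              congr 1
            · simp
          exact this.injective
        have ecomp := StatementAux.MI_comp (p := p) (x j.succ)
          (fun ω => ((y ω, fun k : {k : Fin n // k ≠ j} => x k.1.succ ω), x 0 ω)) id
          (fun q : (Y × ({k : Fin n // k ≠ j} → X)) × X =>
            ((q.1.1, fun i : {i : Fin (n+1) // i ≠ j.succ} =>
              if h0 : i.1 = 0 then q.2
              else q.1.2 ⟨i.1.pred h0, fun hpred =>
                i.2 (by rw [← Fin.succ_pred i.1 h0, hpred])⟩) :
              Y × ({i : Fin (n+1) // i ≠ j.succ} → X)))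
          Function.injective_id hgjinj
        rw [← ecomp]
        apply le_of_eq
        congr 1
        funext ω
        simp only [Prod.mk.injEq, true_and]
        funext i
        by_cases h0 : i.1 = 0
        · rw [dif_pos h0, h0]
        · rw [dif_neg h0, Fin.succ_pred]
      linarith [hB]
end
end

section
/- Let D_cost be a distribution on the nonnegative reals with mean 1, and draw x₁,...,xₙ i.i.d. from D_cost. Let Δ(x₁,...,xₙ) be the minimum number of indices that must be removed so that the sum of the remaining xᵢ is at most n. Then E[Δ(x₁,...,xₙ)] ≤ 5√n. -/
open MeasureTheory ProbabilityTheory Finset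

/-- `Delta n v` is the minimum number of coordinates that must be removed from `v` so that the
sum of the remaining coordinates is at most `n`. -/
noncomputable def Delta (n : ℕ) (v : Fin n → ℝ) : ℕ :=
  sInf {k | ∃ I : Finset (Fin n), I.card = k ∧ ∑ i ∈ Iᶜ, v i ≤ n}

lemma delta_mem (n : ℕ) (v : Fin n → ℝ) :
    Delta n v ∈ {k | ∃ I : Finset (Fin n), I.card = k ∧ ∑ i ∈ Iᶜ, v i ≤ n} :=
  Nat.sInf_mem ⟨n, Finset.univ, by simp⟩

lemma delta_le (n : ℕ) (v : Fin n → ℝ) : Delta n v ≤ n :=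
  Nat.sInf_le ⟨Finset.univ, by simp⟩

lemma delta_gt {n k : ℕ} {v : Fin n → ℝ} (h : k < Delta n v) {I : Finset (Fin n)}
    (hI : I.card = k) : (n : ℝ) < ∑ i ∈ Iᶜ, v i := by
  by_contra hc
  exact absurd (Nat.sInf_le (⟨I, hI, not_lt.mp hc⟩ : _ ∈ {k | ∃ I : Finset (Fin n), I.card = k ∧ ∑ i ∈ Iᶜ, v i ≤ n})) (not_le.mpr h)

lemma exists_topk (n : ℕ) (v : Fin n → ℝ) :
    ∀ k, k ≤ n → ∃ I : Finset (Fin n), I.card = k ∧ ∀ i ∈ I, ∀ l, l ∉ I → v l ≤ v i := by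
  intro k
  induction k with
  | zero => exact fun _ => ⟨∅, by simp⟩
  | succ k ih =>
    intro hk
    obtain ⟨I, hIcard, hI⟩ := ih (Nat.le_of_succ_le hk)
    have hne : Iᶜ.Nonempty := by
      rw [← Finset.card_pos, Finset.card_compl, hIcard, Fintype.card_fin]
      omega
    obtain ⟨i0, hi0mem, hi0⟩ := Finset.exists_max_image Iᶜ v hne
    have hi0I : i0 ∉ I := Finset.mem_compl.mp hi0mem
    refine ⟨insert i0 I, by rw [Finset.card_insert_of_notMem hi0I, hIcard], ?_⟩
    intro i hi l hl
    have hlI : l ∉ I := fun h => hl (Finset.mem_insert_of_mem h)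
    rcases Finset.mem_insert.mp hi with rfl | hiI
    · exact hi0 l (Finset.mem_compl.mpr hlI)
    · exact hI i hiI l hlI

lemma exists_pow {t : ℝ} (ht : 1 < t) : ∃ j : ℕ, (2:ℝ)^j ≤ t ∧ t < 2^(j+1) := by
  have hex : ∃ j : ℕ, t < 2^(j+1) := by
    obtain ⟨m, hm⟩ := pow_unbounded_of_one_lt t (by norm_num : (1:ℝ) < 2)
    exact ⟨m, lt_of_lt_of_le hm (pow_le_pow_right₀ (by norm_num) (by omega))⟩
  classical
  let j := Nat.find hex
  refine ⟨j, ?_, Nat.find_spec hex⟩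
  rcases Nat.eq_zero_or_pos j with hj | hj
  · simpa [hj] using ht.le
  · have := Nat.find_min hex (m := j - 1) (by omega)
    push_neg at this
    calc (2:ℝ)^j = 2^(j-1+1) := by congr 1; omega
    _ ≤ t := this

lemma delta_level {n k : ℕ} {v : Fin n → ℝ} (hv : ∀ i, 0 ≤ v i) (h : k < Delta n v) :
    ∃ j : ℕ, (n : ℝ) + k * 2^j ≤ ∑ i, min (v i) (2^(j+1)) := by
  have hkn : k < n := lt_of_lt_of_le h (delta_le n v)
  obtain ⟨I, hIcard, hI⟩ := exists_topk n v k hkn.le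
  have hsum : (n : ℝ) < ∑ i ∈ Iᶜ, v i := delta_gt h hIcard
  have hne : Iᶜ.Nonempty := by
    rw [← Finset.card_pos, Finset.card_compl, hIcard, Fintype.card_fin]; omega
  obtain ⟨i0, hi0mem, hi0⟩ := Finset.exists_max_image Iᶜ v hne
  have ht0 : 0 ≤ v i0 := hv i0
  have htcard : (Iᶜ.card : ℝ) ≤ n := by
    have h2 : Iᶜ.card ≤ n := by
      have := Finset.card_le_univ (s := Iᶜ)
      simpa using this
    exact_mod_cast h2
  have hub : ∑ i ∈ Iᶜ, v i ≤ (Iᶜ.card : ℝ) * v i0 := by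
    calc ∑ i ∈ Iᶜ, v i ≤ ∑ _i ∈ Iᶜ, v i0 := Finset.sum_le_sum fun i hi => hi0 i hi
    _ = (Iᶜ.card : ℝ) * v i0 := by rw [Finset.sum_const, nsmul_eq_mul]
  have hn0 : (0:ℝ) < n := by exact_mod_cast Nat.pos_of_ne_zero (by omega)
  have ht1 : 1 < v i0 := by nlinarith
  obtain ⟨j, hj1, hj2⟩ := exists_pow ht1
  refine ⟨j, ?_⟩
  have hsplit : ∑ i, min (v i) (2^(j+1)) =
      ∑ i ∈ I, min (v i) (2^(j+1)) + ∑ i ∈ Iᶜ, min (v i) (2^(j+1)) :=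
    (Finset.sum_add_sum_compl I _).symm
  have hIbound : (k : ℝ) * 2^j ≤ ∑ i ∈ I, min (v i) (2^(j+1)) := by
    have hterm : ∀ i ∈ I, (2:ℝ)^j ≤ min (v i) (2^(j+1)) := by
      intro i hi
      have hvi : v i0 ≤ v i := hI i hi i0 (Finset.mem_compl.mp hi0mem)
      exact le_min (le_trans hj1 hvi) (pow_le_pow_right₀ (by norm_num) (by omega))
    calc (k:ℝ) * 2^j = ∑ _i ∈ I, (2:ℝ)^j := by
          rw [Finset.sum_const, nsmul_eq_mul, hIcard]
    _ ≤ ∑ i ∈ I, min (v i) (2^(j+1)) := Finset.sum_le_sum hterm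
  have hcbound : ∑ i ∈ Iᶜ, v i ≤ ∑ i ∈ Iᶜ, min (v i) (2^(j+1)) := by
    refine Finset.sum_le_sum fun i hi => ?_
    have : v i ≤ 2^(j+1) := le_trans (hi0 i hi) hj2.le
    rw [min_eq_left this]
  rw [hsplit]
  linarith

lemma measurableSet_delta_le {n k : ℕ} {Ω : Type*} [MeasurableSpace Ω] (x : Fin n → Ω → ℝ)
    (hmeas : ∀ i, Measurable (x i)) :
    MeasurableSet {ω | Delta n (fun i => x i ω) ≤ k} := by
  have heq : {ω | Delta n (fun i => x i ω) ≤ k} =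
      ⋃ (I : Finset (Fin n)) (_ : I.card ≤ k), {ω | ∑ i ∈ Iᶜ, x i ω ≤ (n:ℝ)} := by
    ext ω
    simp only [Set.mem_setOf_eq, Set.mem_iUnion]
    constructor
    · intro h
      obtain ⟨I, hc, hs⟩ := delta_mem n (fun i => x i ω)
      exact ⟨I, by rw [hc]; exact h, hs⟩
    · rintro ⟨I, hck, hs⟩
      exact le_trans (Nat.sInf_le (⟨I, rfl, hs⟩ :
        I.card ∈ {k | ∃ J : Finset (Fin n), J.card = k ∧ ∑ i ∈ Jᶜ, x i ω ≤ n})) hck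
  rw [heq]
  refine MeasurableSet.iUnion fun I => MeasurableSet.iUnion fun _ => ?_
  exact measurableSet_le (Finset.measurable_sum _ fun i _ => hmeas i) measurable_const

lemma measurable_delta {n : ℕ} {Ω : Type*} [MeasurableSpace Ω] (x : Fin n → Ω → ℝ)
    (hmeas : ∀ i, Measurable (x i)) :
    Measurable (fun ω => Delta n (fun i => x i ω)) := by
  apply measurable_to_countable'
  intro k
  cases k with
  | zero =>
    have : (fun ω => Delta n (fun i => x i ω)) ⁻¹' {0} =
        {ω | Delta n (fun i => x i ω) ≤ 0} := by
      ext ω; simp [Nat.le_zero]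
    rw [this]; exact measurableSet_delta_le x hmeas
  | succ m =>
    have : (fun ω => Delta n (fun i => x i ω)) ⁻¹' {m+1} =
        {ω | Delta n (fun i => x i ω) ≤ m+1} \ {ω | Delta n (fun i => x i ω) ≤ m} := by
      ext ω; simp only [Set.mem_preimage, Set.mem_singleton_iff, Set.mem_diff,
        Set.mem_setOf_eq]; omega
    rw [this]
    exact (measurableSet_delta_le x hmeas).diff (measurableSet_delta_le x hmeas)

lemma cheb_bound {Ω : Type*} [MeasurableSpace Ω] (μ : Measure Ω) [IsProbabilityMeasure μ]
    (n : ℕ) (ν : Measure ℝ) [IsProbabilityMeasure ν]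
    (hsupp : ν (Set.Iio 0) = 0) (hmean : ∫ t, t ∂ν = 1)
    (x : Fin n → Ω → ℝ) (hmeas : ∀ i, Measurable (x i))
    (hind : iIndepFun x μ)
    (hdist : ∀ i, μ.map (x i) = ν)
    {c a : ℝ} (hc : 0 < c) (ha : 0 < a) :
    μ {ω | (n:ℝ) + a ≤ ∑ i, min (x i ω) c} ≤ ENNReal.ofReal (n * c / a^2) := by
  have hint : Integrable (fun t => t) ν := by
    by_contra h
    rw [integral_undef h] at hmean
    norm_num at hmean
  set f : ℝ → ℝ := fun t => min t c with hfdef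
  have hf : Measurable f := measurable_id.min measurable_const
  have hnn : ∀ᵐ t ∂ν, 0 ≤ t := by
    rw [ae_iff]
    convert hsupp using 2
    ext t; simp [Set.mem_Iio]
  have hfint : Integrable f ν := by
    refine Integrable.mono' (g := fun t => |t| + c) (hint.abs.add (integrable_const c))
      hf.aestronglyMeasurable ?_
    filter_upwards with t
    have h1 : f t ≤ |t| + c := le_trans (min_le_right t c) (le_add_of_nonneg_left (abs_nonneg t))
    have h2 : -(|t| + c) ≤ f t :=
      le_min (by nlinarith [neg_abs_le t, abs_nonneg t]) (by nlinarith [abs_nonneg t])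
    exact abs_le.mpr ⟨h2, h1⟩
  have hfmean : ∫ t, f t ∂ν ≤ 1 := by
    rw [← hmean]
    exact integral_mono hfint hint fun t => min_le_left t c
  have hf2int : Integrable (fun t => (f t)^2) ν := by
    refine (hint.const_mul c).mono' ((hf.pow_const 2).aestronglyMeasurable) ?_
    filter_upwards [hnn] with t ht
    have h0 : 0 ≤ min t c := le_min ht hc.le
    have h1 : min t c ≤ t := min_le_left t c
    have h2 : min t c ≤ c := min_le_right t c
    rw [Real.norm_eq_abs, abs_of_nonneg (by positivity)]
    nlinarith
  have hf2 : ∫ t, (f t)^2 ∂ν ≤ c := by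
    have : ∫ t, (f t)^2 ∂ν ≤ ∫ t, c * t ∂ν := by
      refine integral_mono_ae hf2int (hint.const_mul c) ?_
      filter_upwards [hnn] with t ht
      have h0 : 0 ≤ min t c := le_min ht hc.le
      have h1 : min t c ≤ t := min_le_left t c
      have h2 : min t c ≤ c := min_le_right t c
      nlinarith
    rwa [integral_const_mul, hmean, mul_one] at this
  -- per-coordinate facts
  set Y : Fin n → Ω → ℝ := fun i ω => f (x i ω) with hYdef
  have hYmeas : ∀ i, Measurable (Y i) := fun i => hf.comp (hmeas i)
  have hxnn : ∀ i, ∀ᵐ ω ∂μ, 0 ≤ x i ω := by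
    intro i
    rw [ae_iff]
    have : {ω | ¬ 0 ≤ x i ω} = x i ⁻¹' (Set.Iio 0) := by ext ω; simp
    rw [this, ← Measure.map_apply (hmeas i) measurableSet_Iio, hdist i, hsupp]
  have hY2 : ∀ i, MemLp (Y i) 2 μ := by
    intro i
    refine MemLp.of_bound (hYmeas i).aestronglyMeasurable c ?_
    filter_upwards [hxnn i] with ω hω
    rw [Real.norm_eq_abs, abs_le]
    exact ⟨by have := le_min hω hc.le; linarith, min_le_right _ _⟩
  have hYint : ∀ i, Integrable (Y i) μ := fun i => (hY2 i).integrable one_le_two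
  have hYmap : ∀ (g : ℝ → ℝ), Measurable g → ∀ i,
      ∫ ω, g (x i ω) ∂μ = ∫ t, g t ∂ν := by
    intro g hg i
    rw [← hdist i, integral_map (hmeas i).aemeasurable hg.aestronglyMeasurable]
  have hYmean : ∀ i, ∫ ω, Y i ω ∂μ ≤ 1 := fun i => (hYmap f hf i) ▸ hfmean
  have hYvar : ∀ i, variance (Y i) μ ≤ c := by
    intro i
    have hd := variance_eq_sub (hY2 i)
    have h1 : (∫ ω, (Y i ^ 2) ω ∂μ) ≤ c := by
      have he : (∫ ω, (Y i ^ 2) ω ∂μ) = ∫ ω, (fun t => (f t)^2) (x i ω) ∂μ := by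
        congr 1
      rw [he, hYmap _ (hf.pow_const 2) i]
      exact hf2
    have h2 : (0:ℝ) ≤ (∫ ω, (Y i) ω ∂μ)^2 := sq_nonneg _
    rw [hd]
    linarith
  -- the sum
  set W : Ω → ℝ := fun ω => ∑ i, Y i ω with hWdef
  have hWeq : W = ∑ i, Y i := by funext ω; rw [Finset.sum_apply]
  have hW2 : MemLp W 2 μ := by rw [hWeq]; exact memLp_finset_sum' _ fun i _ => hY2 i
  have hWmean : (∫ ω, W ω ∂μ) ≤ (n:ℝ) := by
    have h0 : (∫ ω, W ω ∂μ) = ∑ i, ∫ ω, Y i ω ∂μ := by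
      rw [show (∫ ω, W ω ∂μ) = ∫ ω, ∑ i, Y i ω ∂μ from rfl,
        integral_finset_sum _ fun i _ => hYint i]
    rw [h0]
    calc ∑ i, ∫ ω, Y i ω ∂μ ≤ ∑ _i : Fin n, (1:ℝ) := Finset.sum_le_sum fun i _ => hYmean i
    _ = n := by simp
  have hWvar : variance W μ ≤ n * c := by
    rw [hWeq, IndepFun.variance_sum (fun i _ => hY2 i)
      (fun i _ j _ hij => ((hind.indepFun hij).comp hf hf : IndepFun (Y i) (Y j) μ))]
    calc ∑ i, variance (Y i) μ ≤ ∑ _i : Fin n, c := Finset.sum_le_sum fun i _ => hYvar i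
    _ = n * c := by simp [mul_comm]
  -- Chebyshev
  have hsub : {ω | (n:ℝ) + a ≤ ∑ i, min (x i ω) c} ⊆ {ω | a ≤ |W ω - ∫ ω', W ω' ∂μ|} := by
    intro ω hω
    simp only [Set.mem_setOf_eq] at hω ⊢
    have hW : (n:ℝ) + a ≤ W ω := hω
    have h1 : a ≤ W ω - ∫ ω, W ω ∂μ := by linarith
    exact h1.trans (le_abs_self _)
  calc μ {ω | (n:ℝ) + a ≤ ∑ i, min (x i ω) c} ≤ μ {ω | a ≤ |W ω - ∫ ω', W ω' ∂μ|} := measure_mono hsub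
  _ ≤ ENNReal.ofReal (variance W μ / a^2) := meas_ge_le_variance_div_sq hW2 ha
  _ ≤ ENNReal.ofReal (n * c / a^2) := by
      apply ENNReal.ofReal_le_ofReal
      gcongr

lemma tail_bound {Ω : Type*} [MeasurableSpace Ω] (μ : Measure Ω) [IsProbabilityMeasure μ]
    (n : ℕ) (ν : Measure ℝ) [IsProbabilityMeasure ν]
    (hsupp : ν (Set.Iio 0) = 0) (hmean : ∫ t, t ∂ν = 1)
    (x : Fin n → Ω → ℝ) (hmeas : ∀ i, Measurable (x i))
    (hind : iIndepFun x μ)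
    (hdist : ∀ i, μ.map (x i) = ν)
    {k : ℕ} (hk : 0 < k) :
    μ {ω | k < Delta n (fun i => x i ω)} ≤ ENNReal.ofReal (4 * n / k^2) := by
  set G : Set Ω := {ω | ∀ i, 0 ≤ x i ω} with hGdef
  have hGc : μ Gᶜ = 0 := by
    have h1 : Gᶜ = ⋃ i, x i ⁻¹' (Set.Iio 0) := by
      ext ω
      simp [hGdef, not_forall, Set.mem_Iio, not_le]
    rw [h1]
    refine measure_iUnion_null fun i => ?_
    rw [← Measure.map_apply (hmeas i) measurableSet_Iio, hdist i, hsupp]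
  set B : ℕ → Set Ω := fun j => {ω | (n:ℝ) + k * 2^j ≤ ∑ i, min (x i ω) (2^(j+1))} with hBdef
  have hsub : {ω | k < Delta n (fun i => x i ω)} ∩ G ⊆ ⋃ j, B j := by
    rintro ω ⟨hω, hG⟩
    obtain ⟨j, hj⟩ := delta_level hG hω
    exact Set.mem_iUnion.mpr ⟨j, hj⟩
  have hmono : μ {ω | k < Delta n (fun i => x i ω)} ≤ μ (⋃ j, B j) := by
    calc μ {ω | k < Delta n (fun i => x i ω)}
        ≤ μ (({ω | k < Delta n (fun i => x i ω)} ∩ G) ∪ Gᶜ) := by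
          apply measure_mono
          intro ω hω
          by_cases hG : ω ∈ G
          · exact Or.inl ⟨hω, hG⟩
          · exact Or.inr hG
    _ ≤ μ ({ω | k < Delta n (fun i => x i ω)} ∩ G) + μ Gᶜ := measure_union_le _ _
    _ = μ ({ω | k < Delta n (fun i => x i ω)} ∩ G) := by rw [hGc, add_zero]
    _ ≤ μ (⋃ j, B j) := measure_mono hsub
  have hkR : (0:ℝ) < k := by exact_mod_cast hk
  have hBj : ∀ j : ℕ, μ (B j) ≤ ENNReal.ofReal ((2 * n / k^2) * (1/2)^j) := by
    intro j
    have hc : (0:ℝ) < 2^(j+1) := by positivity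
    have ha : (0:ℝ) < (k:ℝ) * 2^j := by positivity
    have := cheb_bound μ n ν hsupp hmean x hmeas hind hdist hc ha
    convert this using 2
    have h2j : ((2:ℝ)^j) ≠ 0 := by positivity
    field_simp
    have h12 : ((1:ℝ)/2)^j * 2^j = 1 := by rw [← mul_pow]; norm_num
    linear_combination (2 * (n:ℝ) * 2^j) * h12
  calc μ {ω | k < Delta n (fun i => x i ω)} ≤ μ (⋃ j, B j) := hmono
  _ ≤ ∑' j, μ (B j) := measure_iUnion_le _
  _ ≤ ∑' j : ℕ, ENNReal.ofReal ((2 * n / k^2) * (1/2)^j) := ENNReal.tsum_le_tsum hBj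
  _ = ∑' j : ℕ, ENNReal.ofReal (2 * n / k^2) * (ENNReal.ofReal (1/2))^j := by
      congr 1
      funext j
      rw [ENNReal.ofReal_mul (by positivity), ENNReal.ofReal_pow (by norm_num)]
  _ = ENNReal.ofReal (2 * n / k^2) * (1 - ENNReal.ofReal (1/2))⁻¹ := by
      rw [ENNReal.tsum_mul_left, ENNReal.tsum_geometric]
  _ = ENNReal.ofReal (2 * n / k^2) * 2 := by
      congr 1
      have : ENNReal.ofReal (1/2 : ℝ) = 2⁻¹ := by
        rw [one_div, ENNReal.ofReal_inv_of_pos (by norm_num : (0:ℝ) < 2)]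
        norm_num
      rw [this, ENNReal.one_sub_inv_two, inv_inv]
  _ = ENNReal.ofReal (4 * n / k^2) := by
      rw [← ENNReal.ofReal_ofNat 2, ← ENNReal.ofReal_mul (by positivity)]
      congr 1
      ring

/-- For `x₁,…,xₙ` i.i.d. from a distribution `ν` on the nonnegative reals with mean `1`,
`E[Δ(x₁,…,xₙ)] ≤ 5√n`. -/
theorem statement7 {Ω : Type*} [MeasurableSpace Ω] (μ : Measure Ω) [IsProbabilityMeasure μ]
    (n : ℕ) (ν : Measure ℝ) [IsProbabilityMeasure ν]
    (hsupp : ν (Set.Iio 0) = 0) (hmean : ∫ t, t ∂ν = 1)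
    (x : Fin n → Ω → ℝ) (hmeas : ∀ i, Measurable (x i))
    (hind : iIndepFun x μ)
    (hdist : ∀ i, μ.map (x i) = ν) :
    ∫ ω, (Delta n (fun i => x i ω) : ℝ) ∂μ ≤ 5 * Real.sqrt n := by
  set D : Ω → ℕ := fun ω => Delta n (fun i => x i ω) with hDdef
  have hDmeas : Measurable D := measurable_delta x hmeas
  have hDRmeas : Measurable (fun ω => (D ω : ℝ)) := measurable_from_top.comp hDmeas
  have hDub : ∀ ω, (D ω : ℝ) ≤ n := fun ω => by
    exact_mod_cast delta_le n (fun i => x i ω)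
  have hDnn : ∀ ω, (0:ℝ) ≤ (D ω : ℝ) := fun ω => Nat.cast_nonneg _
  have hDint : Integrable (fun ω => (D ω : ℝ)) μ := by
    refine memLp_one_iff_integrable.mp (MemLp.of_bound hDRmeas.aestronglyMeasurable n ?_)
    filter_upwards with ω
    rw [Real.norm_eq_abs, abs_of_nonneg (hDnn ω)]
    exact hDub ω
  have hs0 : (0:ℝ) ≤ Real.sqrt n := Real.sqrt_nonneg _
  have hs2 : (Real.sqrt n)^2 = n := Real.sq_sqrt (by positivity)
  by_cases hn : n ≤ 25
  · -- trivial case : Delta ≤ n ≤ 5 √n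
    have h1 : ∫ ω, (D ω : ℝ) ∂μ ≤ ∫ _ω, (n:ℝ) ∂μ :=
      integral_mono hDint (integrable_const _) hDub
    rw [integral_const, probReal_univ, one_smul] at h1
    refine h1.trans ?_
    have hn25 : ((n:ℝ)) ≤ 25 := by exact_mod_cast hn
    nlinarith [hs0, hs2]
  · push_neg at hn
    have hn26 : (26:ℝ) ≤ n := by exact_mod_cast hn
    set s := Real.sqrt n with hsdef
    have hs5 : 5 ≤ s := by nlinarith
    set K : ℕ := ⌈2 * s⌉₊ with hKdef
    have hKlb : 2 * s ≤ (K:ℝ) := Nat.le_ceil _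
    have hKub : (K:ℝ) ≤ 2 * s + 1 := le_of_lt (Nat.ceil_lt_add_one (by positivity))
    have hK2 : 2 ≤ K := by
      have : (2:ℝ) ≤ (K:ℝ) := by linarith
      exact_mod_cast this
    set S : ℕ → Set Ω := fun k => {ω | k < D ω} with hSdef
    have hSmeas : ∀ k, MeasurableSet (S k) := by
      intro k
      have : S k = {ω | D ω ≤ k}ᶜ := by
        ext ω; simp [hSdef, not_le]
      rw [this]
      exact (measurableSet_delta_le x hmeas).compl
    -- pointwise bound
    have hpt : ∀ ω, (D ω : ℝ) ≤ K + ∑ k ∈ Finset.Ico K n,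
        Set.indicator (S k) (fun _ => (1:ℝ)) ω := by
      intro ω
      have hind_eq : ∀ k, Set.indicator (S k) (fun _ => (1:ℝ)) ω
          = if k < D ω then 1 else 0 := by
        intro k
        by_cases h : k < D ω
        · rw [Set.indicator_of_mem (by simpa [hSdef] using h), if_pos h]
        · rw [Set.indicator_of_notMem (by simpa [hSdef] using h), if_neg h]
      by_cases hD : D ω ≤ K
      · have hsum : (0:ℝ) ≤ ∑ k ∈ Finset.Ico K n, Set.indicator (S k) (fun _ => (1:ℝ)) ω :=
          Finset.sum_nonneg fun k _ => Set.indicator_nonneg (fun _ _ => by norm_num) ω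
        have : (D ω : ℝ) ≤ K := by exact_mod_cast hD
        linarith
      · push_neg at hD
        have hDn : D ω ≤ n := delta_le n _
        have hcalc : ∑ k ∈ Finset.Ico K n, Set.indicator (S k) (fun _ => (1:ℝ)) ω
            = ((D ω : ℝ) - K) := by
          calc ∑ k ∈ Finset.Ico K n, Set.indicator (S k) (fun _ => (1:ℝ)) ω
              = ∑ k ∈ Finset.Ico K n, if k < D ω then (1:ℝ) else 0 := by
                exact Finset.sum_congr rfl fun k _ => hind_eq k
          _ = ((Finset.Ico K n).filter (fun k => k < D ω)).card := Finset.sum_boole _ _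
          _ = (Finset.Ico K (D ω)).card := by
                congr 2
                ext k
                simp only [Finset.mem_filter, Finset.mem_Ico]
                omega
          _ = ((D ω : ℝ) - K) := by
                rw [Nat.card_Ico]
                have : K ≤ D ω := hD.le
                push_cast [Nat.cast_sub this]
                ring
        rw [hcalc]
        ring_nf
        linarith [le_refl (D ω : ℝ)]
    -- integrate
    have hintg : Integrable (fun ω => (K:ℝ) + ∑ k ∈ Finset.Ico K n,
        Set.indicator (S k) (fun _ => (1:ℝ)) ω) μ := by
      refine (integrable_const _).add ?_
      refine integrable_finset_sum _ fun k _ => ?_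
      exact (integrable_const (1:ℝ)).indicator (hSmeas k)
    have hmain : ∫ ω, (D ω : ℝ) ∂μ ≤ (K:ℝ) + ∑ k ∈ Finset.Ico K n, (μ (S k)).toReal := by
      have h1 : ∫ ω, (D ω : ℝ) ∂μ ≤ ∫ ω, ((K:ℝ) + ∑ k ∈ Finset.Ico K n,
          Set.indicator (S k) (fun _ => (1:ℝ)) ω) ∂μ := integral_mono hDint hintg hpt
      refine h1.trans (le_of_eq ?_)
      rw [integral_add (integrable_const _) (integrable_finset_sum _ fun k _ =>
        (integrable_const (1:ℝ)).indicator (hSmeas k)),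
        integral_const, probReal_univ, one_smul,
        integral_finset_sum _ fun k _ => (integrable_const (1:ℝ)).indicator (hSmeas k)]
      congr 1
      refine Finset.sum_congr rfl fun k _ => ?_
      rw [integral_indicator_const _ (hSmeas k), smul_eq_mul, mul_one, Measure.real]
    -- bound each probability
    have hprob : ∀ k ∈ Finset.Ico K n, (μ (S k)).toReal ≤ 4 * n / (k:ℝ)^2 := by
      intro k hk
      rw [Finset.mem_Ico] at hk
      have hk0 : 0 < k := by omega
      have := tail_bound μ n ν hsupp hmean x hmeas hind hdist hk0
      exact ENNReal.toReal_le_of_le_ofReal (by positivity) this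
    -- telescoping
    have htel : ∑ k ∈ Finset.Ico K n, 4 * (n:ℝ) / (k:ℝ)^2 ≤ 4 * n / ((K:ℝ) - 1) := by
      set g : ℕ → ℝ := fun k => 4 * (n:ℝ) / ((k:ℝ) - 1) with hgdef
      have hterm : ∀ k ∈ Finset.Ico K n, 4 * (n:ℝ) / (k:ℝ)^2 ≤ g k - g (k+1) := by
        intro k hk
        rw [Finset.mem_Ico] at hk
        have hk2 : (2:ℝ) ≤ k := by
          have : 2 ≤ k := le_trans hK2 hk.1
          exact_mod_cast this
        have h1 : (0:ℝ) < (k:ℝ) - 1 := by linarith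
        have h2 : (0:ℝ) < (k:ℝ) := by linarith
        rw [hgdef]
        simp only [Nat.cast_add, Nat.cast_one]
        rw [div_sub_div _ _ (by linarith) (by linarith : (k:ℝ) + 1 - 1 ≠ 0)]
        rw [div_le_div_iff₀ (by positivity) (by nlinarith)]
        ring_nf
        nlinarith
      have hsum : ∑ k ∈ Finset.Ico K n, (g k - g (k+1)) ≤ g K := by
        rw [Finset.sum_Ico_eq_sum_range]
        have hcong : ∀ i ∈ Finset.range (n - K), g (K + i) - g (K + i + 1)
            = (fun i => g (K + i)) i - (fun i => g (K + i)) (i+1) := by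
          intro i _
          have h3 : K + i + 1 = K + (i + 1) := by omega
          rw [h3]
        rw [Finset.sum_congr rfl hcong, Finset.sum_range_sub' (fun i => g (K + i))]
        show g (K + 0) - g (K + (n - K)) ≤ g K
        have h1 : K + 0 = K := by omega
        have h2 : 0 ≤ g (K + (n - K)) := by
          rw [hgdef]
          refine div_nonneg (by positivity) ?_
          have h4 : (2:ℝ) ≤ ((K + (n-K) : ℕ) : ℝ) := by
            have : 2 ≤ K + (n - K) := by omega
            exact_mod_cast this
          linarith
        rw [h1]
        linarith
      calc ∑ k ∈ Finset.Ico K n, 4 * (n:ℝ) / (k:ℝ)^2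
          ≤ ∑ k ∈ Finset.Ico K n, (g k - g (k+1)) := Finset.sum_le_sum hterm
      _ ≤ g K := hsum
      _ = 4 * (n:ℝ) / ((K:ℝ) - 1) := by rw [hgdef]
    -- final arithmetic
    have hfinal : (K:ℝ) + 4 * n / ((K:ℝ) - 1) ≤ 5 * s := by
      have hK1 : (0:ℝ) < (K:ℝ) - 1 := by nlinarith
      rw [← sub_nonneg]
      have hdiv : 4 * (n:ℝ) / ((K:ℝ) - 1) * ((K:ℝ) - 1) = 4 * n := by
        field_simp
      nlinarith [sq_nonneg ((K:ℝ) - 2*s), mul_pos hK1 hK1]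
    calc ∫ ω, (D ω : ℝ) ∂μ ≤ (K:ℝ) + ∑ k ∈ Finset.Ico K n, (μ (S k)).toReal := hmain
    _ ≤ (K:ℝ) + ∑ k ∈ Finset.Ico K n, 4 * (n:ℝ) / (k:ℝ)^2 := by
        have := Finset.sum_le_sum hprob
        linarith
    _ ≤ (K:ℝ) + 4 * n / ((K:ℝ) - 1) := by linarith
    _ ≤ 5 * s := hfinal
end

section
/- Let D_cost be a distribution on the nonnegative reals with mean 1, and draw x₁,...,xₙ i.i.d. from D_cost. With Δ defined as the minimum number of elements to remove so the remaining sum is at most n, for every v ≥ 0: Pr[Δ(x₁,...,xₙ) ≥ v] ≤ 2/v + 4n/v². -/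
set_option linter.unusedSectionVars false
set_option linter.unusedVariables false
set_option linter.deprecated false
set_option maxHeartbeats 1000000

open MeasureTheory ProbabilityTheory Finset
open scoped ENNReal

open Filter
open scoped Topology

namespace Statement8Aux


lemma delta_le_card (n : ℕ) (y : Fin n → ℝ) (I : Finset (Fin n))
    (h : ∑ i ∈ Iᶜ, y i ≤ (n : ℝ)) : Delta n y ≤ I.card :=
  Nat.sInf_le ⟨I, rfl, h⟩

lemma delta_le_n (n : ℕ) (y : Fin n → ℝ) : Delta n y ≤ n := by
  have h : ∑ i ∈ (Finset.univ : Finset (Fin n))ᶜ, y i ≤ (n : ℝ) := by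
    rw [Finset.compl_univ, Finset.sum_empty]
    exact Nat.cast_nonneg n
  simpa using delta_le_card n y Finset.univ h

lemma deltaLe_measurableSet (n m : ℕ) :
    MeasurableSet {y : Fin n → ℝ | Delta n y ≤ m} := by
  classical
  have : {y : Fin n → ℝ | Delta n y ≤ m}
      = ⋃ (I : Finset (Fin n)) (_ : I.card ≤ m), {y | ∑ i ∈ Iᶜ, y i ≤ (n : ℝ)} := by
    ext y
    simp only [Set.mem_setOf_eq, Set.mem_iUnion]
    constructor
    · intro h
      have hne : {k | ∃ I : Finset (Fin n), I.card = k ∧ ∑ i ∈ Iᶜ, y i ≤ (n : ℝ)}.Nonempty := by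
        refine ⟨n, Finset.univ, by simp, ?_⟩
        rw [Finset.compl_univ, Finset.sum_empty]; exact Nat.cast_nonneg n
      obtain ⟨I, hI, hsum⟩ := Nat.sInf_mem hne
      exact ⟨I, by rw [hI]; exact h, hsum⟩
    · rintro ⟨I, hIm, hsum⟩
      exact le_trans (delta_le_card n y I hsum) hIm
  rw [this]
  refine MeasurableSet.iUnion fun I => MeasurableSet.iUnion fun _ => ?_
  exact measurableSet_le (Finset.measurable_sum _ fun i _ => measurable_pi_apply i)
    measurable_const

lemma measurable_delta (n : ℕ) : Measurable (fun y : Fin n → ℝ => Delta n y) := by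
  refine measurable_to_countable' fun k => ?_
  rcases Nat.eq_zero_or_pos k with hk | hk
  · subst hk
    have : (fun y : Fin n → ℝ => Delta n y) ⁻¹' {0} = {y | Delta n y ≤ 0} := by
      ext y; simp [Nat.le_zero]
    rw [this]
    exact deltaLe_measurableSet n 0
  · have : (fun y : Fin n → ℝ => Delta n y) ⁻¹' {k}
        = {y | Delta n y ≤ k} \ {y | Delta n y ≤ k - 1} := by
      ext y
      simp only [Set.mem_preimage, Set.mem_singleton_iff, Set.mem_diff, Set.mem_setOf_eq]
      omega
    rw [this]
    exact (deltaLe_measurableSet n k).diff (deltaLe_measurableSet n (k - 1))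

lemma target_measurableSet (n : ℕ) (v : ℝ) :
    MeasurableSet {y : Fin n → ℝ | v ≤ (Delta n y : ℝ)} :=
  measurableSet_le measurable_const
    (measurable_from_top.comp (measurable_delta n))

lemma map_eval_pi {ι : Type*} [Fintype ι] {α : Type*} [MeasurableSpace α]
    (κ : Measure α) [IsProbabilityMeasure κ] (i : ι) :
    (Measure.pi fun _ : ι => κ).map (Function.eval i) = κ := by
  classical
  ext s hs
  rw [Measure.map_apply (measurable_pi_apply i) hs, ← Set.univ_pi_update_univ, Measure.pi_pi]
  rw [Finset.prod_eq_single i (fun j _ hj => by simp [Function.update_of_ne hj])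
    (fun h => absurd (Finset.mem_univ i) h)]
  simp

lemma indep_eval {ι : Type*} [Fintype ι] {α : Type*} [MeasurableSpace α]
    (κ : Measure α) [IsProbabilityMeasure κ] {i j : ι} (hij : i ≠ j) :
    IndepFun (Function.eval i) (Function.eval j) (Measure.pi fun _ : ι => κ) := by
  classical
  rw [indepFun_iff_measure_inter_preimage_eq_mul]
  intro s t hs ht
  have hset : Function.eval i ⁻¹' s ∩ Function.eval j ⁻¹' t
      = Set.pi Set.univ (fun k => if k = i then s else if k = j then t else Set.univ) := by
    ext f
    simp only [Set.mem_inter_iff, Set.mem_preimage, Set.mem_pi, Set.mem_univ, forall_true_left]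
    constructor
    · rintro ⟨h1, h2⟩ k
      by_cases hk : k = i
      · subst hk; simp [if_pos rfl, h1]
      · by_cases hk' : k = j
        · subst hk'; simp [if_neg hk, h2]
        · simp [if_neg hk, if_neg hk']
    · intro h
      refine ⟨?_, ?_⟩
      · have := h i; simpa using this
      · have := h j; simpa [if_neg hij.symm] using this
  have h1 : (Measure.pi fun _ : ι => κ) (Function.eval i ⁻¹' s) = κ s := by
    rw [← Measure.map_apply (measurable_pi_apply i) hs, map_eval_pi]
  have h2 : (Measure.pi fun _ : ι => κ) (Function.eval j ⁻¹' t) = κ t := by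
    rw [← Measure.map_apply (measurable_pi_apply j) ht, map_eval_pi]
  rw [hset, Measure.pi_pi, h1, h2]
  have hout : ∀ k ∈ Finset.univ, k ∉ ({i, j} : Finset ι) →
      κ (if k = i then s else if k = j then t else Set.univ) = 1 := by
    intro k _ hk
    simp only [Finset.mem_insert, Finset.mem_singleton, not_or] at hk
    simp [if_neg hk.1, if_neg hk.2]
  rw [← Finset.prod_subset (Finset.subset_univ ({i, j} : Finset ι)) hout,
    Finset.prod_pair hij]
  simp [if_neg hij.symm]



noncomputable def eI (ν : Measure ℝ) (s : Set ℝ) : ℝ := ∫ a, Set.indicator s id a ∂ν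

variable {ν : Measure ℝ} [IsProbabilityMeasure ν]

lemma eI_nonneg (hae : ∀ᵐ a ∂ν, 0 ≤ a) (s : Set ℝ) : 0 ≤ eI ν s := by
  refine integral_nonneg_of_ae ?_
  filter_upwards [hae] with a ha
  by_cases h : a ∈ s <;> simp [Set.indicator_of_mem, Set.indicator_of_notMem, h, ha]

lemma eI_mono (hint : Integrable (fun a : ℝ => a) ν) (hae : ∀ᵐ a ∂ν, 0 ≤ a)
    {s t : Set ℝ} (hs : MeasurableSet s) (ht : MeasurableSet t) (hst : s ⊆ t) :
    eI ν s ≤ eI ν t := by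
  refine integral_mono_ae (hint.indicator hs) (hint.indicator ht) ?_
  filter_upwards [hae] with a ha
  by_cases h : a ∈ s
  · rw [Set.indicator_of_mem h, Set.indicator_of_mem (hst h)]
  · rw [Set.indicator_of_notMem h]
    by_cases h' : a ∈ t
    · rw [Set.indicator_of_mem h']; exact ha
    · rw [Set.indicator_of_notMem h']

lemma eI_le_one (hint : Integrable (fun a : ℝ => a) ν) (hae : ∀ᵐ a ∂ν, 0 ≤ a)
    (hmean : ∫ a, a ∂ν = 1) {s : Set ℝ} (hs : MeasurableSet s) : eI ν s ≤ 1 := by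
  rw [← hmean]
  refine integral_mono_ae (hint.indicator hs) hint ?_
  filter_upwards [hae] with a ha
  by_cases h : a ∈ s
  · rw [Set.indicator_of_mem h]; exact le_refl _
  · rw [Set.indicator_of_notMem h]; exact ha

lemma tendsto_eI_of_tendsto (hint : Integrable (fun a : ℝ => a) ν)
    (w : ℕ → ℝ) (s : Set ℝ) (hs : MeasurableSet s)
    (hlim : ∀ a : ℝ, Tendsto (fun k => Set.indicator (Set.Ici (w k)) id a) atTop
      (𝓝 (Set.indicator s id a))) :
    Tendsto (fun k => eI ν (Set.Ici (w k))) atTop (𝓝 (eI ν s)) := by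
  refine tendsto_integral_of_dominated_convergence (fun a => |a|)
    (fun k => (hint.indicator measurableSet_Ici).aestronglyMeasurable)
    hint.abs (fun k => Eventually.of_forall fun a => ?_)
    (Eventually.of_forall fun a => hlim a)
  by_cases h : a ∈ Set.Ici (w k)
  · rw [Set.indicator_of_mem h]; exact le_refl _
  · rw [Set.indicator_of_notMem h]; simp [abs_nonneg]

lemma tendsto_wk_add (u : ℝ) : Tendsto (fun k : ℕ => u + 1/(k+1)) atTop (𝓝 u) := by
  have := tendsto_one_div_add_atTop_nhds_zero_nat (𝕜 := ℝ)
  simpa using tendsto_const_nhds.add this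

lemma tendsto_wk_sub (u : ℝ) : Tendsto (fun k : ℕ => u - 1/(k+1)) atTop (𝓝 u) := by
  have := tendsto_one_div_add_atTop_nhds_zero_nat (𝕜 := ℝ)
  simpa using tendsto_const_nhds.sub this

lemma tendsto_eI_right (hint : Integrable (fun a : ℝ => a) ν) (u : ℝ) :
    Tendsto (fun k : ℕ => eI ν (Set.Ici (u + 1/(k+1)))) atTop (𝓝 (eI ν (Set.Ioi u))) := by
  refine tendsto_eI_of_tendsto hint _ _ measurableSet_Ioi fun a => ?_
  by_cases ha : u < a
  · rw [Set.indicator_of_mem (by exact ha : a ∈ Set.Ioi u)]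
    refine Tendsto.congr' ?_ (tendsto_const_nhds (x := (id a : ℝ)))
    have hev : ∀ᶠ k : ℕ in atTop, u + 1/(k+1) < a := (tendsto_wk_add u).eventually_lt_const ha
    filter_upwards [hev] with k hk
    exact (Set.indicator_of_mem (le_of_lt hk : a ∈ Set.Ici (u + 1/(k+1))) id).symm
  · push_neg at ha
    rw [Set.indicator_of_notMem (by simpa using ha)]
    have : ∀ k : ℕ, Set.indicator (Set.Ici (u + 1/(k+1))) id a = 0 := by
      intro k
      refine Set.indicator_of_notMem ?_ id
      simp only [Set.mem_Ici, not_le]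
      have : (0:ℝ) < 1/((k:ℝ)+1) := by positivity
      linarith
    refine Tendsto.congr (fun k => (this k).symm) tendsto_const_nhds

lemma tendsto_eI_left (hint : Integrable (fun a : ℝ => a) ν) (u : ℝ) :
    Tendsto (fun k : ℕ => eI ν (Set.Ici (u - 1/(k+1)))) atTop (𝓝 (eI ν (Set.Ici u))) := by
  refine tendsto_eI_of_tendsto hint _ _ measurableSet_Ici fun a => ?_
  by_cases ha : u ≤ a
  · rw [Set.indicator_of_mem (by exact ha : a ∈ Set.Ici u)]
    have : ∀ k : ℕ, Set.indicator (Set.Ici (u - 1/(k+1))) id a = id a := by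
      intro k
      refine Set.indicator_of_mem ?_ id
      simp only [Set.mem_Ici]
      have : (0:ℝ) < 1/((k:ℝ)+1) := by positivity
      linarith
    refine Tendsto.congr (fun k => (this k).symm) tendsto_const_nhds
  · push_neg at ha
    rw [Set.indicator_of_notMem (by simpa using not_le.mpr ha)]
    refine Tendsto.congr' ?_ (tendsto_const_nhds (x := (0:ℝ)))
    have hev : ∀ᶠ k : ℕ in atTop, a < u - 1/(k+1) := (tendsto_wk_sub u).eventually_const_lt ha
    filter_upwards [hev] with k hk
    exact (Set.indicator_of_notMem (by simp only [Set.mem_Ici, not_le]; exact hk) id).symm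

lemma exists_threshold (hint : Integrable (fun a : ℝ => a) ν) (hae : ∀ᵐ a ∂ν, 0 ≤ a)
    (hmean : ∫ a, a ∂ν = 1) {c : ℝ} (hc : 0 < c) :
    ∃ u θ : ℝ, 1 ≤ u ∧ 0 ≤ θ ∧ θ ≤ 1 ∧
      eI ν (Set.Ioi u) + θ * (eI ν (Set.Ici u) - eI ν (Set.Ioi u)) ≤ Real.sqrt u * c ∧
      (Real.sqrt u * c ≤ eI ν (Set.Ioi u) + θ * (eI ν (Set.Ici u) - eI ν (Set.Ioi u))
        ∨ (u = 1 ∧ θ = 1)) := by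
  set S := {w : ℝ | 1 ≤ w ∧ Real.sqrt w * c ≤ eI ν (Set.Ici w)} with hSdef
  have hBdd : BddAbove S := by
    refine ⟨(1/c)^2, fun w hw => ?_⟩
    have h1 : Real.sqrt w * c ≤ 1 :=
      le_trans hw.2 (eI_le_one hint hae hmean measurableSet_Ici)
    have h2 : Real.sqrt w ≤ 1/c := by
      rw [le_div_iff₀ hc]; exact h1
    calc w = Real.sqrt w ^ 2 := (Real.sq_sqrt (by linarith [hw.1] : (0:ℝ) ≤ w)).symm
      _ ≤ (1/c)^2 := by
          have := Real.sqrt_nonneg w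
          exact pow_le_pow_left₀ this h2 2
  by_cases hS : S.Nonempty
  · set u := sSup S with hu
    obtain ⟨w₀, hw₀⟩ := hS
    have hu1 : 1 ≤ u := le_trans hw₀.1 (le_csSup hBdd hw₀)
    have hR : eI ν (Set.Ioi u) ≤ Real.sqrt u * c := by
      have hseq : ∀ k : ℕ, eI ν (Set.Ici (u + 1/(k+1))) ≤ Real.sqrt (u + 1/(k+1)) * c := by
        intro k
        have hkpos : (0:ℝ) < 1/((k:ℝ)+1) := by positivity
        have hnot : (u + 1/((k:ℝ)+1)) ∉ S := by
          intro hmem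
          have := le_csSup hBdd hmem
          linarith
        by_contra hcon
        push_neg at hcon
        exact hnot ⟨by linarith, hcon.le⟩
      refine le_of_tendsto_of_tendsto' (tendsto_eI_right hint u) ?_ hseq
      have h1 : Tendsto (fun k : ℕ => Real.sqrt (u + 1/(k+1))) atTop (𝓝 (Real.sqrt u)) :=
        (Real.continuous_sqrt.tendsto u).comp (tendsto_wk_add u)
      exact h1.mul_const c
    have hL : Real.sqrt u * c ≤ eI ν (Set.Ici u) := by
      have hseq : ∀ k : ℕ, Real.sqrt (u - 1/(k+1)) * c ≤ eI ν (Set.Ici (u - 1/(k+1))) := by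
        intro k
        have hkpos : (0:ℝ) < 1/((k:ℝ)+1) := by positivity
        have hlt : u - 1/((k:ℝ)+1) < u := by linarith
        obtain ⟨w, hwS, hw⟩ := exists_lt_of_lt_csSup ⟨w₀, hw₀⟩ hlt
        calc Real.sqrt (u - 1/(k+1)) * c ≤ Real.sqrt w * c :=
              mul_le_mul_of_nonneg_right (Real.sqrt_le_sqrt hw.le) hc.le
          _ ≤ eI ν (Set.Ici w) := hwS.2
          _ ≤ eI ν (Set.Ici (u - 1/(k+1))) :=
              eI_mono hint hae measurableSet_Ici measurableSet_Ici
                (Set.Ici_subset_Ici.mpr hw.le)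
      refine le_of_tendsto_of_tendsto' ?_ (tendsto_eI_left hint u) hseq
      have h1 : Tendsto (fun k : ℕ => Real.sqrt (u - 1/(k+1))) atTop (𝓝 (Real.sqrt u)) :=
        (Real.continuous_sqrt.tendsto u).comp (tendsto_wk_sub u)
      exact h1.mul_const c
    have hA0 : 0 ≤ eI ν (Set.Ici u) - eI ν (Set.Ioi u) :=
      sub_nonneg.mpr (eI_mono hint hae measurableSet_Ioi measurableSet_Ici Set.Ioi_subset_Ici_self)
    by_cases hAz : eI ν (Set.Ici u) - eI ν (Set.Ioi u) = 0
    · refine ⟨u, 0, hu1, le_refl 0, zero_le_one, ?_, Or.inl ?_⟩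
      · rw [mul_comm (0:ℝ), mul_zero, add_zero]; exact hR
      · rw [mul_comm (0:ℝ), mul_zero, add_zero]
        have : eI ν (Set.Ici u) = eI ν (Set.Ioi u) := by linarith
        rw [← this]; exact hL
    · have hApos : 0 < eI ν (Set.Ici u) - eI ν (Set.Ioi u) := lt_of_le_of_ne hA0 (Ne.symm hAz)
      refine ⟨u, (Real.sqrt u * c - eI ν (Set.Ioi u)) / (eI ν (Set.Ici u) - eI ν (Set.Ioi u)),
        hu1, ?_, ?_, ?_, Or.inl ?_⟩
      · exact div_nonneg (by linarith) hA0
      · rw [div_le_one hApos]; linarith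
      · rw [div_mul_cancel₀ _ hAz]; linarith
      · rw [div_mul_cancel₀ _ hAz]; linarith
  · refine ⟨1, 1, le_refl 1, zero_le_one, le_refl 1, ?_, Or.inr ⟨rfl, rfl⟩⟩
    have h1 : (1:ℝ) ∉ S := fun h => hS ⟨1, h⟩
    have h2 : ¬ (Real.sqrt 1 * c ≤ eI ν (Set.Ici 1)) := by
      intro h; exact h1 ⟨le_refl 1, h⟩
    push_neg at h2
    rw [Real.sqrt_one] at h2 ⊢
    linarith




def cset (u θ : ℝ) : Set (ℝ × ℝ) := {p | u < p.1 ∨ (p.1 = u ∧ p.2 ≤ θ)}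

noncomputable def bf (u θ : ℝ) : ℝ × ℝ → ℝ := (cset u θ).indicator 1

noncomputable def zf (u θ : ℝ) : ℝ × ℝ → ℝ := fun p => p.1 - p.1 * bf u θ p

noncomputable def UU : Measure ℝ := volume.restrict (Set.Icc (0:ℝ) 1)

instance : IsProbabilityMeasure UU :=
  ⟨by rw [UU, Measure.restrict_apply_univ, Real.volume_Icc]; norm_num⟩

noncomputable def kker (ν : Measure ℝ) : Measure (ℝ × ℝ) := ν.prod UU

instance (ν : Measure ℝ) [IsProbabilityMeasure ν] : IsProbabilityMeasure (kker ν) := by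
  rw [kker]; infer_instance

lemma cset_measurableSet (u θ : ℝ) : MeasurableSet (cset u θ) := by
  have : cset u θ = (Prod.fst ⁻¹' Set.Ioi u) ∪
      ((Prod.fst ⁻¹' ({u} : Set ℝ)) ∩ (Prod.snd ⁻¹' Set.Iic θ)) := by
    ext p; simp [cset]
  rw [this]
  exact ((measurableSet_Ioi.preimage measurable_fst).union
    (((measurableSet_singleton u).preimage measurable_fst).inter
      (measurableSet_Iic.preimage measurable_snd)))

lemma bf_meas (u θ : ℝ) : Measurable (bf u θ) :=
  measurable_const.indicator (cset_measurableSet u θ)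

lemma zf_meas (u θ : ℝ) : Measurable (zf u θ) :=
  measurable_fst.sub (measurable_fst.mul (bf_meas u θ))

lemma bf_of_mem {u θ : ℝ} {p : ℝ × ℝ} (h : p ∈ cset u θ) : bf u θ p = 1 :=
  Set.indicator_of_mem h 1

lemma bf_of_not_mem {u θ : ℝ} {p : ℝ × ℝ} (h : p ∉ cset u θ) : bf u θ p = 0 :=
  Set.indicator_of_notMem h 1

lemma bf_nonneg (u θ : ℝ) (p : ℝ × ℝ) : 0 ≤ bf u θ p := by
  by_cases h : p ∈ cset u θ
  · rw [bf_of_mem h]; norm_num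
  · rw [bf_of_not_mem h]

lemma bf_le_one (u θ : ℝ) (p : ℝ × ℝ) : bf u θ p ≤ 1 := by
  by_cases h : p ∈ cset u θ
  · rw [bf_of_mem h]
  · rw [bf_of_not_mem h]; norm_num

lemma bf_sq (u θ : ℝ) (p : ℝ × ℝ) : bf u θ p ^ 2 = bf u θ p := by
  by_cases h : p ∈ cset u θ
  · rw [bf_of_mem h]; norm_num
  · rw [bf_of_not_mem h]; norm_num

lemma zf_of_mem {u θ : ℝ} {p : ℝ × ℝ} (h : p ∈ cset u θ) : zf u θ p = 0 := by
  rw [zf, bf_of_mem h]; ring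

lemma zf_of_not_mem {u θ : ℝ} {p : ℝ × ℝ} (h : p ∉ cset u θ) : zf u θ p = p.1 := by
  rw [zf, bf_of_not_mem h]; ring

lemma zf_le {u θ : ℝ} (hu : 0 ≤ u) (p : ℝ × ℝ) : zf u θ p ≤ u := by
  by_cases h : p ∈ cset u θ
  · rw [zf_of_mem h]; exact hu
  · rw [zf_of_not_mem h]
    rcases not_or.mp h with ⟨h1, _⟩
    exact not_lt.mp h1

lemma zf_nonneg {u θ : ℝ} {p : ℝ × ℝ} (hp : 0 ≤ p.1) : 0 ≤ zf u θ p := by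
  by_cases h : p ∈ cset u θ
  · rw [zf_of_mem h]
  · rw [zf_of_not_mem h]; exact hp

lemma ub_le_xb {u θ : ℝ} (hu : 0 ≤ u) (p : ℝ × ℝ) :
    u * bf u θ p ≤ p.1 * bf u θ p := by
  by_cases h : p ∈ cset u θ
  · rw [bf_of_mem h, mul_one, mul_one]
    rcases h with h1 | h2
    · exact le_of_lt h1
    · exact le_of_eq h2.1.symm
  · rw [bf_of_not_mem h, mul_zero, mul_zero]

section KK

variable {ν : Measure ℝ} [IsProbabilityMeasure ν]

lemma map_fst_kker : (kker ν).map Prod.fst = ν := by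
  rw [kker, Measure.map_fst_prod, measure_univ, one_smul]

lemma kker_ae_nonneg (hsupp : ν (Set.Iio 0) = 0) : ∀ᵐ p ∂(kker ν), 0 ≤ p.1 := by
  rw [ae_iff]
  have h1 : {p : ℝ × ℝ | ¬ 0 ≤ p.1} = Prod.fst ⁻¹' Set.Iio 0 := by
    ext p; simp [not_le]
  rw [h1, ← Measure.map_apply measurable_fst measurableSet_Iio, map_fst_kker]
  exact hsupp

lemma integrable_comp_fst {g : ℝ → ℝ} (hg : Measurable g)
    (hint : Integrable g ν) : Integrable (fun p : ℝ × ℝ => g p.1) (kker ν) := by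
  have h : Integrable g ((kker ν).map Prod.fst) := by rw [map_fst_kker]; exact hint
  exact (integrable_map_measure hg.aestronglyMeasurable measurable_fst.aemeasurable).mp h

lemma integral_comp_fst {g : ℝ → ℝ} (hg : Measurable g) :
    ∫ p, g p.1 ∂(kker ν) = ∫ a, g a ∂ν := by
  have : ∫ a, g a ∂ν = ∫ a, g a ∂((kker ν).map Prod.fst) := by rw [map_fst_kker]
  rw [this, integral_map measurable_fst.aemeasurable hg.aestronglyMeasurable]

lemma integrable_fst (hint : Integrable (fun a : ℝ => a) ν) :
    Integrable (fun p : ℝ × ℝ => p.1) (kker ν) :=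
  integrable_comp_fst measurable_id hint

lemma integral_fst (hmean : ∫ a, a ∂ν = 1) : ∫ p, p.1 ∂(kker ν) = 1 := by
  have := integral_comp_fst (ν := ν) (g := fun a => a) measurable_id
  rw [this]; exact hmean

lemma integrable_xb (u θ : ℝ) (hint : Integrable (fun a : ℝ => a) ν) :
    Integrable (fun p : ℝ × ℝ => p.1 * bf u θ p) (kker ν) := by
  refine (integrable_fst hint).mono
    ((measurable_fst.mul (bf_meas u θ)).aestronglyMeasurable) ?_
  refine Eventually.of_forall fun p => ?_
  rw [Real.norm_eq_abs, Real.norm_eq_abs, abs_mul]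
  calc |p.1| * |bf u θ p| ≤ |p.1| * 1 := by
        refine mul_le_mul_of_nonneg_left ?_ (abs_nonneg _)
        rw [abs_le]; exact ⟨by linarith [bf_nonneg u θ p], bf_le_one u θ p⟩
    _ = |p.1| := mul_one _

lemma integrable_zf (u θ : ℝ) (hint : Integrable (fun a : ℝ => a) ν) :
    Integrable (zf u θ) (kker ν) :=
  (integrable_fst hint).sub (integrable_xb u θ hint)

/-- The key Fubini computation. -/
lemma integral_xb (u θ : ℝ) (hu : 1 ≤ u) (hθ0 : 0 ≤ θ) (hθ1 : θ ≤ 1)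
    (hint : Integrable (fun a : ℝ => a) ν) :
    ∫ p, p.1 * bf u θ p ∂(kker ν)
      = eI ν (Set.Ioi u) + θ * (eI ν (Set.Ici u) - eI ν (Set.Ioi u)) := by
  classical
  set g1 : ℝ → ℝ := Set.indicator (Set.Ioi u) id with hg1
  set g2 : ℝ → ℝ := Set.indicator ({u} : Set ℝ) id with hg2
  set g3 : ℝ → ℝ := Set.indicator (Set.Iic θ) (fun _ => (1:ℝ)) with hg3
  have hg1m : Measurable g1 := measurable_id.indicator measurableSet_Ioi
  have hg2m : Measurable g2 := measurable_id.indicator (measurableSet_singleton u)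
  have hg3m : Measurable g3 := measurable_const.indicator measurableSet_Iic
  have hdecomp : (fun p : ℝ × ℝ => p.1 * bf u θ p)
      = fun p => g1 p.1 + g2 p.1 * g3 p.2 := by
    funext p
    by_cases h1 : u < p.1
    · have hmem : p ∈ cset u θ := Or.inl h1
      rw [bf_of_mem hmem, mul_one, hg1, hg2,
        Set.indicator_of_mem (by exact h1 : p.1 ∈ Set.Ioi u),
        Set.indicator_of_notMem (by simp [ne_of_gt h1] : p.1 ∉ ({u} : Set ℝ))]
      simp
    · by_cases h2 : p.1 = u
      · by_cases h3 : p.2 ≤ θ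
        · have hmem : p ∈ cset u θ := Or.inr ⟨h2, h3⟩
          rw [bf_of_mem hmem, mul_one, hg1, hg2,
            Set.indicator_of_notMem (by simpa using h1 : p.1 ∉ Set.Ioi u),
            Set.indicator_of_mem (by simpa using h2 : p.1 ∈ ({u} : Set ℝ)), hg3,
            Set.indicator_of_mem (by exact h3 : p.2 ∈ Set.Iic θ)]
          simp
        · have hmem : p ∉ cset u θ := by
            intro hc; rcases hc with hc | hc
            · exact h1 hc
            · exact h3 hc.2
          rw [bf_of_not_mem hmem, mul_zero, hg1, hg2,
            Set.indicator_of_notMem (by simpa using h1 : p.1 ∉ Set.Ioi u),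
            Set.indicator_of_mem (by simpa using h2 : p.1 ∈ ({u} : Set ℝ)), hg3,
            Set.indicator_of_notMem (by exact h3 : p.2 ∉ Set.Iic θ)]
          simp
      · have hmem : p ∉ cset u θ := by
          intro hc; rcases hc with hc | hc
          · exact h1 hc
          · exact h2 hc.1
        rw [bf_of_not_mem hmem, mul_zero, hg1, hg2,
          Set.indicator_of_notMem (by simpa using h1 : p.1 ∉ Set.Ioi u),
          Set.indicator_of_notMem (by simpa using h2 : p.1 ∉ ({u} : Set ℝ))]
        simp
  have hI1 : Integrable (fun p : ℝ × ℝ => g1 p.1) (kker ν) :=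
    integrable_comp_fst hg1m (hint.indicator measurableSet_Ioi)
  have hI2 : Integrable (fun p : ℝ × ℝ => g2 p.1 * g3 p.2) (kker ν) := by
    refine memLp_one_iff_integrable.mp ?_
    refine MemLp.of_bound ((hg2m.comp measurable_fst).mul
      (hg3m.comp measurable_snd)).aestronglyMeasurable (|u|) ?_
    refine Eventually.of_forall fun p => ?_
    rw [Real.norm_eq_abs, abs_mul]
    have h2 : |g2 p.1| ≤ |u| := by
      rw [hg2]
      by_cases h : p.1 ∈ ({u} : Set ℝ)
      · rw [Set.indicator_of_mem h]
        simp only [Set.mem_singleton_iff] at h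
        rw [h]; simp
      · rw [Set.indicator_of_notMem h]; simp
    have h3 : |g3 p.2| ≤ 1 := by
      rw [hg3]
      by_cases h : p.2 ∈ Set.Iic θ
      · rw [Set.indicator_of_mem h]; simp
      · rw [Set.indicator_of_notMem h]; simp
    calc |g2 p.1| * |g3 p.2| ≤ |u| * 1 :=
          mul_le_mul h2 h3 (abs_nonneg _) (abs_nonneg _)
      _ = |u| := mul_one _
  rw [hdecomp, integral_add hI1 hI2]
  have e1 : ∫ p, g1 p.1 ∂(kker ν) = eI ν (Set.Ioi u) := integral_comp_fst hg1m
  have e2 : ∫ p : ℝ × ℝ, g2 p.1 * g3 p.2 ∂(kker ν) = (∫ a, g2 a ∂ν) * (∫ b, g3 b ∂UU) := by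
    rw [kker]; exact integral_prod_mul g2 g3
  have e3 : ∫ b, g3 b ∂UU = θ := by
    rw [hg3, integral_indicator_const (1:ℝ) measurableSet_Iic]
    rw [UU, Measure.real, Measure.restrict_apply measurableSet_Iic]
    have : Set.Iic θ ∩ Set.Icc (0:ℝ) 1 = Set.Icc 0 θ := by
      ext a
      simp only [Set.mem_inter_iff, Set.mem_Iic, Set.mem_Icc]
      constructor
      · rintro ⟨h1, h2, h3⟩; exact ⟨h2, h1⟩
      · rintro ⟨h1, h2⟩; exact ⟨h2, h1, le_trans h2 hθ1⟩
    rw [this, Real.volume_Icc, ENNReal.toReal_ofReal (by linarith), smul_eq_mul, mul_one]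
    ring
  have e4 : ∫ a, g2 a ∂ν = eI ν (Set.Ici u) - eI ν (Set.Ioi u) := by
    have hdec : g2 = fun a => Set.indicator (Set.Ici u) id a - Set.indicator (Set.Ioi u) id a := by
      funext a
      rcases lt_trichotomy a u with h | h | h
      · rw [hg2, Set.indicator_of_notMem (by simp [ne_of_lt h]),
          Set.indicator_of_notMem (by simp [not_le.mpr h] : a ∉ Set.Ici u),
          Set.indicator_of_notMem (by simp [not_lt.mpr h.le] : a ∉ Set.Ioi u)]
        norm_num
      · subst h
        rw [hg2, Set.indicator_of_mem (by simp : a ∈ ({a} : Set ℝ)),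
          Set.indicator_of_mem (by simp : a ∈ Set.Ici a),
          Set.indicator_of_notMem (by simp : a ∉ Set.Ioi a)]
        simp
      · rw [hg2, Set.indicator_of_notMem (by simp [ne_of_gt h]),
          Set.indicator_of_mem (by simp [h.le] : a ∈ Set.Ici u),
          Set.indicator_of_mem (by simp [h] : a ∈ Set.Ioi u)]
        simp
    rw [hdec]
    have h1 : Integrable (Set.indicator (Set.Ici u) (id : ℝ → ℝ)) ν :=
      hint.indicator measurableSet_Ici
    have h2 : Integrable (Set.indicator (Set.Ioi u) (id : ℝ → ℝ)) ν :=
      hint.indicator measurableSet_Ioi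
    exact integral_sub h1 h2
  rw [e1, e2, e3, e4]
  ring

end KK


section PiLevel
variable {α : Type*} [MeasurableSpace α] {κ : Measure α} [IsProbabilityMeasure κ] {n : ℕ}

lemma ae_eval {C : ℝ} {G : α → ℝ} (hbd : ∀ᵐ a ∂κ, ‖G a‖ ≤ C) (i : Fin n) :
    ∀ᵐ f ∂(Measure.pi fun _ : Fin n => κ), ‖G (f i)‖ ≤ C := by
  have hnull : κ {a | ¬ ‖G a‖ ≤ C} = 0 := ae_iff.mp hbd
  have h2 := Measure.pi_eval_preimage_null (fun _ : Fin n => κ) (i := i) hnull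
  rw [ae_iff]
  exact h2

lemma integral_eval (G : α → ℝ) (hG : Measurable G) (i : Fin n) :
    ∫ f, G (f i) ∂(Measure.pi fun _ : Fin n => κ) = ∫ a, G a ∂κ := by
  have h : ∫ a, G a ∂κ
      = ∫ a, G a ∂((Measure.pi fun _ : Fin n => κ).map (Function.eval i)) := by
    rw [map_eval_pi]
  rw [h, integral_map (measurable_pi_apply i).aemeasurable hG.aestronglyMeasurable]

lemma pi_sum_chebyshev (G : α → ℝ) (hG : Measurable G) (C : ℝ)
    (hbd : ∀ᵐ a ∂κ, ‖G a‖ ≤ C) {c : ℝ} (hc : 0 < c) :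
    (Measure.pi fun _ : Fin n => κ)
        {f | c ≤ |(∑ i, G (f i)) - (n : ℝ) * ∫ a, G a ∂κ|}
      ≤ ENNReal.ofReal (((n : ℝ) * variance G κ) / c ^ 2) := by
  classical
  set P : Measure (Fin n → α) := Measure.pi fun _ : Fin n => κ with hP
  have hmemi : ∀ i : Fin n, MemLp (fun f : Fin n → α => G (f i)) 2 P := fun i =>
    MemLp.of_bound ((hG.comp (measurable_pi_apply i)).aestronglyMeasurable) C (ae_eval hbd i)
  have hmemG : MemLp G 2 κ := MemLp.of_bound hG.aestronglyMeasurable C hbd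
  have hsq_i : ∀ i : Fin n, ∫ f, (G (f i)) ^ 2 ∂P = ∫ a, (G a) ^ 2 ∂κ := fun i =>
    integral_eval (fun a => (G a) ^ 2) (hG.pow_const 2) i
  have hmean_i : ∀ i : Fin n, ∫ f, G (f i) ∂P = ∫ a, G a ∂κ := fun i =>
    integral_eval G hG i
  have hvar_i : ∀ i : Fin n, variance (fun f : Fin n → α => G (f i)) P = variance G κ := by
    intro i
    rw [variance_eq_sub (hmemi i), variance_eq_sub hmemG]
    simp only [Pi.pow_apply]
    rw [hsq_i i, hmean_i i]
  set X : (Fin n → α) → ℝ := ∑ i : Fin n, (fun f : Fin n → α => G (f i)) with hX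
  have hXapp : ∀ f, X f = ∑ i, G (f i) := by
    intro f; rw [hX, Finset.sum_apply]
  have hXmem : MemLp X 2 P := memLp_finset_sum' _ fun i _ => hmemi i
  have hpair : Set.Pairwise ↑(Finset.univ : Finset (Fin n))
      fun i j => IndepFun (fun f : Fin n → α => G (f i)) (fun f : Fin n → α => G (f j)) P := by
    intro i _ j _ hij
    exact (indep_eval κ hij).comp hG hG
  have hVar : variance X P = (n : ℝ) * variance G κ := by
    rw [hX, IndepFun.variance_sum (fun i _ => hmemi i) hpair]
    simp only [hvar_i]
    rw [Finset.sum_const, Finset.card_univ, Fintype.card_fin, nsmul_eq_mul]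
  have hMean : ∫ f, X f ∂P = (n : ℝ) * ∫ a, G a ∂κ := by
    have : ∫ f, X f ∂P = ∫ f, ∑ i, G (f i) ∂P := by
      congr 1; funext f; exact hXapp f
    rw [this, integral_finset_sum _ fun i _ => (hmemi i).integrable one_le_two]
    simp only [hmean_i]
    rw [Finset.sum_const, Finset.card_univ, Fintype.card_fin, nsmul_eq_mul]
  have hcheb := meas_ge_le_variance_div_sq (μ := P) hXmem hc
  have hsets : {f : Fin n → α | c ≤ |(∑ i, G (f i)) - (n : ℝ) * ∫ a, G a ∂κ|}
      = {f | c ≤ |X f - ∫ f', X f' ∂P|} := by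
    ext f
    rw [Set.mem_setOf_eq, Set.mem_setOf_eq, hXapp f, hMean]
  rw [hsets, hVar] at *
  exact hcheb


end PiLevel

end Statement8Aux


open Statement8Aux

/-- For `x₁,…,xₙ` i.i.d. from a distribution `ν` on the nonnegative reals with mean `1`, and any
`v ≥ 0`, `Pr[Δ(x₁,…,xₙ) ≥ v] ≤ 2/v + 4n/v²`. -/
theorem statement8 {Ω : Type*} [MeasurableSpace Ω] (μ : Measure Ω) [IsProbabilityMeasure μ]
    (n : ℕ) (ν : Measure ℝ) [IsProbabilityMeasure ν]
    (hsupp : ν (Set.Iio 0) = 0) (hmean : ∫ t, t ∂ν = 1)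
    (x : Fin n → Ω → ℝ) (hmeas : ∀ i, Measurable (x i))
    (hind : iIndepFun x μ)
    (hdist : ∀ i, μ.map (x i) = ν) :
    ∀ v : ℝ, 0 ≤ v →
      μ {ω | v ≤ (Delta n (fun i => x i ω) : ℝ)}
        ≤ 2 / ENNReal.ofReal v + 4 * n / (ENNReal.ofReal v) ^ 2 := by
  classical
  intro v hv
  rcases eq_or_lt_of_le hv with hv0 | hv0
  · -- v = 0 : right-hand side is infinite
    rw [← hv0]
    simp only [ENNReal.ofReal_zero]
    rw [ENNReal.div_zero (by norm_num : (2:ℝ≥0∞) ≠ 0)]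
    exact le_trans le_top le_self_add
  by_cases hvn : (n : ℝ) < v
  · -- v > n : left-hand side is zero
    have hempty : {ω | v ≤ (Delta n (fun i => x i ω) : ℝ)} = ∅ := by
      ext ω
      simp only [Set.mem_setOf_eq, Set.mem_empty_iff_false, iff_false, not_le]
      exact lt_of_le_of_lt (Nat.cast_le.mpr (delta_le_n n _)) hvn
    rw [hempty, measure_empty]
    exact bot_le
  push_neg at hvn
  -- main case : 0 < v ≤ n
  have hnR : (0:ℝ) < n := lt_of_lt_of_le hv0 hvn
  have hn0 : 0 < n := by exact_mod_cast hnR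
  set t : ℕ := ⌈v⌉₊ with ht
  have htv : v ≤ (t : ℝ) := Nat.le_ceil v
  have htn : t ≤ n := Nat.ceil_le.mpr hvn
  have htpos : 0 < t := Nat.ceil_pos.mpr hv0
  -- integrability and positivity facts about ν
  have hint : Integrable (fun a : ℝ => a) ν := by
    by_contra h
    rw [integral_undef h] at hmean
    norm_num at hmean
  have hae : ∀ᵐ a ∂ν, 0 ≤ a := by
    rw [ae_iff]
    have : {a : ℝ | ¬ 0 ≤ a} = Set.Iio 0 := by ext a; simp [not_le]
    rw [this]; exact hsupp
  -- choose the threshold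
  have hc : (0:ℝ) < v / (2 * n) := by positivity
  obtain ⟨u, θ, hu1, hθ0, hθ1, hle, halt⟩ := exists_threshold hint hae hmean hc
  have hu0 : (0:ℝ) < u := lt_of_lt_of_le one_pos hu1
  set s := Real.sqrt u with hs
  have hs2 : s ^ 2 = u := Real.sq_sqrt (le_of_lt hu0)
  have hs0 : 0 ≤ s := Real.sqrt_nonneg u
  have hs1 : 1 ≤ s := by nlinarith
  set ETH : ℝ := eI ν (Set.Ioi u) + θ * (eI ν (Set.Ici u) - eI ν (Set.Ioi u)) with hETH
  have hETH0 : 0 ≤ ETH := by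
    have h1 := eI_nonneg hae (Set.Ioi u)
    have h2 := eI_mono hint hae measurableSet_Ioi measurableSet_Ici
      (Set.Ioi_subset_Ici_self (a := u))
    nlinarith
  -- κ-level quantities
  set K : Measure (ℝ × ℝ) := kker ν with hK
  have hxb : ∫ p, p.1 * bf u θ p ∂K = ETH := integral_xb u θ hu1 hθ0 hθ1 hint
  have hbmem : MemLp (bf u θ) 2 K := by
    refine MemLp.of_bound (bf_meas u θ).aestronglyMeasurable 1 (Eventually.of_forall fun p => ?_)
    rw [Real.norm_eq_abs, abs_le]
    exact ⟨by linarith [bf_nonneg u θ p], bf_le_one u θ p⟩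
  have hbint : Integrable (bf u θ) K := hbmem.integrable one_le_two
  set B : ℝ := ∫ p, bf u θ p ∂K with hB
  have hB0 : 0 ≤ B := integral_nonneg (bf_nonneg u θ)
  have huB : u * B ≤ ETH := by
    rw [← hxb, hB, ← integral_const_mul]
    exact integral_mono (hbint.const_mul u) (integrable_xb u θ hint)
      (ub_le_xb (le_of_lt hu0))
  have hnB : (n : ℝ) * B ≤ v / 2 := by
    have hsu : s ≤ u := by nlinarith [hs2, hs1, hs0]
    have h1 : s * B ≤ u * B := mul_le_mul_of_nonneg_right hsu hB0
    have h2 : u * B ≤ s * (v / (2 * n)) := le_trans huB hle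
    have h3 : B ≤ v / (2 * n) := by
      have hsp : 0 < s := lt_of_lt_of_le one_pos hs1
      have : s * B ≤ s * (v / (2 * n)) := le_trans h1 h2
      exact le_of_mul_le_mul_left this hsp
    calc (n:ℝ) * B ≤ (n:ℝ) * (v / (2 * n)) := by
          exact mul_le_mul_of_nonneg_left h3 (le_of_lt hnR)
      _ = v / 2 := by field_simp
  have hbvar : variance (bf u θ) K ≤ B := by
    rw [variance_eq_sub hbmem]
    have hsq : ∫ p, bf u θ p ^ 2 ∂K = B := by
      rw [hB]
      congr 1
      funext p
      exact bf_sq u θ p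
    simp only [Pi.pow_apply]
    rw [hsq]
    nlinarith [sq_nonneg (∫ p, bf u θ p ∂K)]
  -- z-side facts
  have hKae : ∀ᵐ p ∂K, 0 ≤ p.1 := kker_ae_nonneg hsupp
  have hzmem : MemLp (zf u θ) 2 K := by
    refine MemLp.of_bound (zf_meas u θ).aestronglyMeasurable u ?_
    filter_upwards [hKae] with p hp
    rw [Real.norm_eq_abs, abs_le]
    exact ⟨by linarith [zf_nonneg (u := u) (θ := θ) hp], zf_le (le_of_lt hu0) p⟩
  have hzint : Integrable (zf u θ) K := hzmem.integrable one_le_two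
  have hEz : ∫ p, zf u θ p ∂K = 1 - ETH := by
    have : ∫ p, zf u θ p ∂K
        = ∫ p, p.1 ∂K - ∫ p, p.1 * bf u θ p ∂K := by
      rw [← integral_sub (integrable_fst hint) (integrable_xb u θ hint)]
      rfl
    rw [this, integral_fst hmean, hxb]
  have hzvar : variance (zf u θ) K ≤ u := by
    rw [variance_eq_sub hzmem]
    have hsqle : ∫ p, zf u θ p ^ 2 ∂K ≤ u * (1 - ETH) := by
      have h1 : ∫ p, zf u θ p ^ 2 ∂K ≤ ∫ p, u * zf u θ p ∂K := by
        refine integral_mono_ae hzmem.integrable_sq (hzint.const_mul u) ?_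
        filter_upwards [hKae] with p hp
        have hz0 : 0 ≤ zf u θ p := zf_nonneg hp
        have hzu : zf u θ p ≤ u := zf_le (le_of_lt hu0) p
        nlinarith
      rw [integral_const_mul, hEz] at h1
      exact h1
    have hETH1 : ETH ≤ 1 := by
      have h2 : ∫ p, zf u θ p ∂K ≥ 0 := integral_nonneg_of_ae (by
        filter_upwards [hKae] with p hp
        exact zf_nonneg hp)
      rw [hEz] at h2; linarith
    simp only [Pi.pow_apply]
    nlinarith [sq_nonneg (∫ p, zf u θ p ∂K)]
  -- probability space on the product
  set P : Measure (Fin n → ℝ × ℝ) := Measure.pi fun _ : Fin n => K with hP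
  -- Chebyshev for the count event
  have hcA : (0:ℝ) < (t : ℝ) - (n : ℝ) * B := by linarith [htv, hnB, hv0]
  have hchebA := pi_sum_chebyshev (κ := K) (n := n) (bf u θ) (bf_meas u θ) 1
    (Eventually.of_forall fun p => by
      rw [Real.norm_eq_abs, abs_le]
      exact ⟨by linarith [bf_nonneg u θ p], bf_le_one u θ p⟩) hcA
  have hAsub : {f : Fin n → ℝ × ℝ | (t:ℝ) ≤ ∑ i, bf u θ (f i)}
      ⊆ {f | (t:ℝ) - (n:ℝ) * B ≤ |(∑ i, bf u θ (f i)) - (n : ℝ) * ∫ p, bf u θ p ∂K|} := by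
    intro f hf
    rw [Set.mem_setOf_eq] at hf ⊢
    rw [← hB]
    have : (t:ℝ) - (n:ℝ) * B ≤ (∑ i, bf u θ (f i)) - (n:ℝ) * B := by linarith
    exact le_trans this (le_abs_self _)
  have hAbound : P {f | (t:ℝ) ≤ ∑ i, bf u θ (f i)} ≤ ENNReal.ofReal (2 / v) := by
    refine le_trans (measure_mono hAsub)
      (le_trans hchebA (ENNReal.ofReal_le_ofReal ?_))
    · have hnum : (n:ℝ) * variance (bf u θ) K ≤ v / 2 :=
        le_trans (mul_le_mul_of_nonneg_left hbvar (le_of_lt hnR)) hnB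
      have hden : (v/2)^2 ≤ ((t:ℝ) - (n:ℝ) * B)^2 := by
        have h1 : v/2 ≤ (t:ℝ) - (n:ℝ) * B := by linarith
        have h2 : (0:ℝ) ≤ v/2 := by linarith
        nlinarith
      have hvar0 : 0 ≤ (n:ℝ) * variance (bf u θ) K :=
        mul_nonneg (le_of_lt hnR) (variance_nonneg _ _)
      calc (n:ℝ) * variance (bf u θ) K / ((t:ℝ) - (n:ℝ) * B)^2
          ≤ (v/2) / ((v/2)^2) := by
            apply div_le_div₀ (by positivity) hnum (by positivity) hden
        _ = 2 / v := by field_simp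
  -- the z-event bound
  have hBbound : P {f | (n:ℝ) < ∑ i, zf u θ (f i)} ≤ ENNReal.ofReal (4 * n / v ^ 2) := by
    rcases halt with hge | ⟨hueq, hθeq⟩
    · -- main branch: n·ETH = s·v/2 is the deviation
      have hETHeq : ETH = s * (v / (2 * n)) := le_antisymm hle hge
      have hcB : (0:ℝ) < (n:ℝ) * ETH := by
        rw [hETHeq]
        have hsp : 0 < s := lt_of_lt_of_le one_pos hs1
        positivity
      have hchebB := pi_sum_chebyshev (κ := K) (n := n) (zf u θ) (zf_meas u θ) u
        (by
          filter_upwards [hKae] with p hp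
          rw [Real.norm_eq_abs, abs_le]
          exact ⟨by linarith [zf_nonneg (u := u) (θ := θ) hp], zf_le (le_of_lt hu0) p⟩) hcB
      have hBsub : {f : Fin n → ℝ × ℝ | (n:ℝ) < ∑ i, zf u θ (f i)}
          ⊆ {f | (n:ℝ) * ETH ≤ |(∑ i, zf u θ (f i)) - (n : ℝ) * ∫ p, zf u θ p ∂K|} := by
        intro f hf
        rw [Set.mem_setOf_eq] at hf ⊢
        rw [hEz]
        have : (n:ℝ) * ETH ≤ (∑ i, zf u θ (f i)) - (n:ℝ) * (1 - ETH) := by nlinarith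
        exact le_trans this (le_abs_self _)
      refine le_trans (measure_mono hBsub) (le_trans hchebB ?_)
      refine ENNReal.ofReal_le_ofReal ?_
      have hnum : (n:ℝ) * variance (zf u θ) K ≤ (n:ℝ) * u :=
        mul_le_mul_of_nonneg_left hzvar (le_of_lt hnR)
      have hdeneq : ((n:ℝ) * ETH)^2 = u * v^2 / 4 := by
        rw [hETHeq]
        field_simp
        nlinarith [hs2]
      calc (n:ℝ) * variance (zf u θ) K / ((n:ℝ) * ETH)^2
          ≤ (n:ℝ) * u / ((n:ℝ) * ETH)^2 := by
            have hpos : (0:ℝ) < ((n:ℝ) * ETH)^2 := by positivity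
            exact (div_le_div_iff_of_pos_right hpos).mpr hnum
        _ = (n:ℝ) * u / (u * v^2/4) := by rw [hdeneq]
        _ = 4 * n / v ^ 2 := by field_simp
    · -- degenerate branch: the event is empty
      have hzero : {f : Fin n → ℝ × ℝ | (n:ℝ) < ∑ i, zf u θ (f i)} = ∅ := by
        ext f
        simp only [Set.mem_setOf_eq, Set.mem_empty_iff_false, iff_false, not_lt]
        calc ∑ i, zf u θ (f i) ≤ ∑ _i : Fin n, (1:ℝ) := by
              refine Finset.sum_le_sum fun i _ => ?_
              have := zf_le (u := u) (θ := θ) (by linarith) (f i)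
              rw [hueq] at this ⊢
              exact this
          _ = n := by simp
      rw [hzero, measure_empty]
      exact bot_le
  -- pointwise inclusion of the target event
  set bad : Set (Fin n → ℝ × ℝ) := ⋃ i : Fin n, Function.eval i ⁻¹' {p : ℝ × ℝ | p.1 < 0}
    with hbad
  have hincl : {f : Fin n → ℝ × ℝ | v ≤ (Delta n (fun i => (f i).1) : ℝ)}
      ⊆ ({f | (t:ℝ) ≤ ∑ i, bf u θ (f i)} ∪ {f | (n:ℝ) < ∑ i, zf u θ (f i)}) ∪ bad := by
    intro f hf
    rw [Set.mem_setOf_eq] at hf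
    by_cases hgood : ∀ i, 0 ≤ (f i).1
    swap
    · right
      push_neg at hgood
      obtain ⟨i, hi⟩ := hgood
      exact Set.mem_iUnion.mpr ⟨i, hi⟩
    left
    by_contra hno
    rw [Set.mem_union] at hno
    push_neg at hno
    obtain ⟨hno1, hno2⟩ := hno
    rw [Set.mem_setOf_eq, not_le] at hno1
    rw [Set.mem_setOf_eq, not_lt] at hno2
    set F : Finset (Fin n) := Finset.univ.filter (fun i => f i ∈ cset u θ) with hF
    have hFsum : ((F.card : ℕ) : ℝ) = ∑ i, bf u θ (f i) := by
      rw [hF]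
      rw [← Finset.sum_boole]
      refine Finset.sum_congr rfl fun i _ => ?_
      by_cases h : f i ∈ cset u θ
      · rw [if_pos h, bf_of_mem h]
      · rw [if_neg h, bf_of_not_mem h]
    have hFcard : F.card < t := by
      have : ((F.card : ℕ) : ℝ) < (t : ℝ) := by rw [hFsum]; exact hno1
      exact_mod_cast this
    have hFle : F.card ≤ t - 1 := by omega
    obtain ⟨I, hFI, hIcard⟩ := Finset.exists_superset_card_eq hFle
      (by rw [Fintype.card_fin]; omega)
    have hsum : ∑ i ∈ Iᶜ, (f i).1 ≤ (n : ℝ) := by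
      have he : ∑ i ∈ Iᶜ, (f i).1 = ∑ i ∈ Iᶜ, zf u θ (f i) := by
        refine Finset.sum_congr rfl fun i hi => ?_
        have hiI : i ∉ I := Finset.mem_compl.mp hi
        have hiF : i ∉ F := fun hmem => hiI (hFI hmem)
        have hic : f i ∉ cset u θ := by
          intro hmem
          exact hiF (Finset.mem_filter.mpr ⟨Finset.mem_univ i, hmem⟩)
        rw [zf_of_not_mem hic]
      rw [he]
      refine le_trans (Finset.sum_le_sum_of_subset_of_nonneg (Finset.subset_univ _)
        (fun i _ _ => zf_nonneg (hgood i))) hno2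
    have hdle : Delta n (fun i => (f i).1) ≤ t - 1 := by
      have := delta_le_card n (fun i => (f i).1) I hsum
      rwa [hIcard] at this
    have hdge : t ≤ Delta n (fun i => (f i).1) := Nat.ceil_le.mpr hf
    omega
  -- bad has measure zero
  have hbadnull : P bad = 0 := by
    rw [hbad]
    refine measure_iUnion_null fun i => ?_
    have hnull : K {p : ℝ × ℝ | p.1 < 0} = 0 := by
      have : {p : ℝ × ℝ | p.1 < 0} = Prod.fst ⁻¹' Set.Iio 0 := rfl
      rw [this, ← Measure.map_apply measurable_fst measurableSet_Iio, hK, map_fst_kker]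
      exact hsupp
    exact Measure.pi_eval_preimage_null _ hnull
  -- reduction to the canonical space
  set X0 : Ω → (Fin n → ℝ) := fun ω i => x i ω with hX0
  have hX0m : Measurable X0 := measurable_pi_lambda _ hmeas
  have hD : MeasurableSet {y : Fin n → ℝ | v ≤ ((Delta n y : ℕ) : ℝ)} :=
    target_measurableSet n v
  have hFSTm : Measurable (fun f : Fin n → ℝ × ℝ => fun i => (f i).1) :=
    measurable_pi_lambda _ fun i => measurable_fst.comp (measurable_pi_apply i)
  have hmap1 : μ.map X0 = Measure.pi fun _ : Fin n => ν := by
    refine (Measure.pi_eq fun sets hsets => ?_).symm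
    rw [Measure.map_apply hX0m (MeasurableSet.univ_pi hsets)]
    have hpre : X0 ⁻¹' (Set.pi Set.univ sets)
        = ⋂ i ∈ (Finset.univ : Finset (Fin n)), x i ⁻¹' sets i := by
      ext ω
      simp [Set.mem_pi, hX0]
    rw [hpre, hind.measure_inter_preimage_eq_mul Finset.univ (fun i _ => hsets i)]
    refine Finset.prod_congr rfl fun i _ => ?_
    rw [← hdist i, Measure.map_apply (hmeas i) (hsets i)]
  have hmap2 : Measure.pi (fun _ : Fin n => ν)
      = P.map (fun f : Fin n → ℝ × ℝ => fun i => (f i).1) := by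
    refine Measure.pi_eq fun sets hsets => ?_
    rw [Measure.map_apply hFSTm (MeasurableSet.univ_pi hsets)]
    have hpre : (fun f : Fin n → ℝ × ℝ => fun i => (f i).1) ⁻¹' (Set.pi Set.univ sets)
        = Set.pi Set.univ (fun i => Prod.fst ⁻¹' (sets i)) := by
      ext f
      simp [Set.mem_pi]
    rw [hpre, hP, Measure.pi_pi]
    refine Finset.prod_congr rfl fun i _ => ?_
    rw [← Measure.map_apply measurable_fst (hsets i), hK, map_fst_kker]
  have hreduce : μ {ω | v ≤ (Delta n (fun i => x i ω) : ℝ)}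
      = P {f : Fin n → ℝ × ℝ | v ≤ (Delta n (fun i => (f i).1) : ℝ)} := by
    have e1 : μ {ω | v ≤ (Delta n (fun i => x i ω) : ℝ)}
        = (μ.map X0) {y : Fin n → ℝ | v ≤ ((Delta n y : ℕ) : ℝ)} := by
      rw [Measure.map_apply hX0m hD]
      rfl
    have e2 : (P.map (fun f : Fin n → ℝ × ℝ => fun i => (f i).1))
        {y : Fin n → ℝ | v ≤ ((Delta n y : ℕ) : ℝ)}
        = P {f : Fin n → ℝ × ℝ | v ≤ (Delta n (fun i => (f i).1) : ℝ)} := by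
      rw [Measure.map_apply hFSTm hD]
      rfl
    rw [e1, hmap1, hmap2, e2]
  -- put everything together
  have hmain : μ {ω | v ≤ (Delta n (fun i => x i ω) : ℝ)}
      ≤ ENNReal.ofReal (2 / v) + ENNReal.ofReal (4 * n / v ^ 2) := by
    rw [hreduce]
    refine le_trans (measure_mono hincl) ?_
    refine le_trans (measure_union_le _ _) ?_
    rw [hbadnull, add_zero]
    refine le_trans (measure_union_le _ _) ?_
    exact add_le_add hAbound hBbound
  refine le_trans hmain ?_
  have hv2 : ENNReal.ofReal (2 / v) = 2 / ENNReal.ofReal v := by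
    rw [ENNReal.ofReal_div_of_pos hv0]
    norm_num
  have hv4 : ENNReal.ofReal (4 * n / v ^ 2) = 4 * n / (ENNReal.ofReal v) ^ 2 := by
    rw [ENNReal.ofReal_div_of_pos (by positivity), ENNReal.ofReal_pow hv,
      ENNReal.ofReal_mul (by norm_num)]
    norm_num [ENNReal.ofReal_natCast]
  rw [hv2, hv4]
end

section
/- Let D be a distribution on X, m ∈ ℕ, and draw S = (S₁,...,S_m) i.i.d. from D. Let g be any random variable on the same probability space taking values in a finite set G, and define D_goal(g₀) := E[Unif(S) ∣ g = g₀], the average empirical distribution conditioned on g = g₀. Then E_g[ d_TV(D, D_goal(g)) ] ≤ √( ln|G| / (2m) ). -/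
open Finset
open scoped Classical

noncomputable section

/-- Total variation distance between two pmfs on a finite space. -/
noncomputable def TV {X : Type*} [Fintype X] (q r : X → ℝ) : ℝ :=
  (∑ x, |q x - r x|) / 2

/-- The empirical (uniform) distribution of the multiset `s = (s₁,…,s_m)`. -/
noncomputable def emp {X : Type*} [Fintype X] (m : ℕ) (s : Fin m → X) : X → ℝ :=
  fun x => ((univ.filter fun i => s i = x).card : ℝ) / m

section
open Real

lemma hoeffding_aux {μ : ℝ} (h0 : 0 ≤ μ) (h1 : μ ≤ 1) (t : ℝ) :
    1 - μ + μ * exp t ≤ exp (μ * t + t ^ 2 / 8) := by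
  set g : ℝ → ℝ := fun u => 1 - μ + μ * exp u with hgdef
  have hg : ∀ u, 0 < g u := by
    intro u
    rcases eq_or_lt_of_le h0 with h | h
    · simp [hgdef, ← h]
    · have := mul_pos h (exp_pos u); simp only [hgdef]; linarith
  set φ : ℝ → ℝ := fun u => μ * exp u / g u with hφdef
  set f : ℝ → ℝ := fun u => log (g u) - (μ * u + u ^ 2 / 8) with hfdef
  set F : ℝ → ℝ := fun u => φ u - μ - u / 4 with hFdef
  have hgd : ∀ u, HasDerivAt g (μ * exp u) u := by
    intro u
    exact ((Real.hasDerivAt_exp u).const_mul μ).const_add (1 - μ)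
  have hpoly : ∀ u : ℝ, HasDerivAt (fun u : ℝ => μ * u + u ^ 2 / 8) (μ + u / 4) u := by
    intro u
    have h1' : HasDerivAt (fun x : ℝ => μ * x) μ u := by
      simpa using (hasDerivAt_id u).const_mul μ
    have h2' : HasDerivAt (fun x : ℝ => x ^ 2 / 8) (u / 4) u := by
      have := (hasDerivAt_pow 2 u).div_const 8
      refine this.congr_deriv ?_; norm_num; ring
    exact h1'.add h2'
  have hfd : ∀ u, HasDerivAt f (F u) u := by
    intro u
    have h₁ := (hgd u).log (ne_of_gt (hg u))
    have := h₁.sub (hpoly u)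
    refine this.congr_deriv ?_
    simp only [hFdef, hφdef]; ring
  have hFd : ∀ u, HasDerivAt F (φ u * (1 - φ u) - 1 / 4) u := by
    intro u
    have hnum : HasDerivAt (fun u => μ * exp u) (μ * exp u) u :=
      (Real.hasDerivAt_exp u).const_mul μ
    have hdiv := hnum.div (hgd u) (ne_of_gt (hg u))
    have hφ' : HasDerivAt φ ((μ * exp u * g u - μ * exp u * (μ * exp u)) / g u ^ 2) u := hdiv
    have h₂ : HasDerivAt (fun u : ℝ => φ u - μ - u / 4)
        ((μ * exp u * g u - μ * exp u * (μ * exp u)) / g u ^ 2 - 1 / 4) u := by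
      have hc : HasDerivAt (fun u : ℝ => u / 4) (1 / 4 : ℝ) u := by
        simpa using (hasDerivAt_id u).div_const 4
      exact (hφ'.sub_const μ).sub hc
    convert h₂ using 1
    have hgu := ne_of_gt (hg u)
    simp only [hφdef]; field_simp
  have hFanti : Antitone F := by
    apply antitone_of_deriv_nonpos (fun u => (hFd u).differentiableAt)
    intro u
    rw [(hFd u).deriv]
    nlinarith [sq_nonneg (φ u - 1 / 2)]
  have hF0 : F 0 = 0 := by
    simp [hFdef, hφdef, hgdef]
  have hf0 : f 0 = 0 := by
    simp [hfdef, hgdef]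
  have hft : f t ≤ 0 := by
    rcases le_total 0 t with ht | ht
    · have hanti : AntitoneOn f (Set.Ici 0) := by
        apply antitoneOn_of_deriv_nonpos (convex_Ici 0)
        · exact fun u _ => ((hfd u).continuousAt).continuousWithinAt
        · exact fun u _ => ((hfd u).differentiableAt).differentiableWithinAt
        · intro u hu
          rw [(hfd u).deriv]
          have : (0:ℝ) ≤ u := le_of_lt (by simpa using hu)
          calc F u ≤ F 0 := hFanti this
            _ = 0 := hF0
      calc f t ≤ f 0 := hanti (Set.self_mem_Ici) (Set.mem_Ici.2 ht) ht
        _ = 0 := hf0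
    · have hmono : MonotoneOn f (Set.Iic 0) := by
        apply monotoneOn_of_deriv_nonneg (convex_Iic 0)
        · exact fun u _ => ((hfd u).continuousAt).continuousWithinAt
        · exact fun u _ => ((hfd u).differentiableAt).differentiableWithinAt
        · intro u hu
          rw [(hfd u).deriv]
          have hu0 : u ≤ (0:ℝ) := le_of_lt (by simpa using hu)
          calc (0:ℝ) = F 0 := hF0.symm
            _ ≤ F u := hFanti hu0
      calc f t ≤ f 0 := hmono (Set.mem_Iic.2 ht) Set.self_mem_Iic ht
        _ = 0 := hf0
  have hlog : log (g t) ≤ μ * t + t ^ 2 / 8 := by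
    have := hft; simp only [hfdef] at this; linarith
  calc 1 - μ + μ * exp t = g t := rfl
    _ = exp (log (g t)) := (exp_log (hg t)).symm
    _ ≤ exp (μ * t + t ^ 2 / 8) := exp_le_exp.2 hlog

end

open Finset

/-- Jensen for exp. -/
lemma jensen_exp {Ω : Type*} [Fintype Ω] (p : Ω → ℝ) (hp0 : ∀ ω, 0 ≤ p ω)
    (hp1 : ∑ ω, p ω = 1) (f : Ω → ℝ) :
    Real.exp (∑ ω, p ω * f ω) ≤ ∑ ω, p ω * Real.exp (f ω) := by
  have := convexOn_exp.map_sum_le (t := univ) (w := p) (p := f)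
    (fun i _ => hp0 i) hp1 (fun i _ => Set.mem_univ _)
  simpa [smul_eq_mul] using this

/-- Hoeffding's lemma, one sample. -/
lemma hoeffding_single {X : Type*} [Fintype X] (D : X → ℝ) (hD0 : ∀ x, 0 ≤ D x)
    (hD1 : ∑ x, D x = 1) (χ : X → ℝ) (hχ0 : ∀ x, 0 ≤ χ x) (hχ1 : ∀ x, χ x ≤ 1) (t : ℝ) :
    ∑ x, D x * Real.exp (t * (χ x - ∑ y, D y * χ y)) ≤ Real.exp (t ^ 2 / 8) := by
  set μ := ∑ y, D y * χ y with hμ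
  have hμ0 : 0 ≤ μ := Finset.sum_nonneg fun y _ => mul_nonneg (hD0 y) (hχ0 y)
  have hμ1 : μ ≤ 1 := by
    calc μ ≤ ∑ y, D y := Finset.sum_le_sum fun y _ => by
          nlinarith [hD0 y, hχ0 y, hχ1 y]
      _ = 1 := hD1
  have key : ∀ x, Real.exp (t * χ x) ≤ (1 - χ x) + χ x * Real.exp t := by
    intro x
    have := convexOn_exp.2 (Set.mem_univ (0:ℝ)) (Set.mem_univ t)
      (show (0:ℝ) ≤ 1 - χ x by linarith [hχ1 x]) (hχ0 x) (by ring)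
    simpa [smul_eq_mul, Real.exp_zero, mul_comm] using this
  have step1 : ∑ x, D x * Real.exp (t * (χ x - μ)) ≤
      Real.exp (-(t * μ)) * ((1 - μ) + μ * Real.exp t) := by
    have : ∀ x, D x * Real.exp (t * (χ x - μ)) ≤
        Real.exp (-(t * μ)) * (D x * ((1 - χ x) + χ x * Real.exp t)) := by
      intro x
      have h1 : Real.exp (t * (χ x - μ)) = Real.exp (-(t * μ)) * Real.exp (t * χ x) := by
        rw [← Real.exp_add]; ring_nf
      rw [h1]
      have := mul_le_mul_of_nonneg_left (key x) (hD0 x)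
      nlinarith [Real.exp_pos (-(t * μ))]
    calc ∑ x, D x * Real.exp (t * (χ x - μ))
        ≤ ∑ x, Real.exp (-(t * μ)) * (D x * ((1 - χ x) + χ x * Real.exp t)) :=
          Finset.sum_le_sum fun x _ => this x
      _ = Real.exp (-(t * μ)) * ∑ x, (D x - D x * χ x + D x * χ x * Real.exp t) := by
          rw [← Finset.mul_sum]
          congr 1
          apply Finset.sum_congr rfl; intro x _; ring
      _ = Real.exp (-(t * μ)) * ((1 - μ) + μ * Real.exp t) := by
          congr 1
          rw [Finset.sum_add_distrib, Finset.sum_sub_distrib, ← Finset.sum_mul, hD1, ← hμ]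
  have step2 : Real.exp (-(t * μ)) * ((1 - μ) + μ * Real.exp t) ≤ Real.exp (t ^ 2 / 8) := by
    have h := hoeffding_aux hμ0 hμ1 t
    have := mul_le_mul_of_nonneg_left h (le_of_lt (Real.exp_pos (-(t * μ))))
    calc Real.exp (-(t * μ)) * ((1 - μ) + μ * Real.exp t)
        ≤ Real.exp (-(t * μ)) * Real.exp (μ * t + t ^ 2 / 8) := this
      _ = Real.exp (t ^ 2 / 8) := by rw [← Real.exp_add]; ring_nf
  linarith

/-- Change of variables: expectation of a function of a random variable. -/
lemma sum_dist' {Ω α : Type*} [Fintype Ω] [Fintype α] (p : Ω → ℝ) (Y : Ω → α) (F : α → ℝ) :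
    ∑ ω, p ω * F (Y ω) = ∑ a, dist' p Y a * F a := by
  simp only [dist', Finset.sum_mul, ite_mul, zero_mul]
  rw [Finset.sum_comm]
  congr 1; ext ω
  simp


/-- Sum of empirical distribution over a subset, as an average of indicators. -/
lemma emp_indicator {X : Type*} [Fintype X] (m : ℕ) (s : Fin m → X) (A : Finset X) :
    ∑ x ∈ A, emp m s x = (∑ i, (if s i ∈ A then (1:ℝ) else 0)) / m := by
  have h1 : ∀ x, emp m s x = (∑ i, if s i = x then (1:ℝ) else 0) / m := by
    intro x
    simp only [emp, Finset.card_filter]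
    norm_num
  rw [Finset.sum_congr rfl (fun x _ => h1 x), ← Finset.sum_div]
  congr 1
  rw [Finset.sum_comm]
  apply Finset.sum_congr rfl
  intro i _
  simp [Finset.sum_ite_eq A (s i)]

/-- The empirical distribution sums to 1. -/
lemma emp_total {X : Type*} [Fintype X] (m : ℕ) (hm : 0 < m) (s : Fin m → X) :
    ∑ x, emp m s x = 1 := by
  have := emp_indicator m s (univ : Finset X)
  simp only [Finset.mem_univ, if_true, Finset.sum_const, Finset.card_univ, Fintype.card_fin,
    nsmul_eq_mul, mul_one] at this
  rw [this, div_self]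
  exact_mod_cast hm.ne'

/-- MGF bound for the centered empirical mean of `m` i.i.d. samples. -/
lemma prod_mgf {X : Type*} [Fintype X] (D : X → ℝ) (hD0 : ∀ x, 0 ≤ D x) (hD1 : ∑ x, D x = 1)
    (m : ℕ) (hm : 0 < m) (χ : X → ℝ) (hχ0 : ∀ x, 0 ≤ χ x) (hχ1 : ∀ x, χ x ≤ 1) (lam : ℝ) :
    ∑ s : Fin m → X, (∏ i, D (s i)) *
        Real.exp (lam * ((∑ i, χ (s i)) / m - ∑ y, D y * χ y)) ≤
      Real.exp (lam ^ 2 / (8 * m)) := by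
  have hmne : (m:ℝ) ≠ 0 := by exact_mod_cast hm.ne'
  set μ := ∑ y, D y * χ y with hμ
  have h1 : ∀ s : Fin m → X, (∏ i, D (s i)) *
      Real.exp (lam * ((∑ i, χ (s i)) / m - μ)) =
      ∏ i, (D (s i) * Real.exp ((lam / m) * (χ (s i) - μ))) := by
    intro s
    rw [Finset.prod_mul_distrib, ← Real.exp_sum]
    congr 2
    have key : ∀ d : ℝ, ∑ i : Fin m, (lam / m) * (χ (s i) - d)
        = lam * ((∑ i, χ (s i)) / m - d) := by
      intro d
      have h : ∑ i : Fin m, (lam / m) * (χ (s i) - d)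
          = (lam / m) * ∑ i, χ (s i) - m * ((lam / m) * d) := by
        rw [← Finset.mul_sum, Finset.sum_sub_distrib, Finset.sum_const, Finset.card_univ,
          Fintype.card_fin, mul_sub, nsmul_eq_mul]
        ring
      rw [h]
      field_simp
    exact (key μ).symm
  rw [Finset.sum_congr rfl (fun s _ => h1 s)]
  have h2 : ∑ s : Fin m → X, ∏ i, (D (s i) * Real.exp ((lam / m) * (χ (s i) - μ))) =
      (∑ x, D x * Real.exp ((lam / m) * (χ x - μ))) ^ m := by
    rw [← Fintype.prod_sum (fun (_ : Fin m) (x : X) => D x * Real.exp ((lam / m) * (χ x - μ)))]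
    simp [Finset.prod_const, Finset.card_univ]
  rw [h2]
  have h3 : ∑ x, D x * Real.exp ((lam / m) * (χ x - μ)) ≤ Real.exp ((lam / m) ^ 2 / 8) :=
    hoeffding_single D hD0 hD1 χ hχ0 hχ1 (lam / m)
  have h4 : (0:ℝ) ≤ ∑ x, D x * Real.exp ((lam / m) * (χ x - μ)) :=
    Finset.sum_nonneg fun x _ => mul_nonneg (hD0 x) (Real.exp_pos _).le
  calc (∑ x, D x * Real.exp ((lam / m) * (χ x - μ))) ^ m
      ≤ (Real.exp ((lam / m) ^ 2 / 8)) ^ m := pow_le_pow_left₀ h4 h3 m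
    _ = Real.exp (m * ((lam / m) ^ 2 / 8)) := by rw [← Real.exp_nat_mul]
    _ = Real.exp (lam ^ 2 / (8 * m)) := by congr 1; field_simp

/-- If `S = (S₁,…,S_m)` is i.i.d. from `D` and `g` is any random variable taking values in a
finite set `G`, then with `D_goal(g₀) := E[Unif(S) ∣ g = g₀]`,
`E_g[d_TV(D, D_goal(g))] ≤ √(ln|G| / (2m))`. -/
theorem statement11 {Ω X G : Type*} [Fintype Ω] [Fintype X] [Fintype G]
    (p : Ω → ℝ) (hp : IsPMF p) (D : X → ℝ) (hD : IsPMF D)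
    (m : ℕ) (hm : 0 < m) (S : Ω → Fin m → X)
    (hS : dist' p S = fun s => ∏ i, D (s i)) (g : Ω → G) :
    ∑ g₀ : G, dist' p g g₀ *
        TV D (fun x => (∑ ω, if g ω = g₀ then p ω * emp m (S ω) x else 0) / dist' p g g₀)
      ≤ Real.sqrt (Real.log (Fintype.card G) / (2 * m)) := by
  obtain ⟨hp0, hp1⟩ := hp
  obtain ⟨hD0, hD1⟩ := hD
  have hΩ : Nonempty Ω := by
    by_contra h
    rw [not_nonempty_iff] at h
    rw [Finset.univ_eq_empty, Finset.sum_empty] at hp1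
    norm_num at hp1
  have hG : Nonempty G := ⟨g (Classical.choice hΩ)⟩
  have hmR : (0:ℝ) < m := by exact_mod_cast hm
  have hmne : (m:ℝ) ≠ 0 := ne_of_gt hmR
  set N : ℝ := (Fintype.card G : ℝ) with hN
  have hN1 : 1 ≤ N := by
    have h : 1 ≤ Fintype.card G := Fintype.card_pos
    rw [hN]
    exact_mod_cast h
  have hNpos : 0 < N := lt_of_lt_of_le one_pos hN1
  have hL0 : 0 ≤ Real.log N := Real.log_nonneg hN1
  -- definitions
  set num : G → X → ℝ := fun g₀ x => ∑ ω, if g ω = g₀ then p ω * emp m (S ω) x else 0 with hnum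
  set A : G → Finset X := fun g₀ =>
    univ.filter (fun x => D x ≤ num g₀ x / dist' p g g₀) with hA
  set χ : G → X → ℝ := fun g₀ x => if x ∈ A g₀ then 1 else 0 with hχ
  have hχ0 : ∀ g₀ x, 0 ≤ χ g₀ x := by intro g₀ x; simp only [hχ]; split <;> norm_num
  have hχ1 : ∀ g₀ x, χ g₀ x ≤ 1 := by intro g₀ x; simp only [hχ]; split <;> norm_num
  set Z : G → (Fin m → X) → ℝ :=
    fun g₀ s => (∑ i, χ g₀ (s i)) / m - ∑ y, D y * χ g₀ y with hZ
  have hμA : ∀ g₀, ∑ y, D y * χ g₀ y = ∑ y ∈ A g₀, D y := by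
    intro g₀
    simp only [hχ, mul_ite, mul_one, mul_zero, Finset.sum_ite_mem, Finset.univ_inter]
  have hempA : ∀ g₀ (s : Fin m → X), ∑ x ∈ A g₀, emp m s x = (∑ i, χ g₀ (s i)) / m := by
    intro g₀ s
    rw [emp_indicator]
  -- Step 1: rewrite each term of the LHS
  have claim1 : ∀ g₀ : G, dist' p g g₀ *
      TV D (fun x => num g₀ x / dist' p g g₀)
      = ∑ ω, (if g ω = g₀ then p ω * Z g₀ (S ω) else 0) := by
    intro g₀
    set P := dist' p g g₀ with hP
    have hPalt : P = ∑ ω, if g ω = g₀ then p ω else 0 := rfl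
    have hP0 : 0 ≤ P := by
      rw [hPalt]; exact Finset.sum_nonneg fun ω _ => by split <;> [exact hp0 ω; exact le_rfl]
    rcases eq_or_lt_of_le hP0 with hPz | hPpos
    · -- P = 0
      have hz : ∀ ω, g ω = g₀ → p ω = 0 := by
        intro ω hω
        have := (Finset.sum_eq_zero_iff_of_nonneg
          (fun ω _ => by split <;> [exact hp0 ω; exact le_rfl] :
            ∀ ω ∈ univ, 0 ≤ if g ω = g₀ then p ω else 0)).1 hPz.symm ω (Finset.mem_univ ω)
        simpa [hω] using this
      rw [← hPz, zero_mul]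
      symm
      apply Finset.sum_eq_zero
      intro ω _
      by_cases hω : g ω = g₀
      · simp [hω, hz ω hω]
      · simp [hω]
    · -- P > 0
      have hPne : P ≠ 0 := ne_of_gt hPpos
      set q : X → ℝ := fun x => num g₀ x / P with hq
      have hnum_sum : ∑ x, num g₀ x = P := by
        rw [hnum, Finset.sum_comm, hPalt]
        apply Finset.sum_congr rfl
        intro ω _
        by_cases hω : g ω = g₀
        · simp only [hω, if_true, ← Finset.mul_sum, emp_total m hm (S ω), mul_one]
        · simp [hω]
      have hsq : ∑ x, q x = 1 := by
        rw [hq]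
        simp only []
        rw [← Finset.sum_div, hnum_sum, div_self hPne]
      have hTV : TV D q = ∑ x, (if D x ≤ q x then q x - D x else 0) := by
        unfold TV
        have habs : ∀ x, |D x - q x| =
            2 * (if D x ≤ q x then q x - D x else 0) - (q x - D x) := by
          intro x
          by_cases h : D x ≤ q x
          · rw [if_pos h, abs_of_nonpos (by linarith)]; ring
          · push_neg at h
            rw [if_neg (not_le.2 h), abs_of_pos (by linarith)]; ring
        rw [Finset.sum_congr rfl (fun x _ => habs x), Finset.sum_sub_distrib,
          ← Finset.mul_sum, Finset.sum_sub_distrib, hsq, hD1]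
        ring
      have key : P * TV D q = ∑ x ∈ A g₀, (num g₀ x - P * D x) := by
        rw [hTV, Finset.mul_sum]
        simp only [mul_ite, mul_zero]
        rw [← Finset.sum_filter]
        have hAq : univ.filter (fun x => D x ≤ q x) = A g₀ := by
          simp only [hq, hA, hP]
        rw [hAq]
        apply Finset.sum_congr rfl
        intro x hx
        simp only [hq]
        field_simp
      rw [key]
      have expand : ∑ x ∈ A g₀, (num g₀ x - P * D x)
          = (∑ x ∈ A g₀, num g₀ x) - P * ∑ y ∈ A g₀, D y := by
        rw [Finset.sum_sub_distrib, Finset.mul_sum]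
      rw [expand]
      have hnumA : ∑ x ∈ A g₀, num g₀ x
          = ∑ ω, (if g ω = g₀ then p ω * ((∑ i, χ g₀ (S ω i)) / m) else 0) := by
        rw [hnum, Finset.sum_comm]
        apply Finset.sum_congr rfl
        intro ω _
        by_cases hω : g ω = g₀
        · simp only [hω, if_true, ← Finset.mul_sum, hempA g₀ (S ω)]
        · simp [hω]
      have hPmu : P * ∑ y ∈ A g₀, D y
          = ∑ ω, (if g ω = g₀ then p ω * ∑ y, D y * χ g₀ y else 0) := by
        rw [hPalt, Finset.sum_mul]
        apply Finset.sum_congr rfl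
        intro ω _
        by_cases hω : g ω = g₀
        · simp [hω, hμA g₀]
        · simp [hω]
      rw [hnumA, hPmu, ← Finset.sum_sub_distrib]
      apply Finset.sum_congr rfl
      intro ω _
      by_cases hω : g ω = g₀
      · simp only [hω, if_true, hZ]; ring
      · simp [hω]
  -- Step 2: sum over g₀
  have claim2 : ∑ g₀ : G, dist' p g g₀ *
      TV D (fun x => num g₀ x / dist' p g g₀)
      = ∑ ω, p ω * Z (g ω) (S ω) := by
    rw [Finset.sum_congr rfl (fun g₀ _ => claim1 g₀), Finset.sum_comm]
    apply Finset.sum_congr rfl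
    intro ω _
    rw [Finset.sum_ite_eq univ (g ω) (fun g₀ => p ω * Z g₀ (S ω))]
    simp
  -- Step 3: MGF bound for every lam > 0
  have claim3 : ∀ lam : ℝ, 0 < lam →
      ∑ ω, p ω * Z (g ω) (S ω) ≤ (Real.log N + lam ^ 2 / (8 * m)) / lam := by
    intro lam hlam
    have expbound : Real.exp (lam * ∑ ω, p ω * Z (g ω) (S ω))
        ≤ N * Real.exp (lam ^ 2 / (8 * m)) := by
      have e1 : lam * ∑ ω, p ω * Z (g ω) (S ω)
          = ∑ ω, p ω * (lam * Z (g ω) (S ω)) := by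
        rw [Finset.mul_sum]
        apply Finset.sum_congr rfl
        intro ω _; ring
      rw [e1]
      calc Real.exp (∑ ω, p ω * (lam * Z (g ω) (S ω)))
          ≤ ∑ ω, p ω * Real.exp (lam * Z (g ω) (S ω)) :=
            jensen_exp p hp0 hp1 _
        _ ≤ ∑ ω, p ω * ∑ g₀ : G, Real.exp (lam * Z g₀ (S ω)) := by
            apply Finset.sum_le_sum
            intro ω _
            apply mul_le_mul_of_nonneg_left _ (hp0 ω)
            exact Finset.single_le_sum
              (fun g₀ _ => (Real.exp_pos (lam * Z g₀ (S ω))).le) (Finset.mem_univ (g ω))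
        _ = ∑ g₀ : G, ∑ ω, p ω * Real.exp (lam * Z g₀ (S ω)) := by
            rw [Finset.sum_comm]
            apply Finset.sum_congr rfl
            intro ω _
            rw [Finset.mul_sum]
        _ ≤ ∑ _g₀ : G, Real.exp (lam ^ 2 / (8 * m)) := by
            apply Finset.sum_le_sum
            intro g₀ _
            have e2 : ∑ ω, p ω * Real.exp (lam * Z g₀ (S ω))
                = ∑ s : Fin m → X, dist' p S s * Real.exp (lam * Z g₀ s) :=
              sum_dist' p S (fun s => Real.exp (lam * Z g₀ s))
            rw [e2, hS]
            exact prod_mgf D hD0 hD1 m hm (χ g₀) (hχ0 g₀) (hχ1 g₀) lam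
        _ = N * Real.exp (lam ^ 2 / (8 * m)) := by
            rw [Finset.sum_const, Finset.card_univ, nsmul_eq_mul, hN]
    have hlog : lam * ∑ ω, p ω * Z (g ω) (S ω) ≤ Real.log N + lam ^ 2 / (8 * m) := by
      have h := (Real.le_log_iff_exp_le
        (mul_pos hNpos (Real.exp_pos _))).2 expbound
      rwa [Real.log_mul (ne_of_gt hNpos) (Real.exp_ne_zero _), Real.log_exp] at h
    rw [le_div_iff₀ hlam]
    linarith [hlog]
  rw [claim2]
  set c := ∑ ω, p ω * Z (g ω) (S ω) with hc
  rcases eq_or_lt_of_le hL0 with hLz | hLpos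
  · -- log N = 0
    have hc0 : c ≤ 0 := by
      by_contra hcpos
      push_neg at hcpos
      have h := claim3 (4 * m * c) (by positivity)
      rw [← hLz] at h
      have : (0 + (4 * m * c) ^ 2 / (8 * m)) / (4 * m * c) = c / 2 := by
        field_simp
        ring
      rw [this] at h
      linarith
    exact le_trans hc0 (Real.sqrt_nonneg _)
  · -- log N > 0
    set L := Real.log N with hLdef
    set lam := Real.sqrt (8 * m * L) with hlamdef
    have hlampos : 0 < lam := Real.sqrt_pos.2 (by positivity)
    have hlamsq : lam ^ 2 = 8 * m * L := Real.sq_sqrt (by positivity)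
    have h := claim3 lam hlampos
    have e : (L + lam ^ 2 / (8 * m)) / lam = 2 * L / lam := by
      rw [hlamsq]
      field_simp
      ring
    rw [e] at h
    refine le_trans h (Real.le_sqrt_of_sq_le ?_)
    rw [div_pow, hlamsq]
    rw [div_le_div_iff₀ (by positivity) (by positivity)]
    ring_nf
    nlinarith [hLpos, hmR]
end
end

section
/- Let S = (S₁,...,S_m) be any random variable on X^m (X finite) and let n, k_max ∈ ℕ with n + k_max ≤ m. Then there exists k ≤ k_max such that E_{A,B}[ Cor(S_A ∣ S_B) ] ≤ (n(n−1)/(2(k_max+1))) · E_{i,B'}[ I(S_i ; S_{B'}) ], where A is a uniform size-n subset of [m], B a uniform size-k subset of [m]∖A, i uniform in [m], and B' a uniform size-(n+k_max−1) subset of [m]∖{i}. -/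
open Finset
open scoped Classical

noncomputable section

/-- The pmf of the sample space conditioned on the event `z = c`. -/
noncomputable def condPMF {Ω γ : Type*} [Fintype Ω] (p : Ω → ℝ) (z : Ω → γ) (c : γ) : Ω → ℝ :=
  fun ω => if z ω = c then p ω / dist' p z c else 0

/-- Multivariate total correlation `Cor(x₁,…,x_ι) = KL(D ‖ D₁ × ⋯)` of a finite family of
random variables. -/
noncomputable def CorF {Ω ι α : Type*} [Fintype Ω] [Fintype ι] [Fintype α]
    (p : Ω → ℝ) (x : ι → Ω → α) : ℝ :=
  KL (dist' p fun ω => fun i => x i ω) (fun v => ∏ i, dist' p (x i) (v i))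

/-- Conditional multivariate total correlation `Cor(x ∣ z) = E_z[Cor(x ∣ z = c)]`. -/
noncomputable def CondCor {Ω ι α γ : Type*} [Fintype Ω] [Fintype ι] [Fintype α] [Fintype γ]
    (p : Ω → ℝ) (x : ι → Ω → α) (z : Ω → γ) : ℝ :=
  ∑ c, dist' p z c * CorF (condPMF p z c) x

set_option linter.unusedSectionVars false

namespace CR

variable {Ω α β γ ι : Type*} [Fintype Ω] [Fintype α] [Fintype β] [Fintype γ] [Fintype ι]

lemma exp_dist' (p : Ω → ℝ) (Y : Ω → α) (F : α → ℝ) :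
    ∑ a, dist' p Y a * F a = ∑ ω, p ω * F (Y ω) := by
  simp only [dist', Finset.sum_mul, ite_mul, zero_mul]
  rw [Finset.sum_comm]
  refine Finset.sum_congr rfl fun ω _ => ?_
  simp

lemma dist'_nonneg {p : Ω → ℝ} (hp : ∀ ω, 0 ≤ p ω) (Y : Ω → α) (a : α) :
    0 ≤ dist' p Y a := by
  refine Finset.sum_nonneg fun ω _ => ?_
  split <;> simp [hp ω]

lemma sum_dist' (p : Ω → ℝ) (Y : Ω → α) :
    ∑ a, dist' p Y a = ∑ ω, p ω := by
  have := exp_dist' p Y (fun _ => 1)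
  simpa using this

noncomputable def Hent {Ω α : Type*} [Fintype Ω] [Fintype α] (p : Ω → ℝ) (Y : Ω → α) : ℝ :=
  -∑ a, dist' p Y a * Real.log (dist' p Y a)

lemma dist'_comp_eq_zero (p : Ω → ℝ) (Y : Ω → α) (g : α → β) (b : β)
    (hb : ∀ a, g a ≠ b) : dist' p (fun ω => g (Y ω)) b = 0 := by
  simp [dist', hb]

lemma dist'_comp_inj (p : Ω → ℝ) (Y : Ω → α) (g : α → β) (hg : Function.Injective g) (a : α) :
    dist' p (fun ω => g (Y ω)) (g a) = dist' p Y a := by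
  unfold dist'
  refine Finset.sum_congr rfl fun ω _ => ?_
  simp [hg.eq_iff]

lemma Hent_comp_inj (p : Ω → ℝ) (Y : Ω → α) (g : α → β) (hg : Function.Injective g) :
    Hent p (fun ω => g (Y ω)) = Hent p Y := by
  unfold Hent
  congr 1
  rw [← Finset.sum_subset (Finset.subset_univ (Finset.univ.image g))]
  · rw [Finset.sum_image (fun a _ b _ h => hg h)]
    refine Finset.sum_congr rfl fun a _ => ?_
    rw [dist'_comp_inj p Y g hg]
  · intro b _ hb
    have : ∀ a, g a ≠ b := by
      intro a ha
      exact hb (Finset.mem_image.2 ⟨a, Finset.mem_univ a, ha⟩)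
    rw [dist'_comp_eq_zero p Y g b this]
    simp

lemma gibbs (q r : α → ℝ) (hq : ∀ a, 0 ≤ q a) (hr : ∀ a, 0 ≤ r a)
    (hac : ∀ a, 0 < q a → 0 < r a) (hsum : ∑ a, r a ≤ ∑ a, q a) :
    0 ≤ ∑ a, q a * Real.log (q a / r a) := by
  have key : ∀ a, q a - r a ≤ q a * Real.log (q a / r a) := by
    intro a
    rcases eq_or_lt_of_le (hq a) with h0 | h0
    · simp [← h0, hr a]
    · have hra := hac a h0
      have hlog : Real.log (r a / q a) ≤ r a / q a - 1 :=
        Real.log_le_sub_one_of_pos (by positivity)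
      have : Real.log (q a / r a) = -Real.log (r a / q a) := by
        rw [← Real.log_inv]; congr 1; field_simp
      rw [this]
      have h2 : q a * -(r a / q a - 1) ≤ q a * -Real.log (r a / q a) := by
        apply mul_le_mul_of_nonneg_left (by linarith) (le_of_lt h0)
      have h3 : q a * -(r a / q a - 1) = q a - r a := by
        field_simp
        ring
      linarith
  calc (0:ℝ) ≤ ∑ a, q a - ∑ a, r a := by linarith
    _ = ∑ a, (q a - r a) := by rw [Finset.sum_sub_distrib]
    _ ≤ _ := Finset.sum_le_sum fun a _ => key a

/-- pointwise: the distribution of a function of `Y` dominates that of `Y`. -/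
lemma dist'_comp_le {p : Ω → ℝ} (hp : ∀ ω, 0 ≤ p ω) (Y : Ω → α) (g : α → β) (a : α) :
    dist' p Y a ≤ dist' p (fun ω => g (Y ω)) (g a) := by
  refine Finset.sum_le_sum fun ω _ => ?_
  by_cases h : Y ω = a
  · simp [h]
  · simp only [h, if_false]
    split <;> simp [hp ω]

/-- Submodularity of entropy. -/
lemma Hent_submod (p : Ω → ℝ) (hp : ∀ ω, 0 ≤ p ω) (Z : Ω → γ) (U : Ω → α) (V : Ω → β) :
    Hent p (fun ω => (Z ω, U ω, V ω)) + Hent p Z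
      ≤ Hent p (fun ω => (Z ω, U ω)) + Hent p (fun ω => (Z ω, V ω)) := by
  set W : Ω → γ × α × β := fun ω => (Z ω, U ω, V ω) with hW
  set J : γ × α × β → ℝ := dist' p W with hJ
  set dZU : γ × α → ℝ := dist' p (fun ω => (Z ω, U ω)) with hdZU
  set dZV : γ × β → ℝ := dist' p (fun ω => (Z ω, V ω)) with hdZV
  set dZ : γ → ℝ := dist' p Z with hdZ
  set r : γ × α × β → ℝ := fun x => dZU (x.1, x.2.1) * dZV (x.1, x.2.2) / dZ x.1 with hr
  have hJ0 : ∀ x, 0 ≤ J x := fun x => dist'_nonneg hp W x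
  have hdZU0 : ∀ x, 0 ≤ dZU x := fun x => dist'_nonneg hp _ x
  have hdZV0 : ∀ x, 0 ≤ dZV x := fun x => dist'_nonneg hp _ x
  have hdZ0 : ∀ c, 0 ≤ dZ c := fun c => dist'_nonneg hp _ c
  have hJle1 : ∀ x : γ × α × β, J x ≤ dZU (x.1, x.2.1) := by
    intro x
    have := dist'_comp_le hp W (fun y => (y.1, y.2.1)) x
    simpa using this
  have hJle2 : ∀ x : γ × α × β, J x ≤ dZV (x.1, x.2.2) := by
    intro x
    have := dist'_comp_le hp W (fun y => (y.1, y.2.2)) x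
    simpa using this
  have hJle3 : ∀ x : γ × α × β, J x ≤ dZ x.1 := by
    intro x
    have := dist'_comp_le hp W (fun y => y.1) x
    simpa using this
  -- marginal collapse lemmas
  have hmargU : ∀ c, ∑ a, dZU (c, a) = dZ c := by
    intro c
    rw [hdZU, hdZ]
    unfold dist'
    rw [Finset.sum_comm]
    refine Finset.sum_congr rfl fun ω _ => ?_
    by_cases h : Z ω = c
    · simp [h, Prod.ext_iff]
    · simp [h, Prod.ext_iff]
  have hmargV : ∀ c, ∑ b, dZV (c, b) = dZ c := by
    intro c
    rw [hdZV, hdZ]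
    unfold dist'
    rw [Finset.sum_comm]
    refine Finset.sum_congr rfl fun ω _ => ?_
    by_cases h : Z ω = c
    · simp [h, Prod.ext_iff]
    · simp [h, Prod.ext_iff]
  -- sum of r
  have hsumr : ∑ x, r x ≤ ∑ x, J x := by
    rw [hJ, sum_dist']
    have : ∑ x : γ × α × β, r x = ∑ c, (∑ a, dZU (c,a)) * (∑ b, dZV (c,b)) / dZ c := by
      rw [Fintype.sum_prod_type]
      refine Finset.sum_congr rfl fun c _ => ?_
      rw [Fintype.sum_prod_type, Finset.sum_mul, Finset.sum_div]
      refine Finset.sum_congr rfl fun a _ => ?_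
      rw [Finset.mul_sum, Finset.sum_div]
    rw [this]
    have hZsum : ∑ c, dZ c = ∑ ω, p ω := sum_dist' p Z
    rw [← hZsum]
    refine Finset.sum_le_sum fun c _ => ?_
    rw [hmargU, hmargV]
    rcases eq_or_lt_of_le (hdZ0 c) with h | h
    · rw [← h]; simp
    · rw [mul_div_assoc, div_self (ne_of_gt h), mul_one]
  have hgibbs : 0 ≤ ∑ x, J x * Real.log (J x / r x) := by
    refine gibbs J r hJ0 (fun x => by
      rw [hr]
      have := hdZU0 (x.1, x.2.1)
      have := hdZV0 (x.1, x.2.2)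
      have := hdZ0 x.1
      positivity) (fun x hx => ?_) hsumr
    · rw [hr]
      have h1 : 0 < dZU (x.1, x.2.1) := lt_of_lt_of_le hx (hJle1 x)
      have h2 : 0 < dZV (x.1, x.2.2) := lt_of_lt_of_le hx (hJle2 x)
      have h3 : 0 < dZ x.1 := lt_of_lt_of_le hx (hJle3 x)
      positivity
  -- identity
  have hterm : ∀ x : γ × α × β, J x * Real.log (J x / r x)
      = J x * Real.log (J x) + J x * Real.log (dZ x.1)
        - J x * Real.log (dZU (x.1, x.2.1)) - J x * Real.log (dZV (x.1, x.2.2)) := by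
    intro x
    rcases eq_or_lt_of_le (hJ0 x) with h | h
    · simp [← h]
    · have h1 : 0 < dZU (x.1, x.2.1) := lt_of_lt_of_le h (hJle1 x)
      have h2 : 0 < dZV (x.1, x.2.2) := lt_of_lt_of_le h (hJle2 x)
      have h3 : 0 < dZ x.1 := lt_of_lt_of_le h (hJle3 x)
      rw [hr, Real.log_div (ne_of_gt h) (by positivity),
        Real.log_div (by positivity) (ne_of_gt h3),
        Real.log_mul (ne_of_gt h1) (ne_of_gt h2)]
      ring
  have hsum_eq : ∑ x, J x * Real.log (J x / r x)
      = (Hent p (fun ω => (Z ω, U ω)) + Hent p (fun ω => (Z ω, V ω)))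
        - (Hent p W + Hent p Z) := by
    have e0 : ∑ x, J x * Real.log (J x) = - Hent p W := by
      rw [Hent]; ring
    have e1 : ∑ x, J x * Real.log (dZ x.1) = - Hent p Z := by
      rw [hJ, exp_dist' p W (fun x => Real.log (dZ x.1))]
      rw [Hent, ← exp_dist' p Z (fun c => Real.log (dZ c))]
      simp [hW]
      rfl
    have e2 : ∑ x, J x * Real.log (dZU (x.1, x.2.1)) = - Hent p (fun ω => (Z ω, U ω)) := by
      rw [hJ, exp_dist' p W (fun x => Real.log (dZU (x.1, x.2.1)))]
      rw [Hent, ← exp_dist' p (fun ω => (Z ω, U ω)) (fun y => Real.log (dZU y))]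
      simp [hW]
      rfl
    have e3 : ∑ x, J x * Real.log (dZV (x.1, x.2.2)) = - Hent p (fun ω => (Z ω, V ω)) := by
      rw [hJ, exp_dist' p W (fun x => Real.log (dZV (x.1, x.2.2)))]
      rw [Hent, ← exp_dist' p (fun ω => (Z ω, V ω)) (fun y => Real.log (dZV y))]
      simp [hW]
      rfl
    calc ∑ x, J x * Real.log (J x / r x)
        = ∑ x, (J x * Real.log (J x) + J x * Real.log (dZ x.1)
          - J x * Real.log (dZU (x.1, x.2.1)) - J x * Real.log (dZV (x.1, x.2.2))) :=
          Finset.sum_congr rfl fun x _ => hterm x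
      _ = (∑ x, J x * Real.log (J x)) + (∑ x, J x * Real.log (dZ x.1))
          - (∑ x, J x * Real.log (dZU (x.1, x.2.1))) - (∑ x, J x * Real.log (dZV (x.1, x.2.2))) := by
          rw [Finset.sum_sub_distrib, Finset.sum_sub_distrib, Finset.sum_add_distrib]
      _ = _ := by rw [e0, e1, e2, e3]; ring
  linarith [hgibbs, hsum_eq ▸ hgibbs]

end CR

namespace CR
variable {Ω α β γ ι : Type*} [Fintype Ω] [Fintype α] [Fintype β] [Fintype γ] [Fintype ι]

lemma MI_eq (p : Ω → ℝ) (hp : ∀ ω, 0 ≤ p ω) (Xv : Ω → α) (Y : Ω → β) :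
    MI p Xv Y = Hent p Xv + Hent p Y - Hent p (fun ω => (Xv ω, Y ω)) := by
  set J : α × β → ℝ := dist' p (fun ω => (Xv ω, Y ω)) with hJ
  set dX : α → ℝ := dist' p Xv with hdX
  set dY : β → ℝ := dist' p Y with hdY
  have hJ0 : ∀ x, 0 ≤ J x := fun x => dist'_nonneg hp _ x
  have hJle1 : ∀ x : α × β, J x ≤ dX x.1 := by
    intro x
    have := dist'_comp_le hp (fun ω => (Xv ω, Y ω)) (fun y => y.1) x
    simpa using this
  have hJle2 : ∀ x : α × β, J x ≤ dY x.2 := by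
    intro x
    have := dist'_comp_le hp (fun ω => (Xv ω, Y ω)) (fun y => y.2) x
    simpa using this
  have hterm : ∀ x : α × β, J x * Real.log (J x / (dX x.1 * dY x.2))
      = J x * Real.log (J x) - J x * Real.log (dX x.1) - J x * Real.log (dY x.2) := by
    intro x
    rcases eq_or_lt_of_le (hJ0 x) with h | h
    · simp [← h]
    · have h1 : 0 < dX x.1 := lt_of_lt_of_le h (hJle1 x)
      have h2 : 0 < dY x.2 := lt_of_lt_of_le h (hJle2 x)
      rw [Real.log_div (ne_of_gt h) (by positivity), Real.log_mul (ne_of_gt h1) (ne_of_gt h2)]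
      ring
  have e0 : ∑ x, J x * Real.log (J x) = - Hent p (fun ω => (Xv ω, Y ω)) := by
    rw [Hent]; ring
  have e1 : ∑ x, J x * Real.log (dX x.1) = - Hent p Xv := by
    rw [hJ, exp_dist' p (fun ω => (Xv ω, Y ω)) (fun x => Real.log (dX x.1))]
    rw [Hent, ← exp_dist' p Xv (fun a => Real.log (dX a))]
    simp
    rfl
  have e2 : ∑ x, J x * Real.log (dY x.2) = - Hent p Y := by
    rw [hJ, exp_dist' p (fun ω => (Xv ω, Y ω)) (fun x => Real.log (dY x.2))]
    rw [Hent, ← exp_dist' p Y (fun b => Real.log (dY b))]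
    simp
    rfl
  have : MI p Xv Y = ∑ x, J x * Real.log (J x / (dX x.1 * dY x.2)) := rfl
  rw [this]
  calc ∑ x, J x * Real.log (J x / (dX x.1 * dY x.2))
      = ∑ x, (J x * Real.log (J x) - J x * Real.log (dX x.1) - J x * Real.log (dY x.2)) :=
        Finset.sum_congr rfl fun x _ => hterm x
    _ = (∑ x, J x * Real.log (J x)) - (∑ x, J x * Real.log (dX x.1))
        - (∑ x, J x * Real.log (dY x.2)) := by
        rw [Finset.sum_sub_distrib, Finset.sum_sub_distrib]
    _ = _ := by rw [e0, e1, e2]; ring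

lemma CorF_eq (q : Ω → ℝ) (hq : ∀ ω, 0 ≤ q ω) (x : ι → Ω → α) :
    CorF q x = (∑ i, Hent q (x i)) - Hent q (fun ω => fun i => x i ω) := by
  set J : (ι → α) → ℝ := dist' q (fun ω => fun i => x i ω) with hJ
  set d : ι → α → ℝ := fun i => dist' q (x i) with hd
  have hJ0 : ∀ v, 0 ≤ J v := fun v => dist'_nonneg hq _ v
  have hJle : ∀ (v : ι → α) (i : ι), J v ≤ d i (v i) := by
    intro v i
    have := dist'_comp_le hq (fun ω => fun i => x i ω) (fun u => u i) v
    simpa using this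
  have hterm : ∀ v : ι → α, J v * Real.log (J v / ∏ i, d i (v i))
      = J v * Real.log (J v) - ∑ i, J v * Real.log (d i (v i)) := by
    intro v
    rcases eq_or_lt_of_le (hJ0 v) with h | h
    · simp [← h]
    · have hpos : ∀ i, 0 < d i (v i) := fun i => lt_of_lt_of_le h (hJle v i)
      rw [Real.log_div (ne_of_gt h) (ne_of_gt (Finset.prod_pos (fun i _ => hpos i))),
        Real.log_prod (fun i _ => ne_of_gt (hpos i)), mul_sub, Finset.mul_sum]
  have e0 : ∑ v, J v * Real.log (J v) = - Hent q (fun ω => fun i => x i ω) := by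
    rw [Hent]; ring
  have e1 : ∀ i, ∑ v, J v * Real.log (d i (v i)) = - Hent q (x i) := by
    intro i
    rw [hJ, exp_dist' q (fun ω => fun i => x i ω) (fun v => Real.log (d i (v i)))]
    rw [Hent, ← exp_dist' q (x i) (fun a => Real.log (d i a))]
    simp
    rfl
  have : CorF q x = ∑ v, J v * Real.log (J v / ∏ i, d i (v i)) := rfl
  rw [this]
  calc ∑ v, J v * Real.log (J v / ∏ i, d i (v i))
      = ∑ v, (J v * Real.log (J v) - ∑ i, J v * Real.log (d i (v i))) :=
        Finset.sum_congr rfl fun v _ => hterm v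
    _ = (∑ v, J v * Real.log (J v)) - ∑ v, ∑ i, J v * Real.log (d i (v i)) := by
        rw [Finset.sum_sub_distrib]
    _ = (∑ v, J v * Real.log (J v)) - ∑ i, ∑ v, J v * Real.log (d i (v i)) := by
        rw [Finset.sum_comm]
    _ = _ := by
        rw [e0]
        rw [Finset.sum_congr rfl fun i (_ : i ∈ Finset.univ) => e1 i]
        rw [Finset.sum_neg_distrib]
        ring

lemma dist'_condPMF (p : Ω → ℝ) (z : Ω → γ) (c : γ) (Y : Ω → α) (a : α) :
    dist' (condPMF p z c) Y a
      = dist' p (fun ω => (Y ω, z ω)) (a, c) / dist' p z c := by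
  unfold dist' condPMF
  rw [Finset.sum_div]
  refine Finset.sum_congr rfl fun ω _ => ?_
  by_cases h1 : Y ω = a <;> by_cases h2 : z ω = c <;> simp [h1, h2, Prod.ext_iff, dist']

lemma cond_exp_Hent (p : Ω → ℝ) (hp : ∀ ω, 0 ≤ p ω) (z : Ω → γ) (Y : Ω → α) :
    ∑ c, dist' p z c * Hent (condPMF p z c) Y
      = Hent p (fun ω => (Y ω, z ω)) - Hent p z := by
  set D : α × γ → ℝ := dist' p (fun ω => (Y ω, z ω)) with hD
  set dz : γ → ℝ := dist' p z with hdz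
  have hD0 : ∀ x, 0 ≤ D x := fun x => dist'_nonneg hp _ x
  have hdz0 : ∀ c, 0 ≤ dz c := fun c => dist'_nonneg hp _ c
  have hDle : ∀ x : α × γ, D x ≤ dz x.2 := by
    intro x
    have := dist'_comp_le hp (fun ω => (Y ω, z ω)) (fun y => y.2) x
    simpa using this
  have hmarg : ∀ c, ∑ a, D (a, c) = dz c := by
    intro c
    rw [hD, hdz]
    unfold dist'
    rw [Finset.sum_comm]
    refine Finset.sum_congr rfl fun ω _ => ?_
    by_cases h : z ω = c
    · simp [h, Prod.ext_iff]
    · simp [h, Prod.ext_iff]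
  have hterm : ∀ c a, dz c * (-((D (a,c) / dz c) * Real.log (D (a,c) / dz c)))
      = -(D (a,c) * Real.log (D (a,c))) + D (a,c) * Real.log (dz c) := by
    intro c a
    rcases eq_or_lt_of_le (hdz0 c) with hz | hz
    · have : D (a, c) = 0 := le_antisymm (by rw [hz]; exact hDle (a,c)) (hD0 (a,c))
      simp [this, ← hz]
    · rcases eq_or_lt_of_le (hD0 (a,c)) with hd | hd
      · simp [← hd]
      · rw [Real.log_div (ne_of_gt hd) (ne_of_gt hz)]
        field_simp
        ring
  have lhs_eq : ∀ c, dist' p z c * Hent (condPMF p z c) Y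
      = ∑ a, (-(D (a,c) * Real.log (D (a,c))) + D (a,c) * Real.log (dz c)) := by
    intro c
    rw [Hent]
    simp only [dist'_condPMF p z c Y]
    rw [mul_neg, Finset.mul_sum, ← Finset.sum_neg_distrib]
    refine Finset.sum_congr rfl fun a _ => ?_
    rw [← hterm c a]
    ring
  have rhs1 : Hent p (fun ω => (Y ω, z ω)) = ∑ c, ∑ a, -(D (a,c) * Real.log (D (a,c))) := by
    rw [Hent, ← Finset.sum_neg_distrib, Fintype.sum_prod_type, Finset.sum_comm]
  have rhs2 : Hent p z = -∑ c, (∑ a, D (a,c)) * Real.log (dz c) := by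
    rw [Hent]
    congr 1
    refine Finset.sum_congr rfl fun c _ => ?_
    rw [hmarg c]
  calc ∑ c, dist' p z c * Hent (condPMF p z c) Y
      = ∑ c, ∑ a, (-(D (a,c) * Real.log (D (a,c))) + D (a,c) * Real.log (dz c)) :=
        Finset.sum_congr rfl fun c _ => lhs_eq c
    _ = (∑ c, ∑ a, -(D (a,c) * Real.log (D (a,c)))) + ∑ c, (∑ a, D (a,c)) * Real.log (dz c) := by
        rw [← Finset.sum_add_distrib]
        refine Finset.sum_congr rfl fun c _ => ?_
        rw [Finset.sum_add_distrib, Finset.sum_mul]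
    _ = _ := by rw [rhs1, rhs2]; ring

lemma CondCor_eq (p : Ω → ℝ) (hp : ∀ ω, 0 ≤ p ω) (x : ι → Ω → α) (z : Ω → γ) :
    CondCor p x z = (∑ i, Hent p (fun ω => (x i ω, z ω)))
      - ((Fintype.card ι : ℝ) - 1) * Hent p z
      - Hent p (fun ω => ((fun i => x i ω), z ω)) := by
  have key : ∀ c, dist' p z c * CorF (condPMF p z c) x
      = (∑ i, dist' p z c * Hent (condPMF p z c) (x i))
        - dist' p z c * Hent (condPMF p z c) (fun ω => fun i => x i ω) := by
    intro c
    rcases eq_or_lt_of_le (dist'_nonneg hp z c) with h | h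
    · simp [← h]
    · have hcond : ∀ ω, 0 ≤ condPMF p z c ω := by
        intro ω
        unfold condPMF
        split
        · exact div_nonneg (hp ω) (le_of_lt h)
        · exact le_refl 0
      rw [CorF_eq _ hcond x, mul_sub, Finset.mul_sum]
  have e1 : ∀ i, ∑ c, dist' p z c * Hent (condPMF p z c) (x i)
      = Hent p (fun ω => (x i ω, z ω)) - Hent p z := fun i => cond_exp_Hent p hp z (x i)
  have e2 : ∑ c, dist' p z c * Hent (condPMF p z c) (fun ω => fun i => x i ω)
      = Hent p (fun ω => ((fun i => x i ω), z ω)) - Hent p z :=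
    cond_exp_Hent p hp z (fun ω => fun i => x i ω)
  calc CondCor p x z
      = ∑ c, ((∑ i, dist' p z c * Hent (condPMF p z c) (x i))
        - dist' p z c * Hent (condPMF p z c) (fun ω => fun i => x i ω)) :=
        Finset.sum_congr rfl fun c _ => key c
    _ = (∑ i, ∑ c, dist' p z c * Hent (condPMF p z c) (x i))
        - ∑ c, dist' p z c * Hent (condPMF p z c) (fun ω => fun i => x i ω) := by
        rw [Finset.sum_sub_distrib, Finset.sum_comm]
    _ = (∑ i, (Hent p (fun ω => (x i ω, z ω)) - Hent p z))
        - (Hent p (fun ω => ((fun i => x i ω), z ω)) - Hent p z) := by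
        rw [e2]
        congr 1
        exact Finset.sum_congr rfl fun i _ => e1 i
    _ = _ := by
        rw [Finset.sum_sub_distrib]
        simp only [Finset.sum_const, Finset.card_univ, nsmul_eq_mul]
        ring

end CR

namespace CR

variable {ι : Type*} [Fintype ι] [DecidableEq ι]

/-- abstract "mutual information" functional of a set function. -/
def Ih (h : Finset ι → ℝ) (i : ι) (D : Finset ι) : ℝ :=
  h {i} + h D - h (insert i D)

/-- abstract "total correlation given B" of a set function. -/
def CorH (h : Finset ι → ℝ) (A B : Finset ι) : ℝ :=
  (∑ i ∈ A, h (insert i B)) - ((A.card : ℝ) - 1) * h B - h (A ∪ B)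

def SC (h : Finset ι → ℝ) (n k : ℕ) : ℝ :=
  ∑ A ∈ (univ : Finset ι).powersetCard n, ∑ B ∈ Aᶜ.powersetCard k, CorH h A B

def SI (h : Finset ι → ℝ) (s : ℕ) : ℝ :=
  ∑ i : ι, ∑ D ∈ ({i}ᶜ : Finset ι).powersetCard s, Ih h i D

section basic

variable {h : Finset ι → ℝ}

lemma Ih_insert_le (hsub : ∀ (D : Finset ι) (i j : ι), i ∉ D → j ∉ D → i ≠ j →
      h D + h (insert i (insert j D)) ≤ h (insert i D) + h (insert j D))
    (D : Finset ι) (i j : ι) (hi : i ∉ D) (hij : j ≠ i) :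
    Ih h i D ≤ Ih h i (insert j D) := by
  by_cases hj : j ∈ D
  · rw [Finset.insert_eq_self.2 hj]
  · have := hsub D i j hi hj (Ne.symm hij)
    unfold Ih
    linarith

lemma Ih_nonneg (hsub : ∀ (D : Finset ι) (i j : ι), i ∉ D → j ∉ D → i ≠ j →
      h D + h (insert i (insert j D)) ≤ h (insert i D) + h (insert j D))
    (h0 : h ∅ = 0) (D : Finset ι) (i : ι) (hi : i ∉ D) : 0 ≤ Ih h i D := by
  induction D using Finset.induction_on with
  | empty => simp [Ih, h0]
  | @insert j D' hj ih =>
    have hiD : i ∉ D' := fun hh => hi (Finset.mem_insert_of_mem hh)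
    have hij : j ≠ i := fun hh => hi (hh ▸ Finset.mem_insert_self j D')
    exact le_trans (ih hiD) (Ih_insert_le hsub D' i j hiD hij)

end basic

/-- swap between (set of size n+1, element inside) and (set of size n, element outside). -/
lemma pairSwap (T : Finset ι) (n : ℕ) (F : Finset ι → ι → ℝ) :
    ∑ A ∈ T.powersetCard (n+1), ∑ a ∈ A, F (A.erase a) a
      = ∑ A ∈ T.powersetCard n, ∑ a ∈ T \ A, F A a := by
  rw [Finset.sum_sigma' (T.powersetCard (n+1)) (fun A => A) (fun A a => F (A.erase a) a),
    Finset.sum_sigma' (T.powersetCard n) (fun A => T \ A) (fun A a => F A a)]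
  refine Finset.sum_nbij' (fun x => ⟨x.1.erase x.2, x.2⟩) (fun x => ⟨insert x.2 x.1, x.2⟩)
    ?_ ?_ ?_ ?_ ?_
  · rintro ⟨A, a⟩ hx
    rw [Finset.mem_sigma] at hx ⊢
    obtain ⟨hA, ha⟩ := hx
    rw [Finset.mem_powersetCard] at hA
    refine ⟨Finset.mem_powersetCard.2 ⟨le_trans (Finset.erase_subset a A) hA.1, ?_⟩, ?_⟩
    · rw [Finset.card_erase_of_mem ha, hA.2]
      omega
    · rw [Finset.mem_sdiff]
      exact ⟨hA.1 ha, Finset.notMem_erase a A⟩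
  · rintro ⟨A, a⟩ hx
    rw [Finset.mem_sigma] at hx ⊢
    obtain ⟨hA, ha⟩ := hx
    rw [Finset.mem_powersetCard] at hA
    rw [Finset.mem_sdiff] at ha
    refine ⟨Finset.mem_powersetCard.2 ⟨Finset.insert_subset ha.1 hA.1, ?_⟩, Finset.mem_insert_self _ _⟩
    rw [Finset.card_insert_of_notMem ha.2, hA.2]
  · rintro ⟨A, a⟩ hx
    rw [Finset.mem_sigma] at hx
    have h1 : insert a (A.erase a) = A := Finset.insert_erase hx.2
    exact congrArg (fun s => (⟨s, a⟩ : Σ _ : Finset ι, ι)) h1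
  · rintro ⟨A, a⟩ hx
    rw [Finset.mem_sigma, Finset.mem_sdiff] at hx
    have h1 : (insert a A).erase a = A := Finset.erase_insert hx.2.2
    exact congrArg (fun s => (⟨s, a⟩ : Σ _ : Finset ι, ι)) h1
  · rintro ⟨A, a⟩ _
    rfl

lemma pcErase (T : Finset ι) (a : ι) (k : ℕ) :
    (T.erase a).powersetCard k = (T.powersetCard k).filter (fun B => a ∉ B) := by
  ext B; simp only [Finset.mem_powersetCard, Finset.subset_erase, Finset.mem_filter]; tauto

/-- L6 -/
lemma sum_erase_count (T : Finset ι) (k : ℕ) (G : Finset ι → ℝ) :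
    ∑ a ∈ T, ∑ B ∈ (T.erase a).powersetCard k, G B
      = ((T.card - k : ℕ) : ℝ) * ∑ B ∈ T.powersetCard k, G B := by
  have : ∀ a ∈ T, ∑ B ∈ (T.erase a).powersetCard k, G B
      = ∑ B ∈ T.powersetCard k, if a ∉ B then G B else 0 := by
    intro a _
    rw [pcErase, Finset.sum_filter]
  rw [Finset.sum_congr rfl this, Finset.sum_comm, Finset.mul_sum]
  refine Finset.sum_congr rfl fun B hB => ?_
  rw [Finset.mem_powersetCard] at hB
  rw [← Finset.sum_filter]
  rw [Finset.sum_const]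
  have : T.filter (fun a => a ∉ B) = T \ B := by
    ext x; simp [Finset.mem_sdiff]
  rw [this, Finset.card_sdiff_of_subset hB.1, hB.2, nsmul_eq_mul]

/-- L3 -/
lemma sum_union_count (T : Finset ι) (n k : ℕ) (G : Finset ι → ℝ) :
    ∑ A ∈ T.powersetCard n, ∑ B ∈ (T \ A).powersetCard k, G (A ∪ B)
      = ((n+k).choose n : ℝ) * ∑ D ∈ T.powersetCard (n+k), G D := by
  have inner : ∀ A ∈ T.powersetCard n, ∑ B ∈ (T \ A).powersetCard k, G (A ∪ B)
      = ∑ D ∈ T.powersetCard (n+k), if A ⊆ D then G D else 0 := by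
    intro A hA
    rw [Finset.mem_powersetCard] at hA
    rw [← Finset.sum_filter]
    refine Finset.sum_nbij' (fun B => A ∪ B) (fun D => D \ A) ?_ ?_ ?_ ?_ ?_
    · intro B hB
      rw [Finset.mem_powersetCard, Finset.subset_sdiff] at hB
      rw [Finset.mem_filter, Finset.mem_powersetCard]
      refine ⟨⟨Finset.union_subset hA.1 hB.1.1, ?_⟩, Finset.subset_union_left⟩
      rw [Finset.card_union_of_disjoint (Finset.disjoint_of_subset_right (by rfl)
        hB.1.2.symm), hA.2, hB.2]
    · intro D hD
      rw [Finset.mem_filter, Finset.mem_powersetCard] at hD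
      rw [Finset.mem_powersetCard, Finset.subset_sdiff]
      refine ⟨⟨Finset.sdiff_subset.trans hD.1.1, Finset.sdiff_disjoint⟩, ?_⟩
      rw [Finset.card_sdiff_of_subset hD.2, hD.1.2, hA.2]
      omega
    · intro B hB
      rw [Finset.mem_powersetCard, Finset.subset_sdiff] at hB
      exact Finset.union_sdiff_cancel_left hB.1.2.symm
    · intro D hD
      rw [Finset.mem_filter] at hD
      exact Finset.union_sdiff_of_subset hD.2
    · intro B _; rfl
  rw [Finset.sum_congr rfl inner, Finset.sum_comm, Finset.mul_sum]
  refine Finset.sum_congr rfl fun D hD => ?_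
  rw [Finset.mem_powersetCard] at hD
  rw [← Finset.sum_filter, Finset.sum_const]
  have : (T.powersetCard n).filter (fun A => A ⊆ D) = D.powersetCard n := by
    ext A
    simp only [Finset.mem_filter, Finset.mem_powersetCard]
    constructor
    · rintro ⟨⟨_, hc⟩, hAD⟩; exact ⟨hAD, hc⟩
    · rintro ⟨hAD, hc⟩; exact ⟨⟨hAD.trans hD.1, hc⟩, hAD⟩
  rw [this, Finset.card_powersetCard, hD.2, nsmul_eq_mul]

/-- L4 -/
lemma sum_disj_count (T : Finset ι) (n k : ℕ) (G : Finset ι → ℝ) :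
    ∑ A ∈ T.powersetCard n, ∑ B ∈ (T \ A).powersetCard k, G B
      = ((T.card - k).choose n : ℝ) * ∑ B ∈ T.powersetCard k, G B := by
  have inner : ∀ A ∈ T.powersetCard n, ∑ B ∈ (T \ A).powersetCard k, G B
      = ∑ B ∈ T.powersetCard k, if Disjoint B A then G B else 0 := by
    intro A _
    rw [← Finset.sum_filter]
    congr 1
    ext B
    simp only [Finset.mem_powersetCard, Finset.subset_sdiff, Finset.mem_filter]
    tauto
  rw [Finset.sum_congr rfl inner, Finset.sum_comm, Finset.mul_sum]
  refine Finset.sum_congr rfl fun B hB => ?_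
  rw [Finset.mem_powersetCard] at hB
  rw [← Finset.sum_filter, Finset.sum_const]
  have : (T.powersetCard n).filter (fun A => Disjoint B A) = (T \ B).powersetCard n := by
    ext A
    simp only [Finset.mem_filter, Finset.mem_powersetCard, Finset.subset_sdiff]
    constructor
    · rintro ⟨⟨hs, hc⟩, hd⟩; exact ⟨⟨hs, hd.symm⟩, hc⟩
    · rintro ⟨⟨hs, hd⟩, hc⟩; exact ⟨⟨hs, hc⟩, hd.symm⟩
  rw [this, Finset.card_powersetCard, Finset.card_sdiff_of_subset hB.1, hB.2, nsmul_eq_mul]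

/-- L5 -/
lemma swap_out (n : ℕ) (F : Finset ι → ι → ℝ) :
    ∑ A ∈ (univ : Finset ι).powersetCard n, ∑ a ∈ Aᶜ, F A a
      = ∑ a : ι, ∑ A ∈ ({a}ᶜ : Finset ι).powersetCard n, F A a := by
  have e1 : ∀ A : Finset ι, ∑ a ∈ Aᶜ, F A a = ∑ a : ι, if a ∉ A then F A a else 0 := by
    intro A
    have : Aᶜ = univ.filter (fun a => a ∉ A) := by ext x; simp
    rw [this, Finset.sum_filter]
  have e2 : ∀ a : ι, ∑ A ∈ ({a}ᶜ : Finset ι).powersetCard n, F A a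
      = ∑ A ∈ (univ : Finset ι).powersetCard n, if a ∉ A then F A a else 0 := by
    intro a
    rw [← Finset.sum_filter]
    congr 1
    ext A
    simp only [Finset.mem_powersetCard, Finset.mem_filter, Finset.subset_compl_singleton,
      Finset.subset_univ, true_and]
    tauto
  simp only [e1, e2]
  rw [Finset.sum_comm]

end CR

namespace CR
variable {ι : Type*} [Fintype ι] [DecidableEq ι]

lemma step_a (h : Finset ι → ℝ) (n k : ℕ) (A B : Finset ι) (hA : A.card = n + 1) :
    ((n:ℝ)+1) * CorH h A B
      = ∑ a ∈ A, (CorH h (A.erase a) B + Ih h a ((A.erase a) ∪ B) - Ih h a B) := by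
  have key : ∀ a ∈ A, CorH h (A.erase a) B + Ih h a ((A.erase a) ∪ B) - Ih h a B
      = (∑ i ∈ A, h (insert i B)) - (n:ℝ) * h B - h (A ∪ B) := by
    intro a ha
    unfold CorH Ih
    rw [Finset.sum_erase_eq_sub ha, Finset.card_erase_of_mem ha, hA]
    have e1 : insert a (A.erase a ∪ B) = A ∪ B := by
      rw [← Finset.insert_union, Finset.insert_erase ha]
    rw [e1]
    have e2 : ((n + 1 - 1 : ℕ) : ℝ) = (n : ℝ) := by norm_num
    rw [e2]
    ring
  rw [Finset.sum_congr rfl key, Finset.sum_const, hA, nsmul_eq_mul]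
  unfold CorH
  rw [hA]
  push_cast
  ring

lemma compl_erase_eq (A : Finset ι) (a : ι) :
    Aᶜ.erase a = ({a}ᶜ : Finset ι) \ A := by
  ext x; simp [and_comm]

lemma rec_SC (h : Finset ι → ℝ) (n k : ℕ) :
    ((n:ℝ)+1) * SC h (n+1) k
      = ((Fintype.card ι - n - k : ℕ) : ℝ) * SC h n k
        + (((n+k).choose n : ℕ) : ℝ) * SI h (n+k)
        - (((Fintype.card ι - 1 - k).choose n : ℕ) : ℝ) * SI h k := by
  have m := Fintype.card ι
  -- Step 1: multiply inside and expand each CorH by step_a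
  have e1 : ((n:ℝ)+1) * SC h (n+1) k
      = ∑ A ∈ (univ : Finset ι).powersetCard (n+1), ∑ a ∈ A,
          (∑ B ∈ ((insert a (A.erase a))ᶜ : Finset ι).powersetCard k,
            (CorH h (A.erase a) B + Ih h a ((A.erase a) ∪ B) - Ih h a B)) := by
    unfold SC
    rw [Finset.mul_sum]
    refine Finset.sum_congr rfl fun A hA => ?_
    rw [Finset.mem_powersetCard] at hA
    rw [Finset.mul_sum]
    rw [Finset.sum_congr rfl (fun B (hB : B ∈ Aᶜ.powersetCard k) => step_a h n k A B hA.2)]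
    rw [Finset.sum_comm]
    refine Finset.sum_congr rfl fun a ha => ?_
    rw [Finset.insert_erase ha]
  rw [e1]
  -- Step 2: pairSwap
  rw [pairSwap (univ : Finset ι) n
    (fun A' a => ∑ B ∈ ((insert a A')ᶜ : Finset ι).powersetCard k,
      (CorH h A' B + Ih h a (A' ∪ B) - Ih h a B))]
  -- Step 3: rewrite domains and split
  have e2 : ∑ A ∈ (univ : Finset ι).powersetCard n, ∑ a ∈ univ \ A,
      (∑ B ∈ ((insert a A)ᶜ : Finset ι).powersetCard k,
        (CorH h A B + Ih h a (A ∪ B) - Ih h a B))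
      = (∑ A ∈ (univ : Finset ι).powersetCard n, ∑ a ∈ Aᶜ,
          ∑ B ∈ (Aᶜ.erase a).powersetCard k, CorH h A B)
        + (∑ A ∈ (univ : Finset ι).powersetCard n, ∑ a ∈ Aᶜ,
          ∑ B ∈ (Aᶜ.erase a).powersetCard k, Ih h a (A ∪ B))
        - (∑ A ∈ (univ : Finset ι).powersetCard n, ∑ a ∈ Aᶜ,
          ∑ B ∈ (Aᶜ.erase a).powersetCard k, Ih h a B) := by
    have edom : ∀ A ∈ (univ : Finset ι).powersetCard n,
        ∑ a ∈ univ \ A, (∑ B ∈ ((insert a A)ᶜ : Finset ι).powersetCard k,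
          (CorH h A B + Ih h a (A ∪ B) - Ih h a B))
        = ∑ a ∈ Aᶜ, ∑ B ∈ (Aᶜ.erase a).powersetCard k,
            (CorH h A B + Ih h a (A ∪ B) - Ih h a B) := by
      intro A _
      rw [← Finset.compl_eq_univ_sdiff]
      refine Finset.sum_congr rfl fun a _ => ?_
      rw [Finset.compl_insert]
    rw [Finset.sum_congr rfl edom]
    simp only [Finset.sum_add_distrib, Finset.sum_sub_distrib]
  rw [e2]
  -- Piece 1
  have p1 : ∑ A ∈ (univ : Finset ι).powersetCard n, ∑ a ∈ Aᶜ,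
      ∑ B ∈ (Aᶜ.erase a).powersetCard k, CorH h A B
      = ((Fintype.card ι - n - k : ℕ) : ℝ) * SC h n k := by
    unfold SC
    rw [Finset.mul_sum]
    refine Finset.sum_congr rfl fun A hA => ?_
    rw [Finset.mem_powersetCard] at hA
    rw [sum_erase_count Aᶜ k (fun B => CorH h A B), Finset.card_compl, hA.2]
  rw [p1]
  -- Piece 2
  have p2 : ∑ A ∈ (univ : Finset ι).powersetCard n, ∑ a ∈ Aᶜ,
      ∑ B ∈ (Aᶜ.erase a).powersetCard k, Ih h a (A ∪ B)
      = (((n+k).choose n : ℕ) : ℝ) * SI h (n+k) := by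
    have := swap_out (ι := ι) n (fun A a => ∑ B ∈ (Aᶜ.erase a).powersetCard k, Ih h a (A ∪ B))
    rw [this]
    unfold SI
    rw [Finset.mul_sum]
    refine Finset.sum_congr rfl fun a _ => ?_
    have e3 : ∀ A ∈ (({a}ᶜ : Finset ι)).powersetCard n,
        ∑ B ∈ (Aᶜ.erase a).powersetCard k, Ih h a (A ∪ B)
        = ∑ B ∈ ((({a}ᶜ : Finset ι)) \ A).powersetCard k, Ih h a (A ∪ B) := by
      intro A _
      rw [compl_erase_eq]
    rw [Finset.sum_congr rfl e3, sum_union_count ({a}ᶜ : Finset ι) n k (fun D => Ih h a D)]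
  rw [p2]
  -- Piece 3
  have p3 : ∑ A ∈ (univ : Finset ι).powersetCard n, ∑ a ∈ Aᶜ,
      ∑ B ∈ (Aᶜ.erase a).powersetCard k, Ih h a B
      = (((Fintype.card ι - 1 - k).choose n : ℕ) : ℝ) * SI h k := by
    have := swap_out (ι := ι) n (fun A a => ∑ B ∈ (Aᶜ.erase a).powersetCard k, Ih h a B)
    rw [this]
    unfold SI
    rw [Finset.mul_sum]
    refine Finset.sum_congr rfl fun a _ => ?_
    have e3 : ∀ A ∈ (({a}ᶜ : Finset ι)).powersetCard n,
        ∑ B ∈ (Aᶜ.erase a).powersetCard k, Ih h a B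
        = ∑ B ∈ ((({a}ᶜ : Finset ι)) \ A).powersetCard k, Ih h a B := by
      intro A _
      rw [compl_erase_eq]
    rw [Finset.sum_congr rfl e3, sum_disj_count ({a}ᶜ : Finset ι) n k (fun B => Ih h a B),
      Finset.card_compl, Finset.card_singleton]
  rw [p3]

end CR

namespace CR

lemma idA (m n k : ℕ) (hm : n+1+k ≤ m) :
    ((n:ℝ)+1) * ((m.choose (n+1) : ℝ) * ((m-(n+1)).choose k : ℝ))
      = ((m-n-k : ℕ) : ℝ) * ((m.choose n : ℝ) * ((m-n).choose k : ℝ)) := by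
  obtain ⟨r, hr⟩ : ∃ r, m = n+1+k+r := ⟨m - (n+1+k), by omega⟩
  subst hr
  have h1 : n+1+k+r - (n+1) = k + r := by omega
  have h2 : n+1+k+r - n = k+r+1 := by omega
  have h3 : k+r+1 - k = r+1 := by omega
  rw [h1, h2, h3]
  rw [Nat.cast_choose ℝ (show n+1 ≤ n+1+k+r by omega),
      Nat.cast_choose ℝ (show k ≤ k+r by omega),
      Nat.cast_choose ℝ (show n ≤ n+1+k+r by omega),
      Nat.cast_choose ℝ (show k ≤ k+r+1 by omega)]
  have e0 : n+1+k+r-(n+1) = k+r := by omega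
  have e1 : k+r-k = r := by omega
  have e2 : k+r+1-k = r+1 := by omega
  have e3 : n+1+k+r-n = k+r+1 := by omega
  rw [e0, e1, e2, e3]
  have f1 : ((n+1).factorial : ℝ) = (n+1) * n.factorial := by
    rw [Nat.factorial_succ]; push_cast; ring
  have f2 : ((r+1).factorial : ℝ) = (r+1) * r.factorial := by
    rw [Nat.factorial_succ]; push_cast; ring
  have f3 : ((k+r+1).factorial : ℝ) = (k+r+1) * (k+r).factorial := by
    rw [show k+r+1 = (k+r)+1 from rfl, Nat.factorial_succ]; push_cast; ring
  rw [f1, f2, f3]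
  have c1 : ((r+1:ℕ):ℝ) = (r:ℝ)+1 := by push_cast; ring
  rw [c1]
  have nf : ∀ j : ℕ, ((j.factorial : ℝ)) ≠ 0 := fun j =>
    Nat.cast_ne_zero.2 (Nat.factorial_ne_zero j)
  field_simp

lemma idB (m n k : ℕ) (hm : n+1+k ≤ m) :
    ((n:ℝ)+1) * ((m.choose (n+1) : ℝ) * ((m-(n+1)).choose k : ℝ))
      = ((n+k).choose n : ℝ) * ((m : ℝ) * ((m-1).choose (n+k) : ℝ)) := by
  obtain ⟨r, hr⟩ : ∃ r, m = n+1+k+r := ⟨m - (n+1+k), by omega⟩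
  subst hr
  have h1 : n+1+k+r - (n+1) = k + r := by omega
  have h2 : n+1+k+r - 1 = n+k+r := by omega
  rw [h1, h2]
  rw [Nat.cast_choose ℝ (show n+1 ≤ n+1+k+r by omega),
      Nat.cast_choose ℝ (show k ≤ k+r by omega),
      Nat.cast_choose ℝ (show n ≤ n+k by omega),
      Nat.cast_choose ℝ (show n+k ≤ n+k+r by omega)]
  have e0 : n+1+k+r-(n+1) = k+r := by omega
  have e1 : k+r-k = r := by omega
  have e2 : n+k-n = k := by omega
  have e3 : n+k+r-(n+k) = r := by omega
  rw [e0, e1, e2, e3]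
  have f1 : ((n+1).factorial : ℝ) = (n+1) * n.factorial := by
    rw [Nat.factorial_succ]; push_cast; ring
  have f4 : ((n+1+k+r).factorial : ℝ) = (n+1+k+r) * (n+k+r).factorial := by
    rw [show n+1+k+r = (n+k+r)+1 by omega, Nat.factorial_succ]; push_cast; ring
  rw [f1, f4]
  have c2 : ((n+1+k+r:ℕ):ℝ) = (n:ℝ)+1+k+r := by push_cast; ring
  rw [c2]
  have nf : ∀ j : ℕ, ((j.factorial : ℝ)) ≠ 0 := fun j =>
    Nat.cast_ne_zero.2 (Nat.factorial_ne_zero j)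
  field_simp

lemma idC (m n k : ℕ) (hm : n+1+k ≤ m) :
    ((n:ℝ)+1) * ((m.choose (n+1) : ℝ) * ((m-(n+1)).choose k : ℝ))
      = ((m-1-k).choose n : ℝ) * ((m : ℝ) * ((m-1).choose k : ℝ)) := by
  obtain ⟨r, hr⟩ : ∃ r, m = n+1+k+r := ⟨m - (n+1+k), by omega⟩
  subst hr
  have h1 : n+1+k+r - (n+1) = k + r := by omega
  have h2 : n+1+k+r - 1 = n+k+r := by omega
  have h3 : n+k+r - k = n+r := by omega
  rw [h1, h2, h3]
  rw [Nat.cast_choose ℝ (show n+1 ≤ n+1+k+r by omega),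
      Nat.cast_choose ℝ (show k ≤ k+r by omega),
      Nat.cast_choose ℝ (show n ≤ n+r by omega),
      Nat.cast_choose ℝ (show k ≤ n+k+r by omega)]
  have e0 : n+1+k+r-(n+1) = k+r := by omega
  have e1 : k+r-k = r := by omega
  have e2 : n+r-n = r := by omega
  have e3 : n+k+r-k = n+r := by omega
  rw [e0, e1, e2, e3]
  have f1 : ((n+1).factorial : ℝ) = (n+1) * n.factorial := by
    rw [Nat.factorial_succ]; push_cast; ring
  have f4 : ((n+1+k+r).factorial : ℝ) = (n+1+k+r) * (n+k+r).factorial := by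
    rw [show n+1+k+r = (n+k+r)+1 by omega, Nat.factorial_succ]; push_cast; ring
  rw [f1, f4]
  have c2 : ((n+1+k+r:ℕ):ℝ) = (n:ℝ)+1+k+r := by push_cast; ring
  rw [c2]
  have nf : ∀ j : ℕ, ((j.factorial : ℝ)) ≠ 0 := fun j =>
    Nat.cast_ne_zero.2 (Nat.factorial_ne_zero j)
  field_simp

end CR


namespace CR
variable {ι : Type*} [Fintype ι] [DecidableEq ι]

/-- normalized average LHS -/
def Fn (h : Finset ι → ℝ) (n k : ℕ) : ℝ :=
  SC h n k / (((Fintype.card ι).choose n : ℝ) * ((Fintype.card ι - n).choose k : ℝ))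

/-- normalized average MI -/
def gs (h : Finset ι → ℝ) (s : ℕ) : ℝ :=
  SI h s / ((Fintype.card ι : ℝ) * ((Fintype.card ι - 1).choose s : ℝ))

lemma rec_F (h : Finset ι → ℝ) (n k : ℕ) (hk : n+1+k ≤ Fintype.card ι) :
    Fn h (n+1) k = Fn h n k + gs h (n+k) - gs h k := by
  set m := Fintype.card ι with hm
  have hrec := rec_SC h n k
  rw [← hm] at hrec
  have hA := idA m n k hk
  have hB := idB m n k hk
  have hC := idC m n k hk
  have hn1 : (0:ℝ) < (n:ℝ)+1 := by positivity
  set N := ((n:ℝ)+1) * ((m.choose (n+1) : ℝ) * ((m-(n+1)).choose k : ℝ)) with hN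
  have key : Fn h (n+1) k = (((n:ℝ)+1) * SC h (n+1) k) / N := by
    rw [Fn, ← hm, hN, mul_div_mul_left _ _ (ne_of_gt hn1)]
  have E1 : (((m-n-k : ℕ):ℝ) * SC h n k) / N = Fn h n k := by
    rw [hA, Fn, ← hm]
    have cpos : (0:ℝ) < ((m-n-k : ℕ) : ℝ) := by
      have : 0 < m-n-k := by omega
      exact_mod_cast this
    rw [mul_div_mul_left _ _ (ne_of_gt cpos)]
  have E2 : ((((n+k).choose n : ℕ):ℝ) * SI h (n+k)) / N = gs h (n+k) := by
    rw [hB, gs, ← hm]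
    have cpos : (0:ℝ) < (((n+k).choose n : ℕ) : ℝ) := by
      have : 0 < (n+k).choose n := Nat.choose_pos (by omega)
      exact_mod_cast this
    rw [mul_div_mul_left _ _ (ne_of_gt cpos)]
  have E3 : ((((m-1-k).choose n : ℕ):ℝ) * SI h k) / N = gs h k := by
    rw [hC, gs, ← hm]
    have cpos : (0:ℝ) < (((m-1-k).choose n : ℕ) : ℝ) := by
      have : 0 < (m-1-k).choose n := Nat.choose_pos (by omega)
      exact_mod_cast this
    rw [mul_div_mul_left _ _ (ne_of_gt cpos)]
  rw [key, hrec, sub_div, add_div, E1, E2, E3]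

lemma F_zero (h : Finset ι → ℝ) (k : ℕ) : Fn h 0 k = 0 := by
  have : SC h 0 k = 0 := by
    unfold SC
    rw [Finset.powersetCard_zero]
    rw [Finset.sum_singleton]
    have : ∀ B ∈ (∅ : Finset ι)ᶜ.powersetCard k, CorH h ∅ B = 0 := by
      intro B _
      unfold CorH
      simp
    rw [Finset.sum_congr rfl this]
    simp
  rw [Fn, this, zero_div]

lemma F_formula (h : Finset ι → ℝ) (n k : ℕ) (hnk : n + k ≤ Fintype.card ι) :
    Fn h n k = ∑ j ∈ Finset.range n, (gs h (j+k) - gs h k) := by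
  induction n with
  | zero => simpa using F_zero h k
  | succ n ih =>
    rw [rec_F h n k (by omega), ih (by omega), Finset.sum_range_succ]
    ring

lemma gs_nonneg (h : Finset ι → ℝ)
    (hsub : ∀ (D : Finset ι) (i j : ι), i ∉ D → j ∉ D → i ≠ j →
      h D + h (insert i (insert j D)) ≤ h (insert i D) + h (insert j D))
    (h0 : h ∅ = 0) (s : ℕ) : 0 ≤ gs h s := by
  apply div_nonneg
  · unfold SI
    refine Finset.sum_nonneg fun i _ => Finset.sum_nonneg fun D hD => ?_
    rw [Finset.mem_powersetCard] at hD
    have : i ∉ D := by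
      intro hcon
      have := hD.1 hcon
      simp at this
    exact Ih_nonneg hsub h0 D i this
  · positivity

/-- L7 : monotone step for sums over powersetCard -/
lemma sum_mono_step (T : Finset ι) (s : ℕ) (G : Finset ι → ℝ)
    (hmono : ∀ D ∈ T.powersetCard s, ∀ j ∈ T, j ∉ D → G D ≤ G (insert j D)) :
    ((T.card - s : ℕ) : ℝ) * ∑ D ∈ T.powersetCard s, G D
      ≤ ((s+1 : ℕ) : ℝ) * ∑ D ∈ T.powersetCard (s+1), G D := by
  have lhs_eq : ((T.card - s : ℕ) : ℝ) * ∑ D ∈ T.powersetCard s, G D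
      = ∑ D ∈ T.powersetCard s, ∑ j ∈ T \ D, G D := by
    rw [Finset.mul_sum]
    refine Finset.sum_congr rfl fun D hD => ?_
    rw [Finset.mem_powersetCard] at hD
    rw [Finset.sum_const, Finset.card_sdiff_of_subset hD.1, hD.2, nsmul_eq_mul]
  have rhs_eq : ∑ D ∈ T.powersetCard (s+1), ∑ a ∈ D, G (insert a (D.erase a))
      = ((s+1 : ℕ) : ℝ) * ∑ D ∈ T.powersetCard (s+1), G D := by
    rw [Finset.mul_sum]
    refine Finset.sum_congr rfl fun D hD => ?_
    rw [Finset.mem_powersetCard] at hD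
    have : ∀ a ∈ D, G (insert a (D.erase a)) = G D := by
      intro a ha
      rw [Finset.insert_erase ha]
    rw [Finset.sum_congr rfl this, Finset.sum_const, hD.2, nsmul_eq_mul]
  rw [lhs_eq, ← rhs_eq]
  rw [pairSwap T s (fun A a => G (insert a A))]
  refine Finset.sum_le_sum fun D hD => Finset.sum_le_sum fun j hj => ?_
  rw [Finset.mem_sdiff] at hj
  exact hmono D hD j hj.1 hj.2

lemma gs_mono_succ (h : Finset ι → ℝ)
    (hsub : ∀ (D : Finset ι) (i j : ι), i ∉ D → j ∉ D → i ≠ j →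
      h D + h (insert i (insert j D)) ≤ h (insert i D) + h (insert j D))
    (s : ℕ) (hs : s + 1 ≤ Fintype.card ι - 1) :
    gs h s ≤ gs h (s+1) := by
  set m := Fintype.card ι with hm
  have hm2 : 2 ≤ m := by omega
  have hSI : ((m - 1 - s : ℕ) : ℝ) * SI h s ≤ ((s+1 : ℕ) : ℝ) * SI h (s+1) := by
    unfold SI
    rw [Finset.mul_sum, Finset.mul_sum]
    refine Finset.sum_le_sum fun i _ => ?_
    have hT : ({i}ᶜ : Finset ι).card = m - 1 := by
      rw [Finset.card_compl, Finset.card_singleton]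
    have := sum_mono_step ({i}ᶜ : Finset ι) s (fun D => Ih h i D) ?_
    · rw [hT] at this
      exact this
    · intro D hD j hjT hjD
      rw [Finset.mem_powersetCard] at hD
      have hiD : i ∉ D := by
        intro hcon
        have := hD.1 hcon
        simp at this
      have hji : j ≠ i := by
        intro hcon
        subst hcon
        simp at hjT
      exact Ih_insert_le hsub D i j hiD hji
  have hchoose : ((m-1).choose (s+1) : ℝ) * ((s+1:ℕ):ℝ) = ((m-1).choose s : ℝ) * ((m-1-s : ℕ):ℝ) := by
    have := Nat.choose_succ_right_eq (m-1) s
    have hcast : (((m-1).choose (s+1) * (s+1) : ℕ) : ℝ) = (((m-1).choose s * (m-1-s) : ℕ) : ℝ) := by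
      exact_mod_cast congrArg (Nat.cast : ℕ → ℝ) this
    push_cast at hcast ⊢
    linarith
  unfold gs
  have hc0 : (0:ℝ) < ((m-1).choose s : ℝ) := by
    have : 0 < (m-1).choose s := Nat.choose_pos (by omega)
    exact_mod_cast this
  have hc1 : (0:ℝ) < ((m-1).choose (s+1) : ℝ) := by
    have : 0 < (m-1).choose (s+1) := Nat.choose_pos (by omega)
    exact_mod_cast this
  have hmpos : (0:ℝ) < (m:ℝ) := by
    have : 0 < m := by omega
    exact_mod_cast this
  rw [div_le_div_iff₀ (by positivity) (by positivity)]
  have hs1 : (0:ℝ) < ((s+1:ℕ):ℝ) := by positivity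
  rw [← mul_le_mul_iff_right₀ hs1]
  calc ((s+1:ℕ):ℝ) * (SI h s * ((m:ℝ) * ((m-1).choose (s+1) : ℝ)))
      = (((m-1).choose (s+1) : ℝ) * ((s+1:ℕ):ℝ)) * SI h s * (m:ℝ) := by ring
    _ = (((m-1).choose s : ℝ) * ((m-1-s : ℕ):ℝ)) * SI h s * (m:ℝ) := by rw [hchoose]
    _ = ((m:ℝ) * ((m-1).choose s : ℝ)) * (((m-1-s : ℕ):ℝ) * SI h s) := by ring
    _ ≤ ((m:ℝ) * ((m-1).choose s : ℝ)) * (((s+1:ℕ):ℝ) * SI h (s+1)) := by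
        apply mul_le_mul_of_nonneg_left hSI (by positivity)
    _ = ((s+1:ℕ):ℝ) * (SI h (s+1) * ((m:ℝ) * ((m-1).choose s : ℝ))) := by ring

lemma gs_mono (h : Finset ι → ℝ)
    (hsub : ∀ (D : Finset ι) (i j : ι), i ∉ D → j ∉ D → i ≠ j →
      h D + h (insert i (insert j D)) ≤ h (insert i D) + h (insert j D))
    (s s' : ℕ) (hss : s ≤ s') (hs' : s' ≤ Fintype.card ι - 1) :
    gs h s ≤ gs h s' := by
  induction s' with
  | zero => simp_all
  | succ t ih =>
    rcases Nat.lt_or_ge s (t+1) with hlt | hge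
    · have : s ≤ t := by omega
      exact le_trans (ih this (by omega)) (gs_mono_succ h hsub t (by omega))
    · have : s = t+1 := by omega
      rw [this]

end CR

namespace CR
variable {ι : Type*} [Fintype ι] [DecidableEq ι]

lemma tele (h : Finset ι → ℝ)
    (hsub : ∀ (D : Finset ι) (i j : ι), i ∉ D → j ∉ D → i ≠ j →
      h D + h (insert i (insert j D)) ≤ h (insert i D) + h (insert j D))
    (h0 : h ∅ = 0) (kmax j smax : ℕ) (hj : j + kmax ≤ smax)
    (hs : smax ≤ Fintype.card ι - 1) :
    ∑ k ∈ Finset.range (kmax+1), (gs h (j+k) - gs h k) ≤ (j:ℝ) * gs h smax := by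
  have e1 : ∀ k ∈ Finset.range (kmax+1), gs h (j+k) - gs h k
      = ∑ t ∈ Finset.range j, (gs h (t+1+k) - gs h (t+k)) := by
    intro k _
    have hts := Finset.sum_range_sub (fun t => gs h (t+k)) j
    rw [Nat.zero_add] at hts
    rw [hts]
  rw [Finset.sum_congr rfl e1, Finset.sum_comm]
  have e2 : ∀ t ∈ Finset.range j, ∑ k ∈ Finset.range (kmax+1), (gs h (t+1+k) - gs h (t+k))
      = gs h (t+(kmax+1)) - gs h t := by
    intro t _
    have congrarg : ∀ k ∈ Finset.range (kmax+1), gs h (t+1+k) - gs h (t+k)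
        = gs h (t+(k+1)) - gs h (t+k) := by
      intro k _
      have e : t+1+k = t+(k+1) := by omega
      rw [e]
    rw [Finset.sum_congr rfl congrarg]
    have hts := Finset.sum_range_sub (fun k => gs h (t+k)) (kmax+1)
    rw [hts]
    simp
  rw [Finset.sum_congr rfl e2]
  have bound : ∀ t ∈ Finset.range j, gs h (t+(kmax+1)) - gs h t ≤ gs h smax := by
    intro t ht
    rw [Finset.mem_range] at ht
    have b1 : gs h (t+(kmax+1)) ≤ gs h smax := gs_mono h hsub _ _ (by omega) hs
    have b2 : 0 ≤ gs h t := gs_nonneg h hsub h0 t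
    linarith
  calc ∑ t ∈ Finset.range j, (gs h (t+(kmax+1)) - gs h t)
      ≤ ∑ t ∈ Finset.range j, gs h smax := Finset.sum_le_sum bound
    _ = (j:ℝ) * gs h smax := by rw [Finset.sum_const, Finset.card_range, nsmul_eq_mul]

theorem combo (h : Finset ι → ℝ)
    (hsub : ∀ (D : Finset ι) (i j : ι), i ∉ D → j ∉ D → i ≠ j →
      h D + h (insert i (insert j D)) ≤ h (insert i D) + h (insert j D))
    (h0 : h ∅ = 0) (n kmax : ℕ) (hmn : n + kmax ≤ Fintype.card ι) :
    ∃ k ≤ kmax, Fn h n k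
      ≤ ((n:ℝ) * ((n:ℝ) - 1) / (2 * ((kmax:ℝ) + 1))) * gs h (n+kmax-1) := by
  rcases Nat.eq_zero_or_pos n with hn0 | hn1
  · refine ⟨0, Nat.zero_le _, ?_⟩
    subst hn0
    rw [F_zero]
    norm_num
  · set c : ℝ := ((n:ℝ) * ((n:ℝ) - 1) / (2 * ((kmax:ℝ) + 1))) * gs h (n+kmax-1) with hc
    have gauss : ∑ j ∈ Finset.range n, (j:ℝ) = (n:ℝ)*((n:ℝ)-1)/2 := by
      have h2 := Finset.sum_range_id_mul_two n
      have hcast := congrArg (fun x : ℕ => (x:ℝ)) h2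
      push_cast [Nat.cast_sub (by omega : 1 ≤ n)] at hcast
      linarith
    have key : ∑ k ∈ Finset.range (kmax+1), Fn h n k ≤ ∑ k ∈ Finset.range (kmax+1), c := by
      have e1 : ∀ k ∈ Finset.range (kmax+1), Fn h n k
          = ∑ j ∈ Finset.range n, (gs h (j+k) - gs h k) := by
        intro k hk
        rw [Finset.mem_range] at hk
        exact F_formula h n k (by omega)
      rw [Finset.sum_congr rfl e1, Finset.sum_comm]
      have e2 : ∀ j ∈ Finset.range n, ∑ k ∈ Finset.range (kmax+1), (gs h (j+k) - gs h k)
          ≤ (j:ℝ) * gs h (n+kmax-1) := by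
        intro j hj
        rw [Finset.mem_range] at hj
        exact tele h hsub h0 kmax j (n+kmax-1) (by omega) (by omega)
      calc ∑ j ∈ Finset.range n, ∑ k ∈ Finset.range (kmax+1), (gs h (j+k) - gs h k)
          ≤ ∑ j ∈ Finset.range n, (j:ℝ) * gs h (n+kmax-1) := Finset.sum_le_sum e2
        _ = (∑ j ∈ Finset.range n, (j:ℝ)) * gs h (n+kmax-1) := by rw [Finset.sum_mul]
        _ = ((n:ℝ)*((n:ℝ)-1)/2) * gs h (n+kmax-1) := by rw [gauss]
        _ = ∑ k ∈ Finset.range (kmax+1), c := by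
            rw [Finset.sum_const, Finset.card_range, nsmul_eq_mul, hc]
            have hkm : ((kmax:ℝ)+1) ≠ 0 := by positivity
            field_simp
            push_cast
            ring
    obtain ⟨k, hk, hle⟩ := Finset.exists_le_of_sum_le ⟨0, Finset.mem_range.2 (by omega)⟩ key
    rw [Finset.mem_range] at hk
    exact ⟨k, by omega, hle⟩

end CR

namespace CR

section Translate

lemma Hent_inst_irrel {Ω α : Type*} [Fintype Ω] (i1 i2 : Fintype α) (p : Ω → ℝ) (Y : Ω → α) :
    @Hent Ω α _ i1 p Y = @Hent Ω α _ i2 p Y := by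
  rw [Subsingleton.elim i1 i2]

variable {Ω X ι : Type*} [Fintype Ω] [Fintype X] [Fintype ι] [DecidableEq ι]

/-- restriction of the process to a coordinate set -/
def SR (S : Ω → ι → X) (C : Finset ι) : Ω → (↥C → X) := fun ω j => S ω j.1

/-- entropy of the restriction -/
def entS (p : Ω → ℝ) (S : Ω → ι → X) : Finset ι → ℝ := fun C => Hent p (SR S C)

variable (p : Ω → ℝ) (S : Ω → ι → X)

lemma relabel_pairL (C : Finset ι) (i : ι) :
    Hent p (fun ω => (S ω i, SR S C ω)) = entS p S (insert i C) := by
  have hg : Function.Injective (fun u : (↥(insert i C) → X) =>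
      (u ⟨i, Finset.mem_insert_self i C⟩,
       (fun j : ↥C => u ⟨j.1, Finset.mem_insert_of_mem j.2⟩))) := by
    intro u v huv
    funext x
    rcases Finset.mem_insert.mp x.2 with hx | hx
    · have h1 := congrArg Prod.fst huv
      have hxi : x = ⟨i, Finset.mem_insert_self i C⟩ := Subtype.ext hx
      rw [hxi]; exact h1
    · exact congrFun (congrArg Prod.snd huv) ⟨x.1, hx⟩
  exact Hent_comp_inj p (SR S (insert i C)) _ hg

lemma relabel_pairR (C : Finset ι) (i : ι) :
    Hent p (fun ω => (SR S C ω, S ω i)) = entS p S (insert i C) := by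
  have hg : Function.Injective (fun u : (↥(insert i C) → X) =>
      ((fun j : ↥C => u ⟨j.1, Finset.mem_insert_of_mem j.2⟩),
       u ⟨i, Finset.mem_insert_self i C⟩)) := by
    intro u v huv
    funext x
    rcases Finset.mem_insert.mp x.2 with hx | hx
    · have h1 := congrArg Prod.snd huv
      have hxi : x = ⟨i, Finset.mem_insert_self i C⟩ := Subtype.ext hx
      rw [hxi]; exact h1
    · exact congrFun (congrArg Prod.fst huv) ⟨x.1, hx⟩
  exact Hent_comp_inj p (SR S (insert i C)) _ hg

lemma relabel_triple (D : Finset ι) (i j : ι) :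
    Hent p (fun ω => (SR S D ω, S ω i, S ω j)) = entS p S (insert i (insert j D)) := by
  have hg : Function.Injective (fun u : (↥(insert i (insert j D)) → X) =>
      ((fun d : ↥D => u ⟨d.1,
          Finset.mem_insert_of_mem (Finset.mem_insert_of_mem d.2)⟩),
       u ⟨i, Finset.mem_insert_self i _⟩,
       u ⟨j, Finset.mem_insert_of_mem (Finset.mem_insert_self j D)⟩)) := by
    intro u v huv
    funext x
    rcases Finset.mem_insert.mp x.2 with hx | hx'
    · have h1 := congrArg (fun q => q.2.1) huv
      have hxi : x = ⟨i, Finset.mem_insert_self i _⟩ := Subtype.ext hx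
      rw [hxi]; exact h1
    · rcases Finset.mem_insert.mp hx' with hx | hx
      · have h1 := congrArg (fun q => q.2.2) huv
        have hxj : x = ⟨j, Finset.mem_insert_of_mem (Finset.mem_insert_self j D)⟩ :=
          Subtype.ext hx
        rw [hxj]; exact h1
      · exact congrFun (congrArg Prod.fst huv) ⟨x.1, hx⟩
  exact Hent_comp_inj p (SR S (insert i (insert j D))) _ hg

lemma relabel_union (A B : Finset ι) :
    Hent p (fun ω => ((fun a : ↥A => S ω a.1), SR S B ω))
      = entS p S (A ∪ B) := by
  have hg : Function.Injective (fun u : (↥(A ∪ B) → X) =>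
      ((fun a : ↥A => u ⟨a.1, Finset.mem_union_left B a.2⟩),
       (fun b : ↥B => u ⟨b.1, Finset.mem_union_right A b.2⟩))) := by
    intro u v huv
    funext x
    rcases Finset.mem_union.mp x.2 with hx | hx
    · exact congrFun (congrArg Prod.fst huv) ⟨x.1, hx⟩
    · exact congrFun (congrArg Prod.snd huv) ⟨x.1, hx⟩
  exact Hent_comp_inj p (SR S (A ∪ B)) _ hg

lemma relabel_single (i : ι) :
    Hent p (fun ω => S ω i) = entS p S {i} := by
  have hg : Function.Injective (fun u : (↥({i} : Finset ι) → X) =>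
      u ⟨i, Finset.mem_singleton_self i⟩) := by
    intro u v huv
    funext x
    have hxi : x = ⟨i, Finset.mem_singleton_self i⟩ :=
      Subtype.ext (Finset.mem_singleton.mp x.2)
    rw [hxi]; exact huv
  exact Hent_comp_inj p (SR S {i}) _ hg

lemma entS_empty (hp : IsPMF p) : entS p S ∅ = 0 := by
  unfold entS Hent
  have hall : ∀ a : (↥(∅ : Finset ι) → X), dist' p (SR S ∅) a = 1 := by
    intro a
    unfold dist' SR
    have : ∀ ω : Ω, (fun (j : ↥(∅ : Finset ι)) => S ω j.1) = a := by
      intro ω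
      funext j
      exact absurd j.2 (Finset.notMem_empty j.1)
    simp only [this, if_true]
    exact hp.2
  simp [hall]

lemma entS_submod (hp : ∀ ω, 0 ≤ p ω) (D : Finset ι) (i j : ι)
    (hi : i ∉ D) (hj : j ∉ D) (hij : i ≠ j) :
    entS p S D + entS p S (insert i (insert j D))
      ≤ entS p S (insert i D) + entS p S (insert j D) := by
  have key := Hent_submod p hp (SR S D) (fun ω => S ω i) (fun ω => S ω j)
  rw [relabel_triple p S D i j, relabel_pairR p S D i, relabel_pairR p S D j] at key
  have : Hent p (SR S D) = entS p S D := rfl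
  rw [this] at key
  linarith

set_option maxHeartbeats 1000000 in
lemma CondCor_toCorH (hp : ∀ ω, 0 ≤ p ω) (A B : Finset ι) :
    CondCor p (fun (a : ↥A) ω => S ω a.1) (SR S B)
      = CorH (entS p S) A B := by
  rw [CondCor_eq p hp _ _]
  unfold CorH
  have e1 : ∀ a : ↥A,
      Hent p (fun ω => (S ω a.1, SR S B ω)) = entS p S (insert a.1 B) := fun a =>
    relabel_pairL p S B a.1
  have e3 : Hent p (SR S B) = entS p S B := rfl
  have e4 : ∑ a : ↥A, entS p S (insert a.1 B)
      = ∑ i ∈ A, entS p S (insert i B) := Finset.sum_coe_sort A (fun i => entS p S (insert i B))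
  rw [Finset.sum_congr rfl (fun a _ => e1 a), e3, e4, Fintype.card_coe]
  congr 1
  exact (Hent_inst_irrel _ _ p _).trans (relabel_union p S A B)

lemma MI_toIh (hp : ∀ ω, 0 ≤ p ω) (i : ι) (B : Finset ι) :
    MI p (fun ω => S ω i) (SR S B) = Ih (entS p S) i B := by
  rw [MI_eq p hp]
  unfold Ih
  rw [relabel_single p S i, relabel_pairL p S B i]
  rfl

end Translate

end CR


/-- Correlation rounding: for any random variable `S` on `X^m` and `n + k_max ≤ m`, there exists
`k ≤ k_max` with `E_{A,B}[Cor(S_A ∣ S_B)] ≤ (n(n−1)/(2(k_max+1))) · E_{i,B'}[I(S_i;S_{B'})]`,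
where `A` is a uniform size-`n` subset of `[m]`, `B` a uniform size-`k` subset of `[m]∖A`,
`i` uniform in `[m]`, and `B'` a uniform size-`(n+k_max−1)` subset of `[m]∖{i}`. -/
theorem statement12 {Ω X : Type*} [Fintype Ω] [Fintype X]
    (p : Ω → ℝ) (hp : IsPMF p) (m n kmax : ℕ) (hmn : n + kmax ≤ m)
    (S : Ω → Fin m → X) :
    ∃ k ≤ kmax,
      (∑ A ∈ (univ : Finset (Fin m)).powersetCard n, ∑ B ∈ Aᶜ.powersetCard k,
            CondCor p (fun (i : A) ω => S ω i.1) (fun ω => fun (j : B) => S ω j.1))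
          / ((m.choose n : ℝ) * ((m - n).choose k : ℝ))
        ≤ ((n : ℝ) * ((n : ℝ) - 1) / (2 * ((kmax : ℝ) + 1))) *
          ((∑ i : Fin m, ∑ B ∈ ({i}ᶜ : Finset (Fin m)).powersetCard (n + kmax - 1),
              MI p (fun ω => S ω i) (fun ω => fun (j : B) => S ω j.1))
            / ((m : ℝ) * ((m - 1).choose (n + kmax - 1) : ℝ))) := by
  classical
  obtain ⟨k, hk, hle⟩ := CR.combo (CR.entS p S) (CR.entS_submod p S hp.1)
    (CR.entS_empty p S hp) n kmax (by simpa using hmn)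
  refine ⟨k, hk, ?_⟩
  have eL : (∑ A ∈ (univ : Finset (Fin m)).powersetCard n, ∑ B ∈ Aᶜ.powersetCard k,
      CondCor p (fun (i : A) ω => S ω i.1) (fun ω => fun (j : B) => S ω j.1))
      = CR.SC (CR.entS p S) n k := by
    unfold CR.SC
    refine Finset.sum_congr rfl fun A _ => Finset.sum_congr rfl fun B _ => ?_
    exact CR.CondCor_toCorH p S hp.1 A B
  have eR : (∑ i : Fin m, ∑ B ∈ ({i}ᶜ : Finset (Fin m)).powersetCard (n + kmax - 1),
      MI p (fun ω => S ω i) (fun ω => fun (j : B) => S ω j.1))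
      = CR.SI (CR.entS p S) (n + kmax - 1) := by
    unfold CR.SI
    refine Finset.sum_congr rfl fun i _ => Finset.sum_congr rfl fun B _ => ?_
    exact CR.MI_toIh p S hp.1 i B
  rw [eL, eR]
  unfold CR.Fn CR.gs at hle
  simp only [Fintype.card_fin] at hle
  exact hle
end
end
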